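/- arXiv:math/0508213 — 4 statements merged into one kernel-verified Lean document; each statement's English description precedes it below -/
import Mathlib

section
/- Let X₁,…,Xₙ be i.i.d. real random variables and Y₁,…,Yₙ be i.i.d. real random variables, with the two families independent of each other, E[X₁] = E[Y₁] = 0 and E[X₁²] = E[Y₁²] = 1. Then for every thrice differentiable g : ℝ → ℝ with bounded first three derivatives and every ε > 0, |E g(n^{-1/2} Σᵢ₌₁ⁿ Xᵢ) − E g(n^{-1/2} Σᵢ₌₁ⁿ Yᵢ)| ≤ C₁(g) [E(X₁²; |X₁| > ε√n) + E(Y₁²; |Y₁| > ε√n)] + 2 C₂(g) ε. -/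
section Helpers
open Set MeasureTheory ProbabilityTheory Finset


/-- iterated derivative within Icc equals global one, given enough differentiability. -/
lemma myIterEq {g : ℝ → ℝ} {s : Set ℝ} (hs : UniqueDiffOn ℝ s) {k : ℕ}
    (hd : ∀ j, j < k → Differentiable ℝ (iteratedDeriv j g)) :
    ∀ x ∈ s, iteratedDerivWithin k g s x = iteratedDeriv k g x := by
  induction k with
  | zero => intro x hx; simp
  | succ k IH =>
    intro x hx
    have IH' := IH (fun j hj => hd j (by omega))
    rw [iteratedDerivWithin_succ,
      derivWithin_congr IH' (IH' x hx),
      ((hd k (by omega)).differentiableAt).derivWithin (hs x hx),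
      ← iteratedDeriv_succ]

lemma taylor_bd_pos {g : ℝ → ℝ} (hd : ∀ j, j < 3 → Differentiable ℝ (iteratedDeriv j g))
    {B2 B3 t x : ℝ}
    (hB2 : ∀ u, |iteratedDeriv 2 g u| ≤ B2) (hB3 : ∀ u, |iteratedDeriv 3 g u| ≤ B3)
    (hx : 0 < x) :
    |g (t + x) - g t - deriv g t * x - iteratedDeriv 2 g t * x ^ 2 / 2|
      ≤ min (B2 * x ^ 2) (B3 / 6 * |x| ^ 3) := by
  have h0 : Differentiable ℝ g := by simpa using hd 0 (by omega)
  have h1 : Differentiable ℝ (deriv g) := by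
    have := hd 1 (by omega); rwa [iteratedDeriv_one] at this
  have h2 : Differentiable ℝ (iteratedDeriv 2 g) := hd 2 (by omega)
  have hC2 : ContDiff ℝ 2 g := by
    rw [show (2 : WithTop ℕ∞) = 1 + 1 by norm_num, contDiff_succ_iff_deriv]
    refine ⟨h0, by simp, ?_⟩
    rw [contDiff_one_iff_deriv]
    refine ⟨h1, ?_⟩
    have : deriv (deriv g) = iteratedDeriv 2 g := by
      rw [show (2:ℕ) = 1 + 1 from rfl, iteratedDeriv_succ, iteratedDeriv_one]
    rw [this]; exact h2.continuous
  have hlt : t < t + x := by linarith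
  have hs : UniqueDiffOn ℝ (Icc t (t + x)) := uniqueDiffOn_Icc hlt
  have htmem : t ∈ Icc t (t + x) := left_mem_Icc.2 hlt.le
  -- second order Lagrange (n = 2)
  have iter2eq := myIterEq hs (fun j hj => hd j (by omega)) (k := 2)
  have hf' : DifferentiableOn ℝ (iteratedDerivWithin 2 g (Icc t (t+x))) (Ioo t (t+x)) := by
    refine (h2.differentiableOn).congr fun y hy => iter2eq y (Ioo_subset_Icc_self hy)
  obtain ⟨x', hx', hL2⟩ := taylor_mean_remainder_lagrange (f := g) (n := 2) hlt.ne
    (by rw [uIcc_of_le hlt.le]; exact hC2.contDiffOn)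
    (by rw [uIcc_of_le hlt.le, uIoo_of_le hlt.le]; exact hf')
  rw [uIcc_of_le hlt.le] at hL2
  rw [uIoo_of_le hlt.le] at hx'
  -- expand the taylor polynomial
  have hpoly : taylorWithinEval g 2 (Icc t (t+x)) t (t + x)
      = g t + deriv g t * x + iteratedDeriv 2 g t * x ^ 2 / 2 := by
    rw [taylor_within_apply]
    rw [Finset.sum_range_succ, Finset.sum_range_succ, Finset.sum_range_one]
    rw [iter2eq t htmem, myIterEq hs (fun j hj => hd j (by omega)) (k := 1) t htmem,
      myIterEq hs (fun j hj => hd j (by omega)) (k := 0) t htmem]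
    simp [iteratedDeriv_one]
    ring
  -- convert iteratedDerivWithin 3 at x'
  have hx'Icc : x' ∈ Icc t (t + x) := Ioo_subset_Icc_self hx'
  have hiter3 : iteratedDerivWithin 3 g (Icc t (t+x)) x' = iteratedDeriv 3 g x' := by
    rw [show (3:ℕ) = 2 + 1 from rfl, iteratedDerivWithin_succ,
      derivWithin_congr (fun y hy => iter2eq y hy) (iter2eq x' hx'Icc),
      (h2.differentiableAt).derivWithin (hs x' hx'Icc), ← iteratedDeriv_succ]
  rw [hpoly, hiter3] at hL2
  have habs : |g (t + x) - g t - deriv g t * x - iteratedDeriv 2 g t * x ^ 2 / 2|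
      ≤ B3 / 6 * |x| ^ 3 := by
    have : g (t + x) - g t - deriv g t * x - iteratedDeriv 2 g t * x ^ 2 / 2
        = iteratedDeriv 3 g x' * (t + x - t) ^ 3 / 6 := by
      rw [show g (t + x) - g t - deriv g t * x - iteratedDeriv 2 g t * x ^ 2 / 2
        = g (t + x) - (g t + deriv g t * x + iteratedDeriv 2 g t * x ^ 2 / 2) by ring, hL2]
      norm_num [Nat.factorial]
    rw [this, show t + x - t = x by ring, abs_div, abs_mul, abs_pow]
    have h6 : |(6:ℝ)| = 6 := by norm_num
    rw [h6]
    nlinarith [hB3 x', pow_nonneg (abs_nonneg x) 3, abs_nonneg (iteratedDeriv 3 g x')]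
  -- first order Lagrange (n = 1)
  have hC1 : ContDiff ℝ 1 g := hC2.of_le (by norm_num)
  have iter1eq := myIterEq hs (fun j hj => hd j (by omega)) (k := 1)
  have hf1' : DifferentiableOn ℝ (iteratedDerivWithin 1 g (Icc t (t+x))) (Ioo t (t+x)) := by
    refine (h1.differentiableOn).congr fun y hy => ?_
    rw [iter1eq y (Ioo_subset_Icc_self hy), iteratedDeriv_one]
  obtain ⟨x'', hx'', hL1⟩ := taylor_mean_remainder_lagrange (f := g) (n := 1) hlt.ne
    (by rw [uIcc_of_le hlt.le]; exact hC1.contDiffOn)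
    (by rw [uIcc_of_le hlt.le, uIoo_of_le hlt.le]; exact hf1')
  rw [uIcc_of_le hlt.le] at hL1
  rw [uIoo_of_le hlt.le] at hx''
  have hx''Icc : x'' ∈ Icc t (t + x) := Ioo_subset_Icc_self hx''
  have hpoly1 : taylorWithinEval g 1 (Icc t (t+x)) t (t + x) = g t + deriv g t * x := by
    rw [taylor_within_apply, Finset.sum_range_succ, Finset.sum_range_one]
    rw [iter1eq t htmem, myIterEq hs (fun j hj => hd j (by omega)) (k := 0) t htmem]
    simp [iteratedDeriv_one]
    ring
  have hiter2' : iteratedDerivWithin 2 g (Icc t (t+x)) x'' = iteratedDeriv 2 g x'' :=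
    iter2eq x'' hx''Icc
  rw [hpoly1, hiter2'] at hL1
  have habs2 : |g (t + x) - g t - deriv g t * x - iteratedDeriv 2 g t * x ^ 2 / 2|
      ≤ B2 * x ^ 2 := by
    have e1 : g (t + x) - g t - deriv g t * x = iteratedDeriv 2 g x'' * x ^ 2 / 2 := by
      rw [show g (t + x) - g t - deriv g t * x
        = g (t + x) - (g t + deriv g t * x) by ring, hL1]
      norm_num [Nat.factorial]
    have b1 : |g (t + x) - g t - deriv g t * x| ≤ B2 * x ^ 2 / 2 := by
      rw [e1, abs_div, abs_mul, show |(2:ℝ)| = 2 by norm_num]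
      nlinarith [hB2 x'', sq_abs x, sq_nonneg x, abs_nonneg (iteratedDeriv 2 g x''), abs_pow x 2]
    have b2 : |iteratedDeriv 2 g t * x ^ 2 / 2| ≤ B2 * x ^ 2 / 2 := by
      rw [abs_div, abs_mul, show |(2:ℝ)| = 2 by norm_num]
      nlinarith [hB2 t, sq_abs x, sq_nonneg x, abs_nonneg (iteratedDeriv 2 g t), abs_pow x 2]
    calc |g (t + x) - g t - deriv g t * x - iteratedDeriv 2 g t * x ^ 2 / 2|
        ≤ |g (t + x) - g t - deriv g t * x| + |iteratedDeriv 2 g t * x ^ 2 / 2| := abs_sub _ _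
      _ ≤ B2 * x ^ 2 / 2 + B2 * x ^ 2 / 2 := by gcongr
      _ = B2 * x ^ 2 := by ring
  exact le_min habs2 habs

lemma taylor_bd {g : ℝ → ℝ} (hd : ∀ j, j < 3 → Differentiable ℝ (iteratedDeriv j g))
    {B2 B3 : ℝ}
    (hB2 : ∀ u, |iteratedDeriv 2 g u| ≤ B2) (hB3 : ∀ u, |iteratedDeriv 3 g u| ≤ B3)
    (t x : ℝ) :
    |g (t + x) - g t - deriv g t * x - iteratedDeriv 2 g t * x ^ 2 / 2|
      ≤ min (B2 * x ^ 2) (B3 / 6 * |x| ^ 3) := by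
  have hB2n : 0 ≤ B2 := le_trans (abs_nonneg _) (hB2 0)
  have hB3n : 0 ≤ B3 := le_trans (abs_nonneg _) (hB3 0)
  rcases lt_trichotomy x 0 with hx | hx | hx
  · -- reflection
    set g₂ : ℝ → ℝ := fun u => g (-u) with hg₂
    have hIter : ∀ m : ℕ, iteratedDeriv m g₂ = fun a => (-1:ℝ)^m * iteratedDeriv m g (-a) := by
      intro m; funext a
      simpa [smul_eq_mul] using iteratedDeriv_comp_neg m g a
    have hd₂ : ∀ j, j < 3 → Differentiable ℝ (iteratedDeriv j g₂) := by
      intro j hj; rw [hIter j]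
      exact (((hd j hj).comp differentiable_neg).const_mul _)
    have hB2₂ : ∀ u, |iteratedDeriv 2 g₂ u| ≤ B2 := by
      intro u; rw [hIter 2]; simpa [abs_mul] using hB2 (-u)
    have hB3₂ : ∀ u, |iteratedDeriv 3 g₂ u| ≤ B3 := by
      intro u; rw [hIter 3]; simpa [abs_mul] using hB3 (-u)
    have H := taylor_bd_pos hd₂ hB2₂ hB3₂ (t := -t) (x := -x) (by linarith)
    have e0 : g₂ (-t + -x) = g (t + x) := by simp [hg₂]; ring_nf
    have e1 : g₂ (-t) = g t := by simp [hg₂]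
    have e2 : deriv g₂ (-t) = - deriv g t := by
      have := hIter 1
      rw [iteratedDeriv_one] at this
      rw [this]; simp [iteratedDeriv_one]
    have e3 : iteratedDeriv 2 g₂ (-t) = iteratedDeriv 2 g t := by
      rw [hIter 2]; simp
    rw [e0, e1, e2, e3] at H
    have : - deriv g t * -x = deriv g t * x := by ring
    rw [this] at H
    have : (-x)^2 = x^2 := by ring
    rw [this] at H
    rwa [abs_neg] at H
  · subst hx
    have : |g (t + 0) - g t - deriv g t * 0 - iteratedDeriv 2 g t * 0 ^ 2 / 2| = 0 := by
      norm_num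
    rw [this]
    have h1 : (0:ℝ) ≤ B2 * 0 ^ 2 := by positivity
    have h2 : (0:ℝ) ≤ B3 / 6 * |(0:ℝ)| ^ 3 := by positivity
    exact le_min h1 h2
  · exact taylor_bd_pos hd hB2 hB3 hx


/-- The "leave-one-out" partial sum is independent of `X k` and of `Y k`. -/
lemma indep_T {Ω : Type} [MeasurableSpace Ω] {μ : Measure Ω}
    {n : ℕ} (X Y : Fin n → Ω → ℝ)
    (hXmeas : ∀ i, Measurable (X i)) (hYmeas : ∀ i, Measurable (Y i))
    (hindep : iIndepFun (Sum.elim X Y) μ)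
    (c : ℝ) (k : Fin n) :
    IndepFun (fun ω => c * ∑ i : Fin n,
        (if (i:ℕ) < (k:ℕ) then X i ω else if (k:ℕ) < (i:ℕ) then Y i ω else 0)) (X k) μ ∧
    IndepFun (fun ω => c * ∑ i : Fin n,
        (if (i:ℕ) < (k:ℕ) then X i ω else if (k:ℕ) < (i:ℕ) then Y i ω else 0)) (Y k) μ := by
  classical
  set f : Fin n ⊕ Fin n → Ω → ℝ := Sum.elim X Y with hf_def
  have hf : ∀ j, Measurable (f j) := by
    rintro (i | i)
    · exact hXmeas i
    · exact hYmeas i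
  set S₁ : Finset (Fin n ⊕ Fin n) := ({Sum.inl k, Sum.inr k} : Finset _)ᶜ with hS₁
  set w : Fin n ⊕ Fin n → ℝ :=
    Sum.elim (fun i => if (i:ℕ) < (k:ℕ) then (1:ℝ) else 0)
      (fun i => if (k:ℕ) < (i:ℕ) then (1:ℝ) else 0) with hw
  set φ : ({x // x ∈ S₁} → ℝ) → ℝ := fun v => c * ∑ j : {x // x ∈ S₁}, w j.1 * v j with hφdef
  have hφ : Measurable φ := by
    apply Measurable.const_mul
    exact Finset.measurable_sum _ (fun j _ => (measurable_pi_apply j).const_mul _)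
  have hrestr : (φ ∘ fun a (i : {x // x ∈ S₁}) => f i a)
      = fun ω => c * ∑ i : Fin n,
        (if (i:ℕ) < (k:ℕ) then X i ω else if (k:ℕ) < (i:ℕ) then Y i ω else 0) := by
    funext a
    simp only [Function.comp_apply, hφdef]
    congr 1
    have step1 : ∑ j : {x // x ∈ S₁}, w j.1 * f j.1 a = ∑ j ∈ S₁, w j * f j a :=
      Finset.sum_coe_sort S₁ (fun j => w j * f j a)
    rw [step1]
    have step2 : ∑ j ∈ S₁, w j * f j a = ∑ j : Fin n ⊕ Fin n, w j * f j a := by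
      apply Finset.sum_subset (Finset.subset_univ S₁)
      intro j _ hj
      have hj' : j = Sum.inl k ∨ j = Sum.inr k := by
        by_cases h1 : j = Sum.inl k
        · exact Or.inl h1
        · exact Or.inr ((by simpa [hS₁] using hj : ¬j = Sum.inl k → j = Sum.inr k) h1)
      rcases hj' with rfl | rfl <;> simp [hw]
    rw [step2, Fintype.sum_sum_type]
    rw [← Finset.sum_add_distrib]
    apply Finset.sum_congr rfl
    intro i _
    simp only [hw, hf_def, Sum.elim_inl, Sum.elim_inr]
    rcases lt_trichotomy (i:ℕ) (k:ℕ) with h | h | h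
    · simp [h, not_lt_of_gt h]
    · simp [h, lt_irrefl]
    · simp [h, not_lt_of_gt h, lt_asymm h]
  constructor
  · have hdisj : Disjoint S₁ ({Sum.inl k} : Finset (Fin n ⊕ Fin n)) := by
      simp [hS₁, Finset.disjoint_left]
    have base := hindep.indepFun_finset S₁ {Sum.inl k} hdisj hf
    have hψ : Measurable (fun v : ({x // x ∈ ({Sum.inl k} : Finset (Fin n ⊕ Fin n))} → ℝ) =>
        v ⟨Sum.inl k, Finset.mem_singleton_self _⟩) := measurable_pi_apply _
    have comp := base.comp hφ hψ
    rwa [hrestr] at comp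
  · have hdisj : Disjoint S₁ ({Sum.inr k} : Finset (Fin n ⊕ Fin n)) := by
      simp [hS₁, Finset.disjoint_left]
    have base := hindep.indepFun_finset S₁ {Sum.inr k} hdisj hf
    have hψ : Measurable (fun v : ({x // x ∈ ({Sum.inr k} : Finset (Fin n ⊕ Fin n))} → ℝ) =>
        v ⟨Sum.inr k, Finset.mem_singleton_self _⟩) := measurable_pi_apply _
    have comp := base.comp hφ hψ
    rwa [hrestr] at comp


section Step
variable {Ω : Type} [MeasurableSpace Ω] {μ : Measure Ω} [IsProbabilityMeasure μ]

/-- If `Z` is integrable and `g` has bounded derivative, then `g ∘ Z` is integrable. -/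
lemma integrable_comp_g {g : ℝ → ℝ} (hdiff : Differentiable ℝ g) {B1 : ℝ}
    (hB1 : ∀ t, |deriv g t| ≤ B1) {Z : Ω → ℝ} (hZ : Measurable Z) (hZi : Integrable Z μ) :
    Integrable (fun ω => g (Z ω)) μ := by
  have hB1n : 0 ≤ B1 := le_trans (abs_nonneg _) (hB1 0)
  have lip : LipschitzWith B1.toNNReal g := by
    apply lipschitzWith_of_nnnorm_deriv_le hdiff
    intro x
    rw [← NNReal.coe_le_coe]
    simp only [coe_nnnorm, Real.norm_eq_abs, Real.coe_toNNReal B1 hB1n]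
    exact hB1 x
  have hbound : ∀ ω, |g (Z ω)| ≤ |g 0| + B1 * |Z ω| := by
    intro ω
    have := lip.dist_le_mul (Z ω) 0
    rw [Real.dist_eq, Real.dist_eq, sub_zero, Real.coe_toNNReal B1 hB1n] at this
    calc |g (Z ω)| ≤ |g (Z ω) - g 0| + |g 0| := by
          have := abs_sub_abs_le_abs_sub (g (Z ω)) (g 0); linarith [abs_sub_abs_le_abs_sub (g (Z ω)) (g 0), abs_nonneg (g (Z ω) - g 0), abs_add_le (g (Z ω) - g 0) (g 0)]
      _ ≤ |g 0| + B1 * |Z ω| := by linarith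
  refine Integrable.mono' ((integrable_const |g 0|).add (hZi.abs.const_mul B1)) ?_ ?_
  · exact ((hdiff.continuous.measurable.comp hZ)).aestronglyMeasurable
  · exact Filter.Eventually.of_forall fun ω => by
      simpa [Real.norm_eq_abs] using hbound ω

/-- One Lindeberg swap step. -/
lemma swap_step {g : ℝ → ℝ} (hd : ∀ j, j < 3 → Differentiable ℝ (iteratedDeriv j g))
    {B1 B2 B3 : ℝ}
    (hB1 : ∀ t, |deriv g t| ≤ B1) (hB2 : ∀ t, |iteratedDeriv 2 g t| ≤ B2)
    (hB3 : ∀ t, |iteratedDeriv 3 g t| ≤ B3)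
    {T V W : Ω → ℝ} (c : ℝ)
    (hT : Measurable T) (hTi : Integrable T μ)
    (hV : Measurable V) (hVi : Integrable V μ) (hV2 : Integrable (fun ω => (V ω)^2) μ)
    (hW : Measurable W) (hWi : Integrable W μ) (hW2 : Integrable (fun ω => (W ω)^2) μ)
    (hTV : IndepFun T V μ) (hTW : IndepFun T W μ)
    (hVm : ∫ ω, V ω ∂μ = 0) (hWm : ∫ ω, W ω ∂μ = 0)
    (hVv : ∫ ω, (V ω)^2 ∂μ = 1) (hWv : ∫ ω, (W ω)^2 ∂μ = 1) :
    |(∫ ω, g (T ω + c * V ω) ∂μ) - ∫ ω, g (T ω + c * W ω) ∂μ|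
      ≤ (∫ ω, min (B2 * (c * V ω) ^ 2) (B3 / 6 * |c * V ω| ^ 3) ∂μ)
        + ∫ ω, min (B2 * (c * W ω) ^ 2) (B3 / 6 * |c * W ω| ^ 3) ∂μ := by
  have hB1n : 0 ≤ B1 := le_trans (abs_nonneg _) (hB1 0)
  have hB2n : 0 ≤ B2 := le_trans (abs_nonneg _) (hB2 0)
  have hB3n : 0 ≤ B3 := le_trans (abs_nonneg _) (hB3 0)
  have h0 : Differentiable ℝ g := by simpa using hd 0 (by omega)
  have h1 : Differentiable ℝ (deriv g) := by
    have := hd 1 (by omega); rwa [iteratedDeriv_one] at this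
  have h2 : Differentiable ℝ (iteratedDeriv 2 g) := hd 2 (by omega)
  -- generic expansion
  have key : ∀ (V : Ω → ℝ), Measurable V → Integrable V μ →
      Integrable (fun ω => (V ω)^2) μ → IndepFun T V μ → (∫ ω, V ω ∂μ) = 0 →
      (∫ ω, (V ω)^2 ∂μ) = 1 →
      ∃ r : ℝ, (∫ ω, g (T ω + c * V ω) ∂μ)
          = (∫ ω, g (T ω) ∂μ) + (∫ ω, iteratedDeriv 2 g (T ω) ∂μ) * c ^ 2 / 2 + r ∧
        |r| ≤ ∫ ω, min (B2 * (c * V ω) ^ 2) (B3 / 6 * |c * V ω| ^ 3) ∂μ := by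
    intro V hV hVi hV2 hTV hVm hVv
    set R : Ω → ℝ := fun ω => g (T ω + c * V ω) - g (T ω) - deriv g (T ω) * (c * V ω)
      - iteratedDeriv 2 g (T ω) * (c * V ω) ^ 2 / 2 with hR
    -- integrability of all pieces
    have hTcV : Integrable (fun ω => T ω + c * V ω) μ := hTi.add (hVi.const_mul c)
    have hgTcV : Integrable (fun ω => g (T ω + c * V ω)) μ :=
      integrable_comp_g h0 hB1 (hT.add (hV.const_mul c)) hTcV
    have hgT : Integrable (fun ω => g (T ω)) μ := integrable_comp_g h0 hB1 hT hTi
    have hd1T : Integrable (fun ω => deriv g (T ω) * (c * V ω)) μ := by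
      apply Integrable.bdd_mul (c := B1) (hVi.const_mul c)
        (((h1.continuous.measurable.comp hT)).aestronglyMeasurable)
      exact Filter.Eventually.of_forall fun ω => by simpa [Real.norm_eq_abs] using hB1 (T ω)
    have hd2T : Integrable (fun ω => iteratedDeriv 2 g (T ω) * (c * V ω) ^ 2 / 2) μ := by
      have : Integrable (fun ω => (c * V ω)^2) μ := by
        have : (fun ω => (c * V ω)^2) = fun ω => c^2 * (V ω)^2 := by funext ω; ring
        rw [this]; exact hV2.const_mul _
      have hmul : Integrable (fun ω => iteratedDeriv 2 g (T ω) * (c * V ω) ^ 2) μ := by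
        apply Integrable.bdd_mul (c := B2) this
          (((h2.continuous.measurable.comp hT)).aestronglyMeasurable)
        exact Filter.Eventually.of_forall fun ω => by simpa [Real.norm_eq_abs] using hB2 (T ω)
      simpa [div_eq_mul_inv] using hmul.mul_const (2:ℝ)⁻¹
    have hRint : Integrable R μ := ((hgTcV.sub hgT).sub hd1T).sub hd2T
    refine ⟨∫ ω, R ω ∂μ, ?_, ?_⟩
    · -- expansion identity
      have expand : (fun ω => g (T ω + c * V ω))
          = fun ω => g (T ω) + deriv g (T ω) * (c * V ω)
            + iteratedDeriv 2 g (T ω) * (c * V ω) ^ 2 / 2 + R ω := by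
        funext ω; simp only [hR]; ring
      have I1 : Integrable (fun ω => g (T ω) + deriv g (T ω) * (c * V ω)) μ := hgT.add hd1T
      have I2 : Integrable (fun ω => g (T ω) + deriv g (T ω) * (c * V ω)
          + iteratedDeriv 2 g (T ω) * (c * V ω) ^ 2 / 2) μ := I1.add hd2T
      rw [expand, integral_add I2 hRint, integral_add I1 hd2T, integral_add hgT hd1T]
      -- linear term vanishes
      have lin : (∫ ω, deriv g (T ω) * (c * V ω) ∂μ) = 0 := by
        have : (fun ω => deriv g (T ω) * (c * V ω)) = fun ω => c * (deriv g (T ω) * V ω) := by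
          funext ω; ring
        rw [this, MeasureTheory.integral_const_mul]
        have indep1 : IndepFun (fun ω => deriv g (T ω)) V μ :=
          hTV.comp h1.continuous.measurable measurable_id
        rw [show (∫ ω, deriv g (T ω) * V ω ∂μ) = (∫ ω, deriv g (T ω) ∂μ) * ∫ ω, V ω ∂μ from
          indep1.integral_mul_eq_mul_integral ((h1.continuous.measurable.comp hT)).aestronglyMeasurable
          hV.aestronglyMeasurable, hVm]
        ring
      -- quadratic term
      have quad : (∫ ω, iteratedDeriv 2 g (T ω) * (c * V ω) ^ 2 / 2 ∂μ)
          = (∫ ω, iteratedDeriv 2 g (T ω) ∂μ) * c ^ 2 / 2 := by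
        have : (fun ω => iteratedDeriv 2 g (T ω) * (c * V ω) ^ 2 / 2)
            = fun ω => (c^2/2) * (iteratedDeriv 2 g (T ω) * (V ω)^2) := by
          funext ω; ring
        rw [this, MeasureTheory.integral_const_mul]
        have indep2 : IndepFun (fun ω => iteratedDeriv 2 g (T ω)) (fun ω => (V ω)^2) μ :=
          hTV.comp h2.continuous.measurable (measurable_id.pow_const 2)
        rw [show (∫ ω, iteratedDeriv 2 g (T ω) * (V ω)^2 ∂μ) = (∫ ω, iteratedDeriv 2 g (T ω) ∂μ) * ∫ ω, (V ω)^2 ∂μ from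
          indep2.integral_mul_eq_mul_integral ((h2.continuous.measurable.comp hT)).aestronglyMeasurable
          (hV.pow_const 2).aestronglyMeasurable, hVv]
        ring
      rw [lin, quad]
      ring
    · -- remainder bound
      have ptw : ∀ ω, |R ω| ≤ min (B2 * (c * V ω) ^ 2) (B3 / 6 * |c * V ω| ^ 3) := by
        intro ω
        simpa using taylor_bd hd hB2 hB3 (T ω) (c * V ω)
      have hmin_int : Integrable
          (fun ω => min (B2 * (c * V ω) ^ 2) (B3 / 6 * |c * V ω| ^ 3)) μ := by
        have hsq : Integrable (fun ω => B2 * (c * V ω)^2) μ := by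
          have : (fun ω => B2 * (c * V ω)^2) = fun ω => (B2 * c^2) * (V ω)^2 := by
            funext ω; ring
          rw [this]; exact hV2.const_mul _
        refine Integrable.mono' hsq ?_ ?_
        · apply Measurable.aestronglyMeasurable
          exact ((measurable_const.mul ((hV.const_mul c).pow_const 2)).min
            (measurable_const.mul (((hV.const_mul c).abs.pow_const 3))))
        · refine Filter.Eventually.of_forall fun ω => ?_
          rw [Real.norm_eq_abs, abs_of_nonneg (le_min (by positivity) (by positivity))]
          exact min_le_left _ _
      calc |∫ ω, R ω ∂μ| ≤ ∫ ω, |R ω| ∂μ := by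
            simpa [Real.norm_eq_abs] using norm_integral_le_integral_norm (μ := μ) R
        _ ≤ ∫ ω, min (B2 * (c * V ω) ^ 2) (B3 / 6 * |c * V ω| ^ 3) ∂μ :=
          integral_mono hRint.abs hmin_int ptw
  obtain ⟨rV, hVeq, hVbd⟩ := key V hV hVi hV2 hTV hVm hVv
  obtain ⟨rW, hWeq, hWbd⟩ := key W hW hWi hW2 hTW hWm hWv
  rw [hVeq, hWeq]
  have : (∫ ω, g (T ω) ∂μ) + (∫ ω, iteratedDeriv 2 g (T ω) ∂μ) * c ^ 2 / 2 + rV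
      - ((∫ ω, g (T ω) ∂μ) + (∫ ω, iteratedDeriv 2 g (T ω) ∂μ) * c ^ 2 / 2 + rW)
      = rV - rW := by ring
  rw [this]
  calc |rV - rW| ≤ |rV| + |rW| := abs_sub _ _
    _ ≤ _ := add_le_add hVbd hWbd

end Step


section Tele
variable {Ω : Type} {n : ℕ}

def Uf (X Y : Fin n → Ω → ℝ) (c : ℝ) (k : ℕ) (ω : Ω) : ℝ :=
  c * ∑ i : Fin n, (if (i:ℕ) < k then X i ω else Y i ω)

def Tf (X Y : Fin n → Ω → ℝ) (c : ℝ) (k : ℕ) (ω : Ω) : ℝ :=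
  c * ∑ i : Fin n, (if (i:ℕ) < k then X i ω else if k < (i:ℕ) then Y i ω else 0)

lemma Uf_top (X Y : Fin n → Ω → ℝ) (c : ℝ) :
    Uf X Y c n = fun ω => c * ∑ i, X i ω := by
  funext ω; simp [Uf, Fin.is_lt]

lemma Uf_bot (X Y : Fin n → Ω → ℝ) (c : ℝ) :
    Uf X Y c 0 = fun ω => c * ∑ i, Y i ω := by
  funext ω; simp [Uf]

lemma Uf_succ (X Y : Fin n → Ω → ℝ) (c : ℝ) {k : ℕ} (hk : k < n) :
    Uf X Y c (k+1) = fun ω => Tf X Y c k ω + c * X ⟨k, hk⟩ ω := by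
  funext ω
  simp only [Uf, Tf]
  have key : ∑ i : Fin n, (if (i:ℕ) < k+1 then X i ω else Y i ω)
      = (∑ i : Fin n, (if (i:ℕ) < k then X i ω else if k < (i:ℕ) then Y i ω else 0))
        + X ⟨k,hk⟩ ω := by
    have hptw : ∀ i : Fin n, (if (i:ℕ) < k+1 then X i ω else Y i ω)
        = (if (i:ℕ) < k then X i ω else if c = c ∧ k < (i:ℕ) then Y i ω else 0)
          + (if (i:ℕ) = k then X i ω else 0) := by
      intro i; rcases lt_trichotomy ((i:ℕ)) k with h|h|h
      · have h1 : (i:ℕ) < k+1 := by omega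
        have h3 : (i:ℕ) ≠ k := by omega
        simp [h, h1, h3]
      · have h1 : (i:ℕ) < k+1 := by omega
        have h2 : ¬((i:ℕ) < k) := by omega
        have h4 : ¬(k < (i:ℕ)) := by omega
        simp [h, h1, h2, h4]
      · have h1 : ¬((i:ℕ) < k+1) := by omega
        have h2 : ¬((i:ℕ) < k) := by omega
        have h3 : (i:ℕ) ≠ k := by omega
        simp [h, h1, h2, h3]
    rw [Finset.sum_congr rfl (fun i _ => hptw i), Finset.sum_add_distrib]
    congr 1
    · apply Finset.sum_congr rfl; intro i _; simp
    rw [Finset.sum_eq_single (⟨k,hk⟩ : Fin n)]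
    · simp
    · intro i _ hne
      have : (i:ℕ) ≠ k := fun h => hne (Fin.ext h)
      simp [this]
    · intro h; exact absurd (Finset.mem_univ _) h
  rw [key]; ring

lemma Uf_self (X Y : Fin n → Ω → ℝ) (c : ℝ) {k : ℕ} (hk : k < n) :
    Uf X Y c k = fun ω => Tf X Y c k ω + c * Y ⟨k, hk⟩ ω := by
  funext ω
  simp only [Uf, Tf]
  have key : ∑ i : Fin n, (if (i:ℕ) < k then X i ω else Y i ω)
      = (∑ i : Fin n, (if (i:ℕ) < k then X i ω else if k < (i:ℕ) then Y i ω else 0))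
        + Y ⟨k,hk⟩ ω := by
    have hptw : ∀ i : Fin n, (if (i:ℕ) < k then X i ω else Y i ω)
        = (if (i:ℕ) < k then X i ω else if k < (i:ℕ) then Y i ω else 0)
          + (if (i:ℕ) = k then Y i ω else 0) := by
      intro i; rcases lt_trichotomy ((i:ℕ)) k with h|h|h
      · have h3 : (i:ℕ) ≠ k := by omega
        simp [h, h3]
      · have h2 : ¬((i:ℕ) < k) := by omega
        have h4 : ¬(k < (i:ℕ)) := by omega
        simp [h, h2, h4]
      · have h2 : ¬((i:ℕ) < k) := by omega
        have h3 : (i:ℕ) ≠ k := by omega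
        simp [h, h2, h3]
    rw [Finset.sum_congr rfl (fun i _ => hptw i), Finset.sum_add_distrib]
    congr 1
    rw [Finset.sum_eq_single (⟨k,hk⟩ : Fin n)]
    · simp
    · intro i _ hne
      have : (i:ℕ) ≠ k := fun h => hne (Fin.ext h)
      simp [this]
    · intro h; exact absurd (Finset.mem_univ _) h
  rw [key]; ring

end Tele

lemma min_le_bound {B2 B3 ε s v : ℝ} (hB2 : 0 ≤ B2) (hB3 : 0 ≤ B3) (hε : 0 ≤ ε) (hs : 0 < s) :
    min (B2 * (s⁻¹ * v) ^ 2) (B3 / 6 * |s⁻¹ * v| ^ 3)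
      ≤ B2 * s⁻¹ ^ 2 * (if ε * s < |v| then v ^ 2 else 0)
        + B3 / 6 * ε * s⁻¹ ^ 2 * v ^ 2 := by
  have hsinv : (0:ℝ) < s⁻¹ := inv_pos.2 hs
  rcases le_or_gt |v| (ε * s) with h | h
  · refine le_trans (min_le_right _ _) ?_
    rw [if_neg (not_lt.2 h)]
    have habs : |s⁻¹ * v| = s⁻¹ * |v| := by rw [abs_mul, abs_of_pos hsinv]
    set u := s⁻¹ * |v| with hu
    have hun : 0 ≤ u := mul_nonneg hsinv.le (abs_nonneg v)
    have key : u ≤ ε := by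
      calc u ≤ s⁻¹ * (ε * s) := by
            apply mul_le_mul_of_nonneg_left h hsinv.le
        _ = ε := by field_simp
    have e : u ^ 2 = s⁻¹ ^ 2 * v ^ 2 := by
      rw [hu, mul_pow, sq_abs]
    have cube : u ^ 3 ≤ ε * u ^ 2 := by nlinarith [sq_nonneg u]
    calc B3 / 6 * |s⁻¹ * v| ^ 3 = B3 / 6 * u ^ 3 := by rw [habs]
      _ ≤ B3 / 6 * (ε * u ^ 2) := by
          apply mul_le_mul_of_nonneg_left cube (by positivity)
      _ = B3 / 6 * ε * s⁻¹ ^ 2 * v ^ 2 := by rw [e]; ring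
      _ ≤ _ := by nlinarith [mul_nonneg hB2 (sq_nonneg (s⁻¹ * v))]
  · refine le_trans (min_le_left _ _) ?_
    rw [if_pos h]
    have e : (s⁻¹ * v) ^ 2 = s⁻¹ ^ 2 * v ^ 2 := by ring
    rw [e]
    nlinarith [mul_nonneg (mul_nonneg (mul_nonneg (by positivity : (0:ℝ) ≤ B3 / 6) hε)
      (sq_nonneg s⁻¹)) (sq_nonneg v), sq_nonneg v, sq_nonneg s⁻¹]

end Helpers


open MeasureTheory ProbabilityTheory

theorem stmt6
    {Ω : Type} [MeasurableSpace Ω] {μ : Measure Ω} [IsProbabilityMeasure μ]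
    {n : ℕ} (hn : 0 < n)
    (X Y : Fin n → Ω → ℝ)
    (hXmeas : ∀ i, Measurable (X i)) (hYmeas : ∀ i, Measurable (Y i))
    (hXid : ∀ i, IdentDistrib (X i) (X ⟨0, hn⟩) μ μ)
    (hYid : ∀ i, IdentDistrib (Y i) (Y ⟨0, hn⟩) μ μ)
    (hindep : iIndepFun (Sum.elim X Y) μ)
    (hX2 : MemLp (X ⟨0, hn⟩) 2 μ) (hY2 : MemLp (Y ⟨0, hn⟩) 2 μ)
    (hXmean : ∫ ω, X ⟨0, hn⟩ ω ∂μ = 0) (hYmean : ∫ ω, Y ⟨0, hn⟩ ω ∂μ = 0)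
    (hXvar : ∫ ω, (X ⟨0, hn⟩ ω) ^ 2 ∂μ = 1)
    (hYvar : ∫ ω, (Y ⟨0, hn⟩ ω) ^ 2 ∂μ = 1)
    (g : ℝ → ℝ) (hg : ∀ p < 3, Differentiable ℝ (iteratedDeriv p g))
    (B1 B2 B3 : ℝ)
    (hB1 : ∀ t, |deriv g t| ≤ B1)
    (hB2 : ∀ t, |iteratedDeriv 2 g t| ≤ B2)
    (hB3 : ∀ t, |iteratedDeriv 3 g t| ≤ B3)
    (ε : ℝ) (hε : 0 < ε) :
    |(∫ ω, g ((Real.sqrt n)⁻¹ * ∑ i, X i ω) ∂μ) -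
        ∫ ω, g ((Real.sqrt n)⁻¹ * ∑ i, Y i ω) ∂μ| ≤
      (B1 + B2) *
        ((∫ ω in {ω | ε * Real.sqrt n < |X ⟨0, hn⟩ ω|},
            (X ⟨0, hn⟩ ω) ^ 2 ∂μ) +
          ∫ ω in {ω | ε * Real.sqrt n < |Y ⟨0, hn⟩ ω|},
            (Y ⟨0, hn⟩ ω) ^ 2 ∂μ) +
      2 * (B1 / 6 + B2 / 2 + B3 / 6) * ε := by
  have hB1n : 0 ≤ B1 := le_trans (abs_nonneg _) (hB1 0)
  have hB2n : 0 ≤ B2 := le_trans (abs_nonneg _) (hB2 0)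
  have hB3n : 0 ≤ B3 := le_trans (abs_nonneg _) (hB3 0)
  have hnR : (0:ℝ) < n := by exact_mod_cast hn
  have hsq : (0:ℝ) < Real.sqrt n := Real.sqrt_pos.2 hnR
  set s : ℝ := Real.sqrt n with hs_def
  set c : ℝ := s⁻¹ with hc_def
  have hc2 : c ^ 2 = (n:ℝ)⁻¹ := by
    rw [hc_def, inv_pow, hs_def, Real.sq_sqrt hnR.le]
  -- integrability and moments for each coordinate
  have hX2i : ∀ i, MemLp (X i) 2 μ := fun i => (hXid i).symm.memLp_snd hX2
  have hY2i : ∀ i, MemLp (Y i) 2 μ := fun i => (hYid i).symm.memLp_snd hY2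
  have hXint : ∀ i, Integrable (X i) μ := fun i => (hX2i i).integrable (by norm_num)
  have hYint : ∀ i, Integrable (Y i) μ := fun i => (hY2i i).integrable (by norm_num)
  have hXsq : ∀ i, Integrable (fun ω => (X i ω)^2) μ := fun i => (hX2i i).integrable_sq
  have hYsq : ∀ i, Integrable (fun ω => (Y i ω)^2) μ := fun i => (hY2i i).integrable_sq
  have hXm : ∀ i, ∫ ω, X i ω ∂μ = 0 := fun i => ((hXid i).integral_eq).trans hXmean
  have hYm : ∀ i, ∫ ω, Y i ω ∂μ = 0 := fun i => ((hYid i).integral_eq).trans hYmean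
  have hXv : ∀ i, ∫ ω, (X i ω)^2 ∂μ = 1 := fun i =>
    (((hXid i).comp (measurable_id.pow_const 2)).integral_eq).trans hXvar
  have hYv : ∀ i, ∫ ω, (Y i ω)^2 ∂μ = 1 := fun i =>
    (((hYid i).comp (measurable_id.pow_const 2)).integral_eq).trans hYvar
  -- the truncated second moment function
  set F : ℝ → ℝ := fun v => if ε * s < |v| then v ^ 2 else 0 with hF_def
  have hF : Measurable F := by
    apply Measurable.ite (measurableSet_lt measurable_const measurable_abs)
      (measurable_id.pow_const 2) measurable_const
  have hFnn : ∀ v, 0 ≤ F v := by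
    intro v; rw [hF_def]; dsimp only; split_ifs; exacts [sq_nonneg v, le_refl 0]
  have hFle : ∀ v, F v ≤ v ^ 2 := by
    intro v; rw [hF_def]; dsimp only; split_ifs; exacts [le_refl _, sq_nonneg v]
  have hFint : ∀ (Z : Ω → ℝ), Measurable Z → Integrable (fun ω => (Z ω)^2) μ →
      Integrable (fun ω => F (Z ω)) μ := by
    intro Z hZ hZ2
    refine Integrable.mono' hZ2 (hF.comp hZ).aestronglyMeasurable ?_
    exact Filter.Eventually.of_forall fun ω => by
      rw [Real.norm_eq_abs, abs_of_nonneg (hFnn _)]; exact hFle _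
  set IXv : ℝ := ∫ ω, F (X ⟨0, hn⟩ ω) ∂μ with hIX_def
  set IYv : ℝ := ∫ ω, F (Y ⟨0, hn⟩ ω) ∂μ with hIY_def
  have hIXnn : 0 ≤ IXv := integral_nonneg fun ω => hFnn _
  have hIYnn : 0 ≤ IYv := integral_nonneg fun ω => hFnn _
  have hFX : ∀ i, ∫ ω, F (X i ω) ∂μ = IXv := fun i => ((hXid i).comp hF).integral_eq
  have hFY : ∀ i, ∫ ω, F (Y i ω) ∂μ = IYv := fun i => ((hYid i).comp hF).integral_eq
  -- relate set integrals to F-integrals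
  have hsetX : (∫ ω in {ω | ε * s < |X ⟨0, hn⟩ ω|}, (X ⟨0, hn⟩ ω) ^ 2 ∂μ) = IXv := by
    rw [hIX_def, ← integral_indicator (measurableSet_lt measurable_const (hXmeas _).abs)]
    congr 1
  have hsetY : (∫ ω in {ω | ε * s < |Y ⟨0, hn⟩ ω|}, (Y ⟨0, hn⟩ ω) ^ 2 ∂μ) = IYv := by
    rw [hIY_def, ← integral_indicator (measurableSet_lt measurable_const (hYmeas _).abs)]
    congr 1
  -- per-step bound
  set D : ℝ := B2 * c ^ 2 * IXv + B3 / 6 * ε * c ^ 2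
      + (B2 * c ^ 2 * IYv + B3 / 6 * ε * c ^ 2) with hD_def
  have hstep : ∀ k, k < n →
      |(∫ ω, g (Uf X Y c (k+1) ω) ∂μ) - ∫ ω, g (Uf X Y c k ω) ∂μ| ≤ D := by
    intro k hk
    set kf : Fin n := ⟨k, hk⟩ with hkf
    have hTmeas : Measurable (Tf X Y c k) := by
      apply Measurable.const_mul
      apply Finset.measurable_sum
      intro i _
      split_ifs
      exacts [hXmeas i, hYmeas i, measurable_const]
    have hTint : Integrable (Tf X Y c k) μ := by
      apply Integrable.const_mul
      apply integrable_finset_sum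
      intro i _
      split_ifs
      exacts [hXint i, hYint i, integrable_const 0]
    have hindepX : IndepFun (Tf X Y c k) (X kf) μ :=
      (indep_T X Y hXmeas hYmeas hindep c kf).1
    have hindepY : IndepFun (Tf X Y c k) (Y kf) μ :=
      (indep_T X Y hXmeas hYmeas hindep c kf).2
    have hb := swap_step hg hB1 hB2 hB3 c hTmeas hTint (hXmeas kf) (hXint kf) (hXsq kf)
      (hYmeas kf) (hYint kf) (hYsq kf) hindepX hindepY (hXm kf) (hYm kf) (hXv kf) (hYv kf)
    rw [Uf_succ X Y c hk, Uf_self X Y c hk]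
    refine le_trans hb ?_
    -- bound each remainder integral
    have hbd : ∀ (Z : Ω → ℝ), Measurable Z → Integrable (fun ω => (Z ω)^2) μ →
        (∫ ω, (Z ω)^2 ∂μ) = 1 →
        (∫ ω, min (B2 * (c * Z ω) ^ 2) (B3 / 6 * |c * Z ω| ^ 3) ∂μ)
          ≤ B2 * c ^ 2 * (∫ ω, F (Z ω) ∂μ) + B3 / 6 * ε * c ^ 2 := by
      intro Z hZ hZ2 hZv
      have hrhs : Integrable (fun ω => B2 * c ^ 2 * F (Z ω)
          + B3 / 6 * ε * c ^ 2 * (Z ω) ^ 2) μ :=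
        ((hFint Z hZ hZ2).const_mul _).add (hZ2.const_mul _)
      have hlhs : Integrable
          (fun ω => min (B2 * (c * Z ω) ^ 2) (B3 / 6 * |c * Z ω| ^ 3)) μ := by
        have hsqc : Integrable (fun ω => B2 * (c * Z ω)^2) μ := by
          have : (fun ω => B2 * (c * Z ω)^2) = fun ω => (B2 * c^2) * (Z ω)^2 := by
            funext ω; ring
          rw [this]; exact hZ2.const_mul _
        refine Integrable.mono' hsqc ?_ ?_
        · apply Measurable.aestronglyMeasurable
          exact ((measurable_const.mul ((hZ.const_mul c).pow_const 2)).min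
            (measurable_const.mul (((hZ.const_mul c).abs.pow_const 3))))
        · refine Filter.Eventually.of_forall fun ω => ?_
          rw [Real.norm_eq_abs, abs_of_nonneg (le_min (by positivity) (by positivity))]
          exact min_le_left _ _
      calc (∫ ω, min (B2 * (c * Z ω) ^ 2) (B3 / 6 * |c * Z ω| ^ 3) ∂μ)
          ≤ ∫ ω, (B2 * c ^ 2 * F (Z ω) + B3 / 6 * ε * c ^ 2 * (Z ω) ^ 2) ∂μ := by
            apply integral_mono hlhs hrhs
            intro ω
            have := min_le_bound (v := Z ω) (s := s) hB2n hB3n hε.le hsq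
            rw [← hc_def] at this
            simpa [hF_def] using this
        _ = B2 * c ^ 2 * (∫ ω, F (Z ω) ∂μ) + B3 / 6 * ε * c ^ 2 := by
            rw [integral_add ((hFint Z hZ hZ2).const_mul _) (hZ2.const_mul _),
              integral_const_mul, integral_const_mul, hZv, mul_one]
      
    have h1 := hbd (X kf) (hXmeas kf) (hXsq kf) (hXv kf)
    have h2 := hbd (Y kf) (hYmeas kf) (hYsq kf) (hYv kf)
    rw [hFX kf] at h1
    rw [hFY kf] at h2
    rw [hD_def]
    exact add_le_add h1 h2
  -- telescoping
  have tele : (∫ ω, g (Uf X Y c n ω) ∂μ) - (∫ ω, g (Uf X Y c 0 ω) ∂μ)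
      = ∑ k ∈ Finset.range n,
          ((∫ ω, g (Uf X Y c (k+1) ω) ∂μ) - ∫ ω, g (Uf X Y c k ω) ∂μ) :=
    (Finset.sum_range_sub (fun k => ∫ ω, g (Uf X Y c k ω) ∂μ) n).symm
  have main : |(∫ ω, g (Uf X Y c n ω) ∂μ) - (∫ ω, g (Uf X Y c 0 ω) ∂μ)| ≤ n * D := by
    rw [tele]
    calc |∑ k ∈ Finset.range n,
          ((∫ ω, g (Uf X Y c (k+1) ω) ∂μ) - ∫ ω, g (Uf X Y c k ω) ∂μ)|
        ≤ ∑ k ∈ Finset.range n,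
          |(∫ ω, g (Uf X Y c (k+1) ω) ∂μ) - ∫ ω, g (Uf X Y c k ω) ∂μ| :=
          Finset.abs_sum_le_sum_abs _ _
      _ ≤ ∑ _k ∈ Finset.range n, D := by
          apply Finset.sum_le_sum
          intro k hk
          exact hstep k (Finset.mem_range.1 hk)
      _ = n * D := by rw [Finset.sum_const, Finset.card_range, nsmul_eq_mul]
  rw [Uf_top, Uf_bot] at main
  rw [hsetX, hsetY]
  refine le_trans main ?_
  have hnD : (n:ℝ) * D = B2 * (IXv + IYv) + B3 / 3 * ε := by
    rw [hD_def, hc2]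
    have hne : (n:ℝ) ≠ 0 := ne_of_gt hnR
    field_simp
    ring
  rw [hnD]
  nlinarith [hIXnn, hIYnn, hε.le, mul_nonneg hB1n (hIXnn), mul_nonneg hB1n hIYnn,
    mul_nonneg hB1n hε.le, mul_nonneg hB2n hε.le]
end

section
/- Let X₁,…,Xₙ be i.i.d. real random variables and Y₁,…,Yₙ be i.i.d. real random variables, with the two families independent of each other, E[X₁] = E[Y₁] = 0, E[X₁²] = E[Y₁²] = 1, and γ := max{E|X₁|³, E|Y₁|³} < ∞. Let U = max_{1≤i≤n} n^{-1/2} Σ_{j=1}^{i} X_j and V = max_{1≤i≤n} n^{-1/2} Σ_{j=1}^{i} Y_j. Then for every thrice differentiable g : ℝ → ℝ with bounded first three derivatives, |E g(U) − E g(V)| ≤ K(g) [ γ^{1/3} n^{-1/6} (log n)^{2/3} + γ n^{-1/2} ], where K(g) = (19/3)‖g′‖∞ + 13‖g″‖∞ + (13/3)‖g‴‖∞. -/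
open MeasureTheory ProbabilityTheory
open scoped ENNReal

/-- Crude third-order Taylor bound. -/
lemma taylor3 {h h1 h2 h3 : ℝ → ℝ} {M : ℝ}
    (hd : ∀ s, HasDerivAt h (h1 s) s) (hd1 : ∀ s, HasDerivAt h1 (h2 s) s)
    (hd2 : ∀ s, HasDerivAt h2 (h3 s) s) (hM : ∀ s, |h3 s| ≤ M) (x : ℝ) :
    |h x - h 0 - h1 0 * x - h2 0 * x ^ 2 / 2| ≤ M * |x| ^ 3 := by
  have hM0 : 0 ≤ M := le_trans (abs_nonneg _) (hM 0)
  have habs : ∀ s ∈ Set.uIcc 0 x, |s| ≤ |x| := by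
    intro s hs
    rcases Set.mem_uIcc.1 hs with ⟨h1, h2⟩ | ⟨h1, h2⟩ <;> rw [abs_le] <;>
      constructor <;> cases abs_cases x <;> nlinarith [abs_nonneg x]
  -- step 2 : |h2 s - h2 0| ≤ M * |x| on uIcc 0 x
  have step2 : ∀ s ∈ Set.uIcc 0 x, |h2 s - h2 0| ≤ M * |x| := by
    intro s hs
    have := (convex_uIcc (0:ℝ) x).norm_image_sub_le_of_norm_hasDerivWithin_le
      (f := h2) (f' := h3) (C := M)
      (fun y hy => (hd2 y).hasDerivWithinAt)
      (fun y hy => (hM y).trans (le_refl M) |>.trans_eq rfl) (Set.left_mem_uIcc) hs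
    calc |h2 s - h2 0| ≤ M * ‖s - 0‖ := by simpa [Real.norm_eq_abs] using this
    _ ≤ M * |x| := by
        rw [sub_zero]
        exact mul_le_mul_of_nonneg_left (habs s hs) hM0
  -- step 1
  set u : ℝ → ℝ := fun s => h1 s - h1 0 - h2 0 * s with hu
  have hud : ∀ s, HasDerivAt u (h2 s - h2 0) s := by
    intro s
    have h' := ((hd1 s).sub_const (h1 0)).sub ((hasDerivAt_id s).const_mul (h2 0))
    simp only [mul_one] at h'
    exact h'
  have step1 : ∀ s ∈ Set.uIcc 0 x, |u s| ≤ (M * |x|) * |x| := by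
    intro s hs
    have := (convex_uIcc (0:ℝ) x).norm_image_sub_le_of_norm_hasDerivWithin_le
      (f := u) (f' := fun s => h2 s - h2 0) (C := M * |x|)
      (fun y hy => (hud y).hasDerivWithinAt) (fun y hy => by
        simpa [Real.norm_eq_abs] using step2 y hy) (Set.left_mem_uIcc) hs
    have hu0 : u 0 = 0 := by simp [hu]
    calc |u s| = |u s - u 0| := by rw [hu0, sub_zero]
    _ ≤ M * |x| * ‖s - 0‖ := by simpa [Real.norm_eq_abs] using this
    _ ≤ M * |x| * |x| := by
        rw [sub_zero]
        exact mul_le_mul_of_nonneg_left (habs s hs) (by positivity)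
  -- step 0
  set v : ℝ → ℝ := fun s => h s - h 0 - h1 0 * s - h2 0 * s ^ 2 / 2 with hv
  have hvd : ∀ s, HasDerivAt v (u s) s := by
    intro s
    have : HasDerivAt (fun s : ℝ => h2 0 * s ^ 2 / 2) (h2 0 * s) s := by
      have := ((hasDerivAt_pow 2 s).const_mul (h2 0)).div_const 2
      simpa using this.congr_deriv (by ring)
    have h' := (((hd s).sub_const (h 0)).sub
      ((hasDerivAt_id s).const_mul (h1 0))).sub this
    simp only [mul_one] at h'
    exact h'
  have := (convex_uIcc (0:ℝ) x).norm_image_sub_le_of_norm_hasDerivWithin_le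
    (f := v) (f' := u) (C := M * |x| * |x|)
    (fun y hy => (hvd y).hasDerivWithinAt) (fun y hy => by
      simpa [Real.norm_eq_abs] using step1 y hy) (Set.left_mem_uIcc)
    (Set.right_mem_uIcc)
  have hv0 : v 0 = 0 := by simp [hv]
  have : |v x| ≤ M * |x| * |x| * |x| := by
    have h' := this
    rw [hv0, sub_zero, sub_zero, Real.norm_eq_abs, Real.norm_eq_abs] at h'
    exact h'
  calc |h x - h 0 - h1 0 * x - h2 0 * x ^ 2 / 2| = |v x| := rfl
  _ ≤ M * |x| * |x| * |x| := this
  _ = M * |x| ^ 3 := by ring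

lemma softmax_taylor {g : ℝ → ℝ}
    (hg0 : Differentiable ℝ g) (hg1 : Differentiable ℝ (deriv g))
    (hg2 : Differentiable ℝ (deriv (deriv g)))
    {B1 B2 B3 : ℝ}
    (hB1 : ∀ y, |deriv g y| ≤ B1) (hB2 : ∀ y, |deriv (deriv g) y| ≤ B2)
    (hB3 : ∀ y, |deriv (deriv (deriv g)) y| ≤ B3)
    {t A B : ℝ} (ht : 0 < t) (hA : 0 ≤ A) (hB : 0 < B) (x : ℝ) :
    |g (Real.log (A + B * Real.exp (t * x)) / t) - g (Real.log (A + B) / t)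
      - (deriv g (Real.log (A + B) / t) * (B / (A + B))) * x
      - (deriv (deriv g) (Real.log (A + B) / t) * (B / (A + B)) ^ 2
          + deriv g (Real.log (A + B) / t) * (t * (B / (A + B)) * (1 - B / (A + B))))
        * x ^ 2 / 2|
      ≤ (B3 + 3 * t * B2 + t ^ 2 * B1) * |x| ^ 3 := by
  set q : ℝ → ℝ := fun s => A + B * Real.exp (t * s) with hqdef
  have hq : ∀ s, 0 < q s := fun s => by positivity
  set p : ℝ → ℝ := fun s => B * Real.exp (t * s) / q s with hpdef
  have hp_pos : ∀ s, 0 < p s := fun s => div_pos (by positivity) (hq s)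
  have hp_le : ∀ s, p s ≤ 1 := fun s => by
    rw [hpdef, div_le_one (hq s)]
    simp only [hqdef]
    nlinarith [Real.exp_pos (t * s)]
  set φ : ℝ → ℝ := fun s => Real.log (q s) / t with hφdef
  have hqd : ∀ s, HasDerivAt q (t * (B * Real.exp (t * s))) s := by
    intro s
    have : HasDerivAt (fun s : ℝ => Real.exp (t * s)) (Real.exp (t * s) * t) s := by
      have h' := (Real.hasDerivAt_exp (t * s)).comp s
        ((hasDerivAt_id s).const_mul t)
      simp only [mul_one] at h'
      exact h'
    simpa [hqdef] using ((this.const_mul B).const_add A).congr_deriv (by ring)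
  have hφd : ∀ s, HasDerivAt φ (p s) s := by
    intro s
    have hl := ((hqd s).log (ne_of_gt (hq s))).div_const t
    refine hl.congr_deriv ?_
    have e : p s = B * Real.exp (t * s) / q s := rfl
    rw [e]
    have hQ := (hq s).ne'
    field_simp
  have hpd : ∀ s, HasDerivAt p (t * p s * (1 - p s)) s := by
    intro s
    have hu : HasDerivAt (fun s : ℝ => B * Real.exp (t * s)) (t * (B * Real.exp (t * s))) s := by
      have : HasDerivAt (fun s : ℝ => Real.exp (t * s)) (Real.exp (t * s) * t) s := by
        have h' := (Real.hasDerivAt_exp (t * s)).comp s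
          ((hasDerivAt_id s).const_mul t)
        simp only [mul_one] at h'
        exact h'
      simpa using (this.const_mul B).congr_deriv (by ring)
    have hdiv := hu.div (hqd s) (ne_of_gt (hq s))
    refine hdiv.congr_deriv ?_
    have e : p s = B * Real.exp (t * s) / q s := rfl
    rw [e]
    have hQ := (hq s).ne'
    field_simp
  -- derivative of F ∘ φ  for differentiable F
  have hcomp : ∀ (F : ℝ → ℝ), Differentiable ℝ F → ∀ s,
      HasDerivAt (fun y => F (φ y)) (deriv F (φ s) * p s) s := by
    intro F hF s
    have := (hF (φ s)).hasDerivAt.comp s (hφd s)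
    exact this
  set h1 : ℝ → ℝ := fun s => deriv g (φ s) * p s with hh1def
  set h2 : ℝ → ℝ := fun s =>
    deriv (deriv g) (φ s) * p s ^ 2 + deriv g (φ s) * (t * p s * (1 - p s)) with hh2def
  set h3 : ℝ → ℝ := fun s =>
    deriv (deriv (deriv g)) (φ s) * p s ^ 3
      + 3 * (deriv (deriv g) (φ s)) * (t * p s ^ 2 * (1 - p s))
      + deriv g (φ s) * (t ^ 2 * p s * (1 - p s) * (1 - 2 * p s)) with hh3def
  have hd : ∀ s, HasDerivAt (fun s => g (φ s)) (h1 s) s := fun s => hcomp g hg0 s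
  have hd1 : ∀ s, HasDerivAt h1 (h2 s) s := by
    intro s
    have := (hcomp (deriv g) hg1 s).mul (hpd s)
    exact this.congr_deriv (by simp only [hh2def]; ring)
  have hd2 : ∀ s, HasDerivAt h2 (h3 s) s := by
    intro s
    have t1 := (hcomp (deriv (deriv g)) hg2 s).mul ((hpd s).pow 2)
    have hone : HasDerivAt (fun s => 1 - p s) (-(t * p s * (1 - p s))) s :=
      (hpd s).const_sub 1
    have hq2 := (((hpd s).const_mul t).mul hone)
    have t2 := (hcomp (deriv g) hg1 s).mul hq2
    have := t1.add t2
    exact this.congr_deriv (by simp only [hh3def, Pi.pow_apply, Pi.mul_apply]; push_cast; ring)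
  have hB1nn : 0 ≤ B1 := le_trans (abs_nonneg _) (hB1 0)
  have hB2nn : 0 ≤ B2 := le_trans (abs_nonneg _) (hB2 0)
  have hB3nn : 0 ≤ B3 := le_trans (abs_nonneg _) (hB3 0)
  have hM : ∀ s, |h3 s| ≤ B3 + 3 * t * B2 + t ^ 2 * B1 := by
    intro s
    set P := p s with hP
    have hp1 : 0 < P := hp_pos s
    have hp2 : P ≤ 1 := hp_le s
    have aP : |P| ≤ 1 := abs_le.2 ⟨by linarith, hp2⟩
    have a2 : |1 - P| ≤ 1 := abs_le.2 ⟨by linarith, by linarith⟩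
    have a3 : |1 - 2 * P| ≤ 1 := abs_le.2 ⟨by linarith, by linarith⟩
    have e1 : |deriv (deriv (deriv g)) (φ s) * P ^ 3| ≤ B3 := by
      rw [abs_mul]
      have hb : |P ^ 3| ≤ 1 := by
        rw [abs_pow]
        calc |P| ^ 3 ≤ 1 ^ 3 := pow_le_pow_left₀ (abs_nonneg _) aP 3
        _ = 1 := one_pow 3
      calc |deriv (deriv (deriv g)) (φ s)| * |P ^ 3| ≤ B3 * 1 :=
        mul_le_mul (hB3 _) hb (abs_nonneg _) hB3nn
      _ = B3 := mul_one _
    have e2 : |3 * (deriv (deriv g) (φ s)) * (t * P ^ 2 * (1 - P))| ≤ 3 * t * B2 := by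
      have hb : |t * P ^ 2 * (1 - P)| ≤ t := by
        rw [abs_mul, abs_mul, abs_of_pos ht, abs_pow]
        calc t * |P| ^ 2 * |1 - P| ≤ t * 1 ^ 2 * 1 := by
              apply mul_le_mul ?_ a2 (abs_nonneg _) (by positivity)
              exact mul_le_mul_of_nonneg_left
                (pow_le_pow_left₀ (abs_nonneg _) aP 2) ht.le
        _ = t := by ring
      rw [abs_mul, abs_mul]
      calc |3| * |deriv (deriv g) (φ s)| * |t * P ^ 2 * (1 - P)| ≤ 3 * B2 * t :=
            mul_le_mul (by
              rw [show |(3:ℝ)| = 3 by norm_num]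
              exact mul_le_mul_of_nonneg_left (hB2 _) (by norm_num))
              hb (abs_nonneg _) (mul_nonneg (by norm_num) hB2nn)
      _ = 3 * t * B2 := by ring
    have e3 : |deriv g (φ s) * (t ^ 2 * P * (1 - P) * (1 - 2 * P))| ≤ t ^ 2 * B1 := by
      have hb : |t ^ 2 * P * (1 - P) * (1 - 2 * P)| ≤ t ^ 2 := by
        have hre : t ^ 2 * P * (1 - P) * (1 - 2 * P)
            = t ^ 2 * (P * (1 - P) * (1 - 2 * P)) := by ring
        rw [hre, abs_mul, abs_of_nonneg (sq_nonneg t), abs_mul, abs_mul]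
        calc t ^ 2 * (|P| * |1 - P| * |1 - 2 * P|) ≤ t ^ 2 * (1 * 1 * 1) := by
              apply mul_le_mul_of_nonneg_left ?_ (sq_nonneg t)
              exact mul_le_mul (mul_le_mul aP a2 (abs_nonneg _) zero_le_one)
                a3 (abs_nonneg _) (by norm_num)
        _ = t ^ 2 := by ring
      rw [abs_mul]
      calc |deriv g (φ s)| * |t ^ 2 * P * (1 - P) * (1 - 2 * P)| ≤ B1 * t ^ 2 :=
        mul_le_mul (hB1 _) hb (abs_nonneg _) hB1nn
      _ = t ^ 2 * B1 := by ring
    calc |h3 s| ≤ |deriv (deriv (deriv g)) (φ s) * P ^ 3|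
          + |3 * (deriv (deriv g) (φ s)) * (t * P ^ 2 * (1 - P))|
          + |deriv g (φ s) * (t ^ 2 * P * (1 - P) * (1 - 2 * P))| := by
          simp only [hh3def]
          exact (abs_add_le _ _).trans (add_le_add_left (abs_add_le _ _) _)
    _ ≤ B3 + 3 * t * B2 + t ^ 2 * B1 := add_le_add (add_le_add e1 e2) e3
  have key := taylor3 hd hd1 hd2 hM x
  have hq0 : q 0 = A + B := by simp [hqdef]
  have hφ0 : φ 0 = Real.log (A + B) / t := by rw [hφdef]; simp [hq0]
  have hp0 : p 0 = B / (A + B) := by rw [hpdef]; simp [hq0]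
  have hφx : φ x = Real.log (A + B * Real.exp (t * x)) / t := rfl
  rw [hh1def, hh2def] at key
  simp only [hφ0, hp0, hφx] at key
  exact key

lemma glip {g : ℝ → ℝ} {B1 : ℝ} (hg0 : Differentiable ℝ g)
    (hB1 : ∀ y, |deriv g y| ≤ B1) (a b : ℝ) : |g a - g b| ≤ B1 * |a - b| := by
  have := convex_univ.norm_image_sub_le_of_norm_hasDerivWithin_le
    (f := g) (f' := deriv g) (C := B1)
    (fun y _ => (hg0 y).hasDerivAt.hasDerivWithinAt)
    (fun y _ => by simpa [Real.norm_eq_abs] using hB1 y)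
    (Set.mem_univ b) (Set.mem_univ a)
  simpa [Real.norm_eq_abs] using this

lemma sandwich {n : ℕ} (hn : 0 < n) {t : ℝ} (ht : 0 < t) (v : Fin n → ℝ) :
    (⨆ i, v i) ≤ Real.log (∑ i, Real.exp (t * v i)) / t ∧
    Real.log (∑ i, Real.exp (t * v i)) / t ≤ (⨆ i, v i) + Real.log n / t := by
  haveI : Nonempty (Fin n) := Fin.pos_iff_nonempty.1 hn
  have bdd : BddAbove (Set.range v) := (Set.finite_range v).bddAbove
  set m := ⨆ i, v i with hm
  have hle : ∀ i, v i ≤ m := fun i => le_ciSup bdd i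
  have hsumpos : 0 < ∑ i, Real.exp (t * v i) :=
    Finset.sum_pos (fun i _ => Real.exp_pos _) Finset.univ_nonempty
  constructor
  · obtain ⟨i0, hmax⟩ := Finite.exists_max v
    have hmi : m = v i0 := le_antisymm (ciSup_le hmax) (le_ciSup bdd i0)
    have h1 : Real.exp (t * m) ≤ ∑ i, Real.exp (t * v i) := by
      rw [hmi]
      exact Finset.single_le_sum (f := fun i => Real.exp (t * v i))
        (fun i _ => (Real.exp_pos _).le) (Finset.mem_univ i0)
    have h2 : t * m ≤ Real.log (∑ i, Real.exp (t * v i)) := by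
      have := Real.log_le_log (Real.exp_pos _) h1
      rwa [Real.log_exp] at this
    rw [le_div_iff₀ ht]
    linarith [h2]
  · have h1 : ∑ i, Real.exp (t * v i) ≤ n * Real.exp (t * m) := by
      calc ∑ i, Real.exp (t * v i) ≤ ∑ _i : Fin n, Real.exp (t * m) :=
            Finset.sum_le_sum (fun i _ => Real.exp_le_exp.2
              (mul_le_mul_of_nonneg_left (hle i) ht.le))
      _ = n * Real.exp (t * m) := by simp [mul_comm]
    have h2 : Real.log (∑ i, Real.exp (t * v i)) ≤ Real.log n + t * m := by
      have := Real.log_le_log hsumpos h1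
      rwa [Real.log_mul (by positivity) (Real.exp_ne_zero _), Real.log_exp] at this
    rw [div_le_iff₀ ht]
    have hlog : 0 ≤ Real.log n := Real.log_nonneg (by exact_mod_cast hn)
    field_simp
    nlinarith [h2]

lemma sup_abs_le {n : ℕ} (hn : 0 < n) (v : Fin n → ℝ) : |⨆ i, v i| ≤ ∑ i, |v i| := by
  haveI : Nonempty (Fin n) := Fin.pos_iff_nonempty.1 hn
  have bdd : BddAbove (Set.range v) := (Set.finite_range v).bddAbove
  rw [abs_le]
  constructor
  · have h1 : v (Classical.arbitrary _) ≤ ⨆ i, v i := le_ciSup bdd _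
    have h2 : -|v (Classical.arbitrary _)| ≤ v (Classical.arbitrary _) := neg_abs_le _
    have h3 : |v (Classical.arbitrary _)| ≤ ∑ i, |v i| :=
      Finset.single_le_sum (f := fun i => |v i|) (fun i _ => abs_nonneg _)
        (Finset.mem_univ _)
    linarith
  · refine ciSup_le fun i => (le_abs_self _).trans ?_
    exact Finset.single_le_sum (f := fun j => |v j|) (fun j _ => abs_nonneg _)
      (Finset.mem_univ i)

lemma swap_step_s7 {Ω : Type} [MeasurableSpace Ω] {μ : Measure Ω} [IsProbabilityMeasure μ]
    {g : ℝ → ℝ} (hg0 : Differentiable ℝ g) (hg1 : Differentiable ℝ (deriv g))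
    (hg2 : Differentiable ℝ (deriv (deriv g)))
    {B1 B2 B3 : ℝ}
    (hB1 : ∀ y, |deriv g y| ≤ B1) (hB2 : ∀ y, |deriv (deriv g) y| ≤ B2)
    (hB3 : ∀ y, |deriv (deriv (deriv g)) y| ≤ B3)
    {t c γ : ℝ} (ht : 0 < t) (hc : 0 ≤ c)
    {ξ η : Ω → ℝ} {AB : Ω → ℝ × ℝ}
    (hξm : Measurable ξ) (hηm : Measurable η) (hABm : Measurable AB)
    (hA : ∀ ω, 0 ≤ (AB ω).1) (hB : ∀ ω, 0 < (AB ω).2)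
    (hiξ : IndepFun AB ξ μ) (hiη : IndepFun AB η μ)
    (hξ3 : MemLp ξ 3 μ) (hη3 : MemLp η 3 μ)
    (hmean : ∫ ω, ξ ω ∂μ = ∫ ω, η ω ∂μ)
    (hvar : ∫ ω, ξ ω ^ 2 ∂μ = ∫ ω, η ω ^ 2 ∂μ)
    (hγξ : ∫ ω, |ξ ω| ^ 3 ∂μ ≤ γ) (hγη : ∫ ω, |η ω| ^ 3 ∂μ ≤ γ) :
    |∫ ω, (g (Real.log ((AB ω).1 + (AB ω).2 * Real.exp (t * (c * ξ ω))) / t)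
         - g (Real.log ((AB ω).1 + (AB ω).2 * Real.exp (t * (c * η ω))) / t)) ∂μ|
      ≤ (B3 + 3 * t * B2 + t ^ 2 * B1) * c ^ 3 * (2 * γ) := by
  have hB1nn : 0 ≤ B1 := le_trans (abs_nonneg _) (hB1 0)
  have hB2nn : 0 ≤ B2 := le_trans (abs_nonneg _) (hB2 0)
  have hB3nn : 0 ≤ B3 := le_trans (abs_nonneg _) (hB3 0)
  set M : ℝ := B3 + 3 * t * B2 + t ^ 2 * B1 with hM
  have hMnn : 0 ≤ M := by positivity
  -- names for the pieces
  set D1f : ℝ × ℝ → ℝ := fun z =>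
    deriv g (Real.log (z.1 + z.2) / t) * (z.2 / (z.1 + z.2)) with hD1f
  set D2f : ℝ × ℝ → ℝ := fun z =>
    deriv (deriv g) (Real.log (z.1 + z.2) / t) * (z.2 / (z.1 + z.2)) ^ 2
      + deriv g (Real.log (z.1 + z.2) / t)
        * (t * (z.2 / (z.1 + z.2)) * (1 - z.2 / (z.1 + z.2))) with hD2f
  set Hf : ℝ × ℝ → ℝ → ℝ := fun z x =>
    g (Real.log (z.1 + z.2 * Real.exp (t * x)) / t) with hHf
  have hABsum : ∀ ω, 0 < (AB ω).1 + (AB ω).2 := fun ω => by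
    have := hA ω; have := hB ω; linarith
  have hPpos : ∀ ω, 0 < (AB ω).2 / ((AB ω).1 + (AB ω).2) :=
    fun ω => div_pos (hB ω) (hABsum ω)
  have hPle : ∀ ω, (AB ω).2 / ((AB ω).1 + (AB ω).2) ≤ 1 := fun ω => by
    rw [div_le_one (hABsum ω)]; linarith [hA ω]
  -- measurability
  have hgc : Continuous (deriv g) := hg1.continuous
  have hggc : Continuous (deriv (deriv g)) := hg2.continuous
  have hgcont : Continuous g := hg0.continuous
  have haddm : Measurable (fun z : ℝ × ℝ => z.1 + z.2) :=
    measurable_fst.add measurable_snd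
  have hψfm : Measurable (fun z : ℝ × ℝ => Real.log (z.1 + z.2) / t) :=
    (haddm.log).div_const t
  have hPfm : Measurable (fun z : ℝ × ℝ => z.2 / (z.1 + z.2)) :=
    measurable_snd.div haddm
  have hD1fm : Measurable D1f := (hgc.measurable.comp hψfm).mul hPfm
  have hD2fm : Measurable D2f := by
    apply Measurable.add
    · exact (hggc.measurable.comp hψfm).mul (hPfm.pow_const 2)
    · exact (hgc.measurable.comp hψfm).mul
        ((hPfm.const_mul t).mul (measurable_const.sub hPfm))
  have hHm : ∀ (u : Ω → ℝ), Measurable u →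
      Measurable (fun ω => Hf (AB ω) (u ω)) := by
    intro u hu
    apply hgcont.measurable.comp
    apply Measurable.div_const
    apply Measurable.log
    exact (measurable_fst.comp hABm).add
      ((measurable_snd.comp hABm).mul ((hu.const_mul t).exp))
  -- integrability of moments
  have hint : ∀ (u : Ω → ℝ), Measurable u → MemLp u 3 μ →
      Integrable u μ ∧ Integrable (fun ω => u ω ^ 2) μ
        ∧ Integrable (fun ω => |u ω| ^ 3) μ := by
    intro u hu hu3
    refine ⟨hu3.integrable (by norm_num), (hu3.mono_exponent (by norm_num)).integrable_sq, ?_⟩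
    have h := hu3.integrable_norm_rpow (by norm_num) (by norm_num)
    refine h.congr (Filter.Eventually.of_forall fun ω => ?_)
    show ‖u ω‖ ^ (3 : ℝ≥0∞).toReal = |u ω| ^ 3
    have e : ((3 : ℝ≥0∞).toReal) = ((3 : ℕ) : ℝ) := by norm_num
    rw [Real.norm_eq_abs, e, Real.rpow_natCast]
  obtain ⟨hIξ1, hIξ2, hIξ3⟩ := hint ξ hξm hξ3
  obtain ⟨hIη1, hIη2, hIη3⟩ := hint η hηm hη3
  -- bounded multipliers
  have hD1b : ∀ ω, |D1f (AB ω)| ≤ B1 := by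
    intro ω
    rw [hD1f]
    simp only
    rw [abs_mul]
    calc |deriv g _| * |(AB ω).2 / ((AB ω).1 + (AB ω).2)| ≤ B1 * 1 := by
          apply mul_le_mul (hB1 _) _ (abs_nonneg _) hB1nn
          rw [abs_le]
          constructor <;> [linarith [hPpos ω]; exact hPle ω]
    _ = B1 := mul_one _
  have hD2b : ∀ ω, |D2f (AB ω)| ≤ B2 + t * B1 := by
    intro ω
    have hp1 := hPpos ω
    have hp2 := hPle ω
    set P := (AB ω).2 / ((AB ω).1 + (AB ω).2) with hP
    rw [hD2f]
    simp only [← hP]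
    refine (abs_add_le _ _).trans (add_le_add ?_ ?_)
    · rw [abs_mul]
      calc |deriv (deriv g) _| * |P ^ 2| ≤ B2 * 1 := by
            apply mul_le_mul (hB2 _) _ (abs_nonneg _) hB2nn
            rw [abs_le]; constructor <;> nlinarith
      _ = B2 := mul_one _
    · rw [abs_mul]
      calc |deriv g _| * |t * P * (1 - P)| ≤ B1 * t := by
            apply mul_le_mul (hB1 _) _ (abs_nonneg _) hB1nn
            rw [abs_le]
            constructor <;>
              nlinarith [mul_nonneg (mul_nonneg ht.le hp1.le)
                  (by linarith : (0:ℝ) ≤ 1 - P),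
                mul_nonneg ht.le (sq_nonneg (P - 1/2))]
      _ = t * B1 := mul_comm _ _
  -- remainder functions
  set Rξ : Ω → ℝ := fun ω => Hf (AB ω) (c * ξ ω) - Hf (AB ω) 0
    - D1f (AB ω) * (c * ξ ω) - D2f (AB ω) * (c * ξ ω) ^ 2 / 2 with hRξ
  set Rη : Ω → ℝ := fun ω => Hf (AB ω) (c * η ω) - Hf (AB ω) 0
    - D1f (AB ω) * (c * η ω) - D2f (AB ω) * (c * η ω) ^ 2 / 2 with hRη
  have hH0 : ∀ ω, Hf (AB ω) 0 = g (Real.log ((AB ω).1 + (AB ω).2) / t) := by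
    intro ω; simp [hHf]
  have hRbound : ∀ (u : Ω → ℝ) ω,
      |Hf (AB ω) (c * u ω) - Hf (AB ω) 0 - D1f (AB ω) * (c * u ω)
        - D2f (AB ω) * (c * u ω) ^ 2 / 2| ≤ M * c ^ 3 * |u ω| ^ 3 := by
    intro u ω
    have key := softmax_taylor hg0 hg1 hg2 hB1 hB2 hB3 ht (hA ω) (hB ω) (c * u ω)
    have e1 : |c * u ω| ^ 3 = c ^ 3 * |u ω| ^ 3 := by
      rw [abs_mul, mul_pow, abs_of_nonneg hc]
    rw [e1] at key
    calc |Hf (AB ω) (c * u ω) - Hf (AB ω) 0 - D1f (AB ω) * (c * u ω)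
          - D2f (AB ω) * (c * u ω) ^ 2 / 2|
        = |g (Real.log ((AB ω).1 + (AB ω).2 * Real.exp (t * (c * u ω))) / t)
            - g (Real.log ((AB ω).1 + (AB ω).2) / t)
            - (deriv g (Real.log ((AB ω).1 + (AB ω).2) / t)
                * ((AB ω).2 / ((AB ω).1 + (AB ω).2))) * (c * u ω)
            - (deriv (deriv g) (Real.log ((AB ω).1 + (AB ω).2) / t)
                  * ((AB ω).2 / ((AB ω).1 + (AB ω).2)) ^ 2
                + deriv g (Real.log ((AB ω).1 + (AB ω).2) / t)
                  * (t * ((AB ω).2 / ((AB ω).1 + (AB ω).2))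
                    * (1 - (AB ω).2 / ((AB ω).1 + (AB ω).2))))
              * (c * u ω) ^ 2 / 2| := by rw [hH0, hHf, hD1f, hD2f]
    _ ≤ (B3 + 3 * t * B2 + t ^ 2 * B1) * (c ^ 3 * |u ω| ^ 3) := key
    _ = M * c ^ 3 * |u ω| ^ 3 := by rw [hM]; ring
  -- measurability of everything
  have hHmu : ∀ (u : Ω → ℝ), Measurable u →
      Measurable (fun ω => Hf (AB ω) (c * u ω)) := fun u hu => hHm _ (hu.const_mul c)
  have hH0m : Measurable (fun ω => Hf (AB ω) 0) := hHm _ measurable_const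
  have hD1m : Measurable (fun ω => D1f (AB ω)) := hD1fm.comp hABm
  have hD2m : Measurable (fun ω => D2f (AB ω)) := hD2fm.comp hABm
  have hRm : ∀ (u : Ω → ℝ), Measurable u → Measurable (fun ω =>
      Hf (AB ω) (c * u ω) - Hf (AB ω) 0 - D1f (AB ω) * (c * u ω)
        - D2f (AB ω) * (c * u ω) ^ 2 / 2) := by
    intro u hu
    exact (((hHmu u hu).sub hH0m).sub (hD1m.mul (hu.const_mul c))).sub
      ((hD2m.mul ((hu.const_mul c).pow_const 2)).div_const 2)
  -- integrability
  have hIRξ : Integrable Rξ μ := by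
    refine (hIξ3.const_mul (M * c ^ 3)).mono' ((hRm ξ hξm).aestronglyMeasurable) ?_
    exact Filter.Eventually.of_forall fun ω => by
      rw [Real.norm_eq_abs]; exact hRbound ξ ω
  have hIRη : Integrable Rη μ := by
    refine (hIη3.const_mul (M * c ^ 3)).mono' ((hRm η hηm).aestronglyMeasurable) ?_
    exact Filter.Eventually.of_forall fun ω => by
      rw [Real.norm_eq_abs]; exact hRbound η ω
  have hID1ξ : Integrable (fun ω => D1f (AB ω) * ξ ω) μ :=
    hIξ1.bdd_mul hD1m.aestronglyMeasurable
      (Filter.Eventually.of_forall fun ω => by rw [Real.norm_eq_abs]; exact hD1b ω)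
  have hID1η : Integrable (fun ω => D1f (AB ω) * η ω) μ :=
    hIη1.bdd_mul hD1m.aestronglyMeasurable
      (Filter.Eventually.of_forall fun ω => by rw [Real.norm_eq_abs]; exact hD1b ω)
  have hID2ξ : Integrable (fun ω => D2f (AB ω) * ξ ω ^ 2) μ :=
    hIξ2.bdd_mul hD2m.aestronglyMeasurable
      (Filter.Eventually.of_forall fun ω => by rw [Real.norm_eq_abs]; exact hD2b ω)
  have hID2η : Integrable (fun ω => D2f (AB ω) * η ω ^ 2) μ :=
    hIη2.bdd_mul hD2m.aestronglyMeasurable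
      (Filter.Eventually.of_forall fun ω => by rw [Real.norm_eq_abs]; exact hD2b ω)
  -- independence factorizations
  have hfac1ξ : ∫ ω, D1f (AB ω) * ξ ω ∂μ
      = (∫ ω, D1f (AB ω) ∂μ) * ∫ ω, ξ ω ∂μ := by
    have := (hiξ.comp hD1fm measurable_id).integral_mul_eq_mul_integral
      (hD1m.aestronglyMeasurable) hξm.aestronglyMeasurable
    simpa [Function.comp, Pi.mul_apply] using this
  have hfac1η : ∫ ω, D1f (AB ω) * η ω ∂μ
      = (∫ ω, D1f (AB ω) ∂μ) * ∫ ω, η ω ∂μ := by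
    have := (hiη.comp hD1fm measurable_id).integral_mul_eq_mul_integral
      (hD1m.aestronglyMeasurable) hηm.aestronglyMeasurable
    simpa [Function.comp, Pi.mul_apply] using this
  have hfac2ξ : ∫ ω, D2f (AB ω) * ξ ω ^ 2 ∂μ
      = (∫ ω, D2f (AB ω) ∂μ) * ∫ ω, ξ ω ^ 2 ∂μ := by
    have := (hiξ.comp hD2fm (measurable_id.pow_const 2)).integral_mul_eq_mul_integral
      (hD2m.aestronglyMeasurable) ((hξm.pow_const 2).aestronglyMeasurable)
    simpa [Function.comp, Pi.mul_apply] using this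
  have hfac2η : ∫ ω, D2f (AB ω) * η ω ^ 2 ∂μ
      = (∫ ω, D2f (AB ω) ∂μ) * ∫ ω, η ω ^ 2 ∂μ := by
    have := (hiη.comp hD2fm (measurable_id.pow_const 2)).integral_mul_eq_mul_integral
      (hD2m.aestronglyMeasurable) ((hηm.pow_const 2).aestronglyMeasurable)
    simpa [Function.comp, Pi.mul_apply] using this
  -- decomposition
  have j1 : Integrable (fun ω => c * (D1f (AB ω) * ξ ω)) μ := hID1ξ.const_mul c
  have j2 : Integrable (fun ω => c * (D1f (AB ω) * η ω)) μ := hID1η.const_mul c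
  have j3 : Integrable (fun ω => c ^ 2 / 2 * (D2f (AB ω) * ξ ω ^ 2)) μ :=
    hID2ξ.const_mul (c ^ 2 / 2)
  have j4 : Integrable (fun ω => c ^ 2 / 2 * (D2f (AB ω) * η ω ^ 2)) μ :=
    hID2η.const_mul (c ^ 2 / 2)
  have i1 : Integrable (fun ω => Rξ ω - Rη ω) μ := hIRξ.sub hIRη
  have i2 : Integrable (fun ω =>
      c * (D1f (AB ω) * ξ ω) - c * (D1f (AB ω) * η ω)) μ := j1.sub j2
  have i3 : Integrable (fun ω => c ^ 2 / 2 * (D2f (AB ω) * ξ ω ^ 2)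
      - c ^ 2 / 2 * (D2f (AB ω) * η ω ^ 2)) μ := j3.sub j4
  have i12 : Integrable (fun ω => (Rξ ω - Rη ω)
      + (c * (D1f (AB ω) * ξ ω) - c * (D1f (AB ω) * η ω))) μ := i1.add i2
  have split : (fun ω => Hf (AB ω) (c * ξ ω) - Hf (AB ω) (c * η ω))
      = fun ω => ((Rξ ω - Rη ω)
          + (c * (D1f (AB ω) * ξ ω) - c * (D1f (AB ω) * η ω)))
          + (c ^ 2 / 2 * (D2f (AB ω) * ξ ω ^ 2)
            - c ^ 2 / 2 * (D2f (AB ω) * η ω ^ 2)) := by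
    funext ω
    rw [hRξ, hRη]
    ring
  have eqint : ∫ ω, (Hf (AB ω) (c * ξ ω) - Hf (AB ω) (c * η ω)) ∂μ
      = ∫ ω, Rξ ω ∂μ - ∫ ω, Rη ω ∂μ := by
    rw [split, integral_add i12 i3, integral_add i1 i2, integral_sub hIRξ hIRη,
      integral_sub j1 j2, integral_sub j3 j4,
      integral_const_mul, integral_const_mul, integral_const_mul, integral_const_mul,
      hfac1ξ, hfac1η, hfac2ξ, hfac2η, hmean, hvar]
    ring
  -- final bound
  have habsR : ∀ (u : Ω → ℝ) (hu : Measurable u)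
      (hu3 : Integrable (fun ω => |u ω| ^ 3) μ)
      (hR : Integrable (fun ω => Hf (AB ω) (c * u ω) - Hf (AB ω) 0
        - D1f (AB ω) * (c * u ω) - D2f (AB ω) * (c * u ω) ^ 2 / 2) μ)
      (hγu : ∫ ω, |u ω| ^ 3 ∂μ ≤ γ),
      |∫ ω, (Hf (AB ω) (c * u ω) - Hf (AB ω) 0 - D1f (AB ω) * (c * u ω)
        - D2f (AB ω) * (c * u ω) ^ 2 / 2) ∂μ| ≤ M * c ^ 3 * γ := by
    intro u hu hu3 hR hγu
    calc |∫ ω, (Hf (AB ω) (c * u ω) - Hf (AB ω) 0 - D1f (AB ω) * (c * u ω)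
          - D2f (AB ω) * (c * u ω) ^ 2 / 2) ∂μ|
        ≤ ∫ ω, |Hf (AB ω) (c * u ω) - Hf (AB ω) 0 - D1f (AB ω) * (c * u ω)
          - D2f (AB ω) * (c * u ω) ^ 2 / 2| ∂μ := by
          have := norm_integral_le_integral_norm (μ := μ)
            (f := fun ω => Hf (AB ω) (c * u ω) - Hf (AB ω) 0
              - D1f (AB ω) * (c * u ω) - D2f (AB ω) * (c * u ω) ^ 2 / 2)
          simpa [Real.norm_eq_abs] using this
    _ ≤ ∫ ω, M * c ^ 3 * |u ω| ^ 3 ∂μ := by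
          refine integral_mono hR.abs (hu3.const_mul (M * c ^ 3)) ?_
          intro ω
          exact hRbound u ω
    _ = M * c ^ 3 * ∫ ω, |u ω| ^ 3 ∂μ := integral_const_mul _ _
    _ ≤ M * c ^ 3 * γ := by
          apply mul_le_mul_of_nonneg_left hγu (by positivity)
  have final := eqint
  have h1 := habsR ξ hξm hIξ3 hIRξ hγξ
  have h2 := habsR η hηm hIη3 hIRη hγη
  calc |∫ ω, (Hf (AB ω) (c * ξ ω) - Hf (AB ω) (c * η ω)) ∂μ|
      = |∫ ω, Rξ ω ∂μ - ∫ ω, Rη ω ∂μ| := by rw [eqint]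
  _ ≤ |∫ ω, Rξ ω ∂μ| + |∫ ω, Rη ω ∂μ| := abs_sub _ _
  _ ≤ M * c ^ 3 * γ + M * c ^ 3 * γ := add_le_add h1 h2
  _ = M * c ^ 3 * (2 * γ) := by ring


lemma final_arith {γ N L B1 B2 B3 t : ℝ}
    (hγ : 0 < γ) (hN : 0 < N) (hL : 0 < L)
    (hB1 : 0 ≤ B1) (hB2 : 0 ≤ B2) (hB3 : 0 ≤ B3)
    (htv : t = γ ^ (-(1:ℝ)/3) * N ^ ((1:ℝ)/6) * L ^ ((1:ℝ)/3)) :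
    2 * (B1 * (L / t)) + N ^ (-(1:ℝ)/2) * ((B3 + 3 * t * B2 + t ^ 2 * B1) * (2 * γ))
      ≤ (19 / 3 * B1 + 13 * B2 + 13 / 3 * B3) *
        (γ ^ ((1:ℝ)/3) * N ^ (-(1:ℝ)/6) * L ^ ((2:ℝ)/3) + γ * N ^ (-(1:ℝ)/2)) := by
  have hre : ∀ (x : ℝ), 0 < x → ∀ p q : ℝ, x ^ p * x ^ q = x ^ (p + q) :=
    fun x hx p q => (Real.rpow_add hx p q).symm
  set T1 : ℝ := γ ^ ((1:ℝ)/3) * N ^ (-(1:ℝ)/6) * L ^ ((2:ℝ)/3) with hT1def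
  set T2 : ℝ := γ * N ^ (-(1:ℝ)/2) with hT2def
  set G : ℝ := γ ^ ((2:ℝ)/3) * N ^ (-(1:ℝ)/3) * L ^ ((1:ℝ)/3) with hGdef
  have hT1 : 0 < T1 := by
    rw [hT1def]
    positivity
  have hT2 : 0 < T2 := by
    rw [hT2def]
    positivity
  have hG : 0 < G := by
    rw [hGdef]
    positivity
  have ht : 0 < t := by
    rw [htv]; positivity
  -- e1 : L / t = T1
  have e1 : L / t = T1 := by
    rw [div_eq_iff ht.ne']
    rw [hT1def, htv]
    rw [show γ ^ ((1:ℝ)/3) * N ^ (-(1:ℝ)/6) * L ^ ((2:ℝ)/3)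
          * (γ ^ (-(1:ℝ)/3) * N ^ ((1:ℝ)/6) * L ^ ((1:ℝ)/3))
        = (γ ^ ((1:ℝ)/3) * γ ^ (-(1:ℝ)/3)) * (N ^ (-(1:ℝ)/6) * N ^ ((1:ℝ)/6))
          * (L ^ ((2:ℝ)/3) * L ^ ((1:ℝ)/3)) from by ring]
    rw [hre γ hγ, hre N hN, hre L hL]
    norm_num
  -- e2
  have e2 : N ^ (-(1:ℝ)/2) * (t ^ 2 * γ) = T1 := by
    rw [hT1def, htv]
    rw [show N ^ (-(1:ℝ)/2) * ((γ ^ (-(1:ℝ)/3) * N ^ ((1:ℝ)/6) * L ^ ((1:ℝ)/3)) ^ 2 * γ)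
        = (γ ^ (-(1:ℝ)/3) * γ ^ (-(1:ℝ)/3) * (γ ^ (1:ℝ)))
          * (N ^ ((1:ℝ)/6) * N ^ ((1:ℝ)/6) * N ^ (-(1:ℝ)/2))
          * (L ^ ((1:ℝ)/3) * L ^ ((1:ℝ)/3)) from by rw [Real.rpow_one]; ring]
    rw [hre γ hγ, hre γ hγ, hre N hN, hre N hN, hre L hL]
    norm_num
  -- e3
  have e3 : N ^ (-(1:ℝ)/2) * (t * γ) = G := by
    rw [hGdef, htv]
    rw [show N ^ (-(1:ℝ)/2) * (γ ^ (-(1:ℝ)/3) * N ^ ((1:ℝ)/6) * L ^ ((1:ℝ)/3) * γ)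
        = (γ ^ (-(1:ℝ)/3) * (γ ^ (1:ℝ))) * (N ^ ((1:ℝ)/6) * N ^ (-(1:ℝ)/2))
          * (L ^ ((1:ℝ)/3)) from by rw [Real.rpow_one]; ring]
    rw [hre γ hγ, hre N hN]
    norm_num
  -- G^2 = T1 * T2
  have hG2 : G ^ 2 = T1 * T2 := by
    rw [hGdef, hT1def, hT2def]
    rw [show (γ ^ ((2:ℝ)/3) * N ^ (-(1:ℝ)/3) * L ^ ((1:ℝ)/3)) ^ 2
        = (γ ^ ((2:ℝ)/3) * γ ^ ((2:ℝ)/3)) * (N ^ (-(1:ℝ)/3) * N ^ (-(1:ℝ)/3))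
          * (L ^ ((1:ℝ)/3) * L ^ ((1:ℝ)/3)) from by ring]
    rw [show γ ^ ((1:ℝ)/3) * N ^ (-(1:ℝ)/6) * L ^ ((2:ℝ)/3) * (γ * N ^ (-(1:ℝ)/2))
        = (γ ^ ((1:ℝ)/3) * (γ ^ (1:ℝ))) * (N ^ (-(1:ℝ)/6) * N ^ (-(1:ℝ)/2))
          * (L ^ ((2:ℝ)/3)) from by rw [Real.rpow_one]; ring]
    rw [hre γ hγ, hre N hN, hre L hL, hre γ hγ, hre N hN]
    norm_num
  -- AM-GM
  have hGle : 2 * G ≤ T1 + T2 := by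
    have h4 : (2 * G) ^ 2 ≤ (T1 + T2) ^ 2 := by nlinarith [sq_nonneg (T1 - T2), hG2]
    have h5 := Real.sqrt_le_sqrt h4
    rwa [Real.sqrt_sq (by positivity : (0:ℝ) ≤ 2 * G),
      Real.sqrt_sq (by positivity : (0:ℝ) ≤ T1 + T2)] at h5
  -- final
  calc 2 * (B1 * (L / t))
        + N ^ (-(1:ℝ)/2) * ((B3 + 3 * t * B2 + t ^ 2 * B1) * (2 * γ))
      = 2 * B1 * (L / t) + 2 * B3 * (γ * N ^ (-(1:ℝ)/2))
        + 6 * B2 * (N ^ (-(1:ℝ)/2) * (t * γ)) + 2 * B1 * (N ^ (-(1:ℝ)/2) * (t ^ 2 * γ)) := by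
        ring
  _ = 2 * B1 * T1 + 2 * B3 * T2 + 6 * B2 * G + 2 * B1 * T1 := by
        rw [e1, e2, e3, hT2def]
  _ ≤ (19 / 3 * B1 + 13 * B2 + 13 / 3 * B3) * (T1 + T2) := by
        nlinarith [mul_nonneg hB1 hT1.le, mul_nonneg hB1 hT2.le,
          mul_nonneg hB2 hT1.le, mul_nonneg hB2 hT2.le,
          mul_nonneg hB3 hT1.le, mul_nonneg hB3 hT2.le,
          mul_le_mul_of_nonneg_left hGle hB2]

set_option maxHeartbeats 400000 in
theorem stmt7
    {Ω : Type} [MeasurableSpace Ω] {μ : Measure Ω} [IsProbabilityMeasure μ]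
    {n : ℕ} (hn : 2 ≤ n)
    (X Y : Fin n → Ω → ℝ)
    (hXmeas : ∀ i, Measurable (X i)) (hYmeas : ∀ i, Measurable (Y i))
    (hXid : ∀ i, IdentDistrib (X i) (X ⟨0, by omega⟩) μ μ)
    (hYid : ∀ i, IdentDistrib (Y i) (Y ⟨0, by omega⟩) μ μ)
    (hindep : iIndepFun (Sum.elim X Y) μ)
    (hX3 : MemLp (X ⟨0, by omega⟩) 3 μ) (hY3 : MemLp (Y ⟨0, by omega⟩) 3 μ)
    (hXmean : ∫ ω, X ⟨0, by omega⟩ ω ∂μ = 0)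
    (hYmean : ∫ ω, Y ⟨0, by omega⟩ ω ∂μ = 0)
    (hXvar : ∫ ω, (X ⟨0, by omega⟩ ω) ^ 2 ∂μ = 1)
    (hYvar : ∫ ω, (Y ⟨0, by omega⟩ ω) ^ 2 ∂μ = 1)
    (γ : ℝ)
    (hγ : γ = max (∫ ω, |X ⟨0, by omega⟩ ω| ^ 3 ∂μ)
      (∫ ω, |Y ⟨0, by omega⟩ ω| ^ 3 ∂μ))
    (g : ℝ → ℝ) (hg : ∀ p < 3, Differentiable ℝ (iteratedDeriv p g))
    (B1 B2 B3 : ℝ)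
    (hB1 : ∀ t, |deriv g t| ≤ B1)
    (hB2 : ∀ t, |iteratedDeriv 2 g t| ≤ B2)
    (hB3 : ∀ t, |iteratedDeriv 3 g t| ≤ B3) :
    |(∫ ω, g (⨆ i : Fin n, (Real.sqrt n)⁻¹ * ∑ j ∈ Finset.Iic i, X j ω) ∂μ) -
        ∫ ω, g (⨆ i : Fin n, (Real.sqrt n)⁻¹ * ∑ j ∈ Finset.Iic i, Y j ω) ∂μ| ≤
      (19 / 3 * B1 + 13 * B2 + 13 / 3 * B3) *
        (γ ^ ((1 : ℝ) / 3) * (n : ℝ) ^ (-(1 : ℝ) / 6) *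
            Real.log n ^ ((2 : ℝ) / 3) +
          γ * (n : ℝ) ^ (-(1 : ℝ) / 2)) := by
  -- basic facts
  have hn0 : 0 < n := by omega
  haveI : Nonempty (Fin n) := Fin.pos_iff_nonempty.1 hn0
  have hnR1 : (1 : ℝ) < (n : ℝ) := by exact_mod_cast (by omega : 1 < n)
  have hnRpos : (0 : ℝ) < (n : ℝ) := by linarith
  have hL : 0 < Real.log n := Real.log_pos hnR1
  set L : ℝ := Real.log n with hLdef
  -- derivative facts for g
  have hg0 : Differentiable ℝ g := by
    have := hg 0 (by norm_num)
    rwa [iteratedDeriv_zero] at this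
  have hg1 : Differentiable ℝ (deriv g) := by
    have := hg 1 (by norm_num)
    rwa [iteratedDeriv_one] at this
  have hg2 : Differentiable ℝ (deriv (deriv g)) := by
    have := hg 2 (by norm_num)
    rwa [iteratedDeriv_succ, iteratedDeriv_one] at this
  have hB2' : ∀ y, |deriv (deriv g) y| ≤ B2 := by
    intro y
    have := hB2 y
    rwa [iteratedDeriv_succ, iteratedDeriv_one] at this
  have hB3' : ∀ y, |deriv (deriv (deriv g)) y| ≤ B3 := by
    intro y
    have := hB3 y
    rwa [iteratedDeriv_succ, iteratedDeriv_succ, iteratedDeriv_one] at this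
  have hB1nn : 0 ≤ B1 := le_trans (abs_nonneg _) (hB1 0)
  have hB2nn : 0 ≤ B2 := le_trans (abs_nonneg _) (hB2 0)
  have hB3nn : 0 ≤ B3 := le_trans (abs_nonneg _) (hB3 0)
  -- moments of the base variables
  set X0 : Ω → ℝ := X ⟨0, by omega⟩ with hX0def
  set Y0 : Ω → ℝ := Y ⟨0, by omega⟩ with hY0def
  have hmom3 : ∀ (u : Ω → ℝ), Measurable u → MemLp u 3 μ →
      Integrable u μ ∧ Integrable (fun ω => u ω ^ 2) μ
        ∧ Integrable (fun ω => |u ω| ^ 3) μ := by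
    intro u hu hu3
    refine ⟨hu3.integrable (by norm_num),
      (hu3.mono_exponent (by norm_num)).integrable_sq, ?_⟩
    have h := hu3.integrable_norm_rpow (by norm_num) (by norm_num)
    refine h.congr (Filter.Eventually.of_forall fun ω => ?_)
    show ‖u ω‖ ^ (3 : ℝ≥0∞).toReal = |u ω| ^ 3
    have e : ((3 : ℝ≥0∞).toReal) = ((3 : ℕ) : ℝ) := by norm_num
    rw [Real.norm_eq_abs, e, Real.rpow_natCast]
  -- γ bounds
  have hγX : ∫ ω, |X0 ω| ^ 3 ∂μ ≤ γ := hγ ▸ le_max_left _ _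
  have hγY : ∫ ω, |Y0 ω| ^ 3 ∂μ ≤ γ := hγ ▸ le_max_right _ _
  have hγpos : 0 < γ := by
    obtain ⟨hIX1, hIX2, hIX3⟩ := hmom3 X0 (hXmeas _) hX3
    by_contra hcon
    push_neg at hcon
    have h0 : ∫ ω, |X0 ω| ^ 3 ∂μ = 0 :=
      le_antisymm (hγX.trans hcon) (integral_nonneg fun ω => by positivity)
    have hae : (fun ω => |X0 ω| ^ 3) =ᵐ[μ] 0 :=
      (integral_eq_zero_iff_of_nonneg (fun ω => by positivity) hIX3).1 h0
    have hae2 : (fun ω => X0 ω ^ 2) =ᵐ[μ] 0 := by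
      filter_upwards [hae] with ω hω
      have : |X0 ω| ^ 3 = 0 := hω
      have : X0 ω = 0 := by
        by_contra hne
        exact absurd this (by positivity)
      simp [this]
    have : (1 : ℝ) = 0 := by
      rw [← hXvar]
      rw [show (∫ ω, X0 ω ^ 2 ∂μ) = ∫ ω, (0 : ℝ) ∂μ from integral_congr_ae hae2]
      simp
    norm_num at this
  -- parameters
  set c : ℝ := (Real.sqrt n)⁻¹ with hcdef
  have hc : 0 < c := by
    rw [hcdef]
    exact inv_pos.2 (Real.sqrt_pos.2 hnRpos)
  set t : ℝ := γ ^ (-(1 : ℝ)/3) * (n : ℝ) ^ ((1 : ℝ)/6) * L ^ ((1 : ℝ)/3) with htdef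
  have ht : 0 < t := by
    rw [htdef]
    have := Real.rpow_pos_of_pos hγpos (-(1:ℝ)/3)
    have := Real.rpow_pos_of_pos hnRpos ((1:ℝ)/6)
    have := Real.rpow_pos_of_pos hL ((1:ℝ)/3)
    positivity
  set M : ℝ := B3 + 3 * t * B2 + t ^ 2 * B1 with hMdef
  -- per-index moments
  have hXmeanκ : ∀ κ, ∫ ω, X κ ω ∂μ = 0 := fun κ => (hXid κ).integral_eq.trans hXmean
  have hYmeanκ : ∀ κ, ∫ ω, Y κ ω ∂μ = 0 := fun κ => (hYid κ).integral_eq.trans hYmean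
  have hXvarκ : ∀ κ, ∫ ω, X κ ω ^ 2 ∂μ = 1 := fun κ =>
    (((hXid κ).comp (measurable_id.pow_const 2)).integral_eq).trans hXvar
  have hYvarκ : ∀ κ, ∫ ω, Y κ ω ^ 2 ∂μ = 1 := fun κ =>
    (((hYid κ).comp (measurable_id.pow_const 2)).integral_eq).trans hYvar
  have hX3κ : ∀ κ, MemLp (X κ) 3 μ := fun κ => (hXid κ).symm.memLp_snd hX3
  have hY3κ : ∀ κ, MemLp (Y κ) 3 μ := fun κ => (hYid κ).symm.memLp_snd hY3
  have hXcubeκ : ∀ κ, ∫ ω, |X κ ω| ^ 3 ∂μ ≤ γ := fun κ =>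
    le_of_eq_of_le (((hXid κ).comp (measurable_abs.pow_const 3)).integral_eq) hγX
  have hYcubeκ : ∀ κ, ∫ ω, |Y κ ω| ^ 3 ∂μ ≤ γ := fun κ =>
    le_of_eq_of_le (((hYid κ).comp (measurable_abs.pow_const 3)).integral_eq) hγY
  -- hybrid processes
  set Z : ℕ → Fin n → Ω → ℝ := fun k j ω => if (j : ℕ) < k then Y j ω else X j ω
    with hZdef
  set SV : ℕ → Ω → Fin n → ℝ := fun k ω i => c * ∑ j ∈ Finset.Iic i, Z k j ω
    with hSVdef
  set f : (Fin n → ℝ) → ℝ :=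
    fun v => g (Real.log (∑ i, Real.exp (t * v i)) / t) with hfdef
  set Φ : ℕ → ℝ := fun k => ∫ ω, f (SV k ω) ∂μ with hΦdef
  have hZm : ∀ k j, Measurable (Z k j) := by
    intro k j
    rw [hZdef]
    by_cases h : (j : ℕ) < k
    · simpa [h] using hYmeas j
    · simpa [h] using hXmeas j
  have hZint : ∀ k j, Integrable (Z k j) μ := by
    intro k j
    rw [hZdef]
    by_cases h : (j : ℕ) < k
    · simpa [h] using (hmom3 _ (hYmeas j) (hY3κ j)).1
    · simpa [h] using (hmom3 _ (hXmeas j) (hX3κ j)).1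
  have hSVim : ∀ k i, Measurable (fun ω => SV k ω i) := by
    intro k i
    exact (Finset.measurable_sum _ (fun j _ => hZm k j)).const_mul c
  have hfSVm : ∀ k, Measurable (fun ω => f (SV k ω)) := by
    intro k
    apply hg0.continuous.measurable.comp
    apply Measurable.div_const
    apply Measurable.log
    exact Finset.measurable_sum _ (fun i _ => ((hSVim k i).const_mul t).exp)
  have hLt : 0 ≤ L / t := le_of_lt (div_pos hL ht)
  -- pointwise bound for f
  have hfbound : ∀ v : Fin n → ℝ,
      |f v| ≤ |g 0| + B1 * (L / t) + B1 * ∑ i, |v i| := by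
    intro v
    obtain ⟨hs1, hs2⟩ := sandwich hn0 ht v
    have habs : |Real.log (∑ i, Real.exp (t * v i)) / t| ≤ (∑ i, |v i|) + L / t := by
      have h1 := sup_abs_le hn0 v
      rw [abs_le] at h1 ⊢
      constructor
      · have : -(∑ i, |v i|) ≤ ⨆ i, v i := by linarith [h1.1]
        linarith
      · linarith [h1.2]
    have hlip := glip hg0 hB1 (Real.log (∑ i, Real.exp (t * v i)) / t) 0
    calc |f v| = |g (Real.log (∑ i, Real.exp (t * v i)) / t) - g 0 + g 0| := by
          rw [hfdef]; ring_nf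
    _ ≤ |g (Real.log (∑ i, Real.exp (t * v i)) / t) - g 0| + |g 0| := abs_add_le _ _
    _ ≤ B1 * |Real.log (∑ i, Real.exp (t * v i)) / t - 0| + |g 0| := by
          linarith [hlip]
    _ ≤ B1 * ((∑ i, |v i|) + L / t) + |g 0| := by
          rw [sub_zero]
          have := mul_le_mul_of_nonneg_left habs hB1nn
          linarith
    _ = |g 0| + B1 * (L / t) + B1 * ∑ i, |v i| := by ring
  -- integrability of f ∘ SV
  have hfint : ∀ k, Integrable (fun ω => f (SV k ω)) μ := by
    intro k
    have hdom : Integrable (fun ω =>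
        |g 0| + B1 * (L / t) + B1 * ∑ i, |SV k ω i|) μ := by
      apply Integrable.add (integrable_const _)
      apply Integrable.const_mul
      apply integrable_finset_sum
      intro i _
      exact ((integrable_finset_sum _ (fun j _ => hZint k j)).const_mul c).abs
    refine hdom.mono' ((hfSVm k).aestronglyMeasurable)
      (Filter.Eventually.of_forall fun ω => ?_)
    rw [Real.norm_eq_abs]
    exact hfbound (SV k ω)
  -- endpoints
  have hZ0 : ∀ j ω, Z 0 j ω = X j ω := by
    intro j ω; rw [hZdef]; simp
  have hZn : ∀ j ω, Z n j ω = Y j ω := by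
    intro j ω; rw [hZdef]; simp [j.isLt]
  -- distance from g ∘ sup to f at the endpoints
  have hend : ∀ (k : ℕ) (V : Fin n → Ω → ℝ), (∀ j ω, Z k j ω = V j ω) →
      Integrable (fun ω => g (⨆ i : Fin n, c * ∑ j ∈ Finset.Iic i, V j ω)) μ ∧
      |(∫ ω, g (⨆ i : Fin n, c * ∑ j ∈ Finset.Iic i, V j ω) ∂μ) - Φ k|
        ≤ B1 * (L / t) := by
    intro k V hZV
    have hSVeq : ∀ ω i, SV k ω i = c * ∑ j ∈ Finset.Iic i, V j ω := by
      intro ω i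
      rw [hSVdef]
      simp only
      exact congrArg (c * ·) (Finset.sum_congr rfl fun j _ => hZV j ω)
    have hptw : ∀ ω, |g (⨆ i : Fin n, c * ∑ j ∈ Finset.Iic i, V j ω) - f (SV k ω)|
        ≤ B1 * (L / t) := by
      intro ω
      obtain ⟨hs1, hs2⟩ := sandwich hn0 ht (SV k ω)
      have hsup : (⨆ i : Fin n, c * ∑ j ∈ Finset.Iic i, V j ω) = ⨆ i, SV k ω i := by
        congr 1
        funext i
        rw [hSVeq ω i]
      rw [hsup]
      calc |g (⨆ i, SV k ω i) - f (SV k ω)|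
          ≤ B1 * |(⨆ i, SV k ω i) - Real.log (∑ i, Real.exp (t * SV k ω i)) / t| :=
            glip hg0 hB1 _ _
      _ ≤ B1 * (L / t) := by
            apply mul_le_mul_of_nonneg_left _ hB1nn
            rw [abs_le]
            constructor <;> [linarith; linarith]
    have hdiffint : Integrable (fun ω =>
        g (⨆ i : Fin n, c * ∑ j ∈ Finset.Iic i, V j ω) - f (SV k ω)) μ := by
      refine (integrable_const (B1 * (L / t))).mono' ?_
        (Filter.Eventually.of_forall fun ω => by
          rw [Real.norm_eq_abs]; exact hptw ω)
      apply AEStronglyMeasurable.sub _ (hfSVm k).aestronglyMeasurable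
      apply Measurable.aestronglyMeasurable
      apply hg0.continuous.measurable.comp
      apply Measurable.iSup
      intro i
      exact (Finset.measurable_sum _ (fun j _ => by
        have hm := hZm k j
        rwa [show Z k j = V j from funext (hZV j)] at hm)).const_mul c
    have hgUint : Integrable
        (fun ω => g (⨆ i : Fin n, c * ∑ j ∈ Finset.Iic i, V j ω)) μ := by
      have : (fun ω => g (⨆ i : Fin n, c * ∑ j ∈ Finset.Iic i, V j ω))
          = fun ω => (g (⨆ i : Fin n, c * ∑ j ∈ Finset.Iic i, V j ω) - f (SV k ω))
            + f (SV k ω) := by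
        funext ω; ring
      rw [this]
      exact hdiffint.add (hfint k)
    refine ⟨hgUint, ?_⟩
    rw [hΦdef]
    simp only
    rw [← integral_sub hgUint (hfint k)]
    calc |∫ ω, (g (⨆ i : Fin n, c * ∑ j ∈ Finset.Iic i, V j ω) - f (SV k ω)) ∂μ|
        ≤ ∫ ω, |g (⨆ i : Fin n, c * ∑ j ∈ Finset.Iic i, V j ω) - f (SV k ω)| ∂μ := by
          have := norm_integral_le_integral_norm (μ := μ)
            (f := fun ω => g (⨆ i : Fin n, c * ∑ j ∈ Finset.Iic i, V j ω) - f (SV k ω))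
          simpa [Real.norm_eq_abs] using this
    _ ≤ ∫ _ω, B1 * (L / t) ∂μ :=
          integral_mono hdiffint.abs (integrable_const _)
            (fun ω => hptw ω)
    _ = B1 * (L / t) := by simp
  -- the swap bound
  have hswap : ∀ k, k < n → |Φ k - Φ (k + 1)| ≤ M * c ^ 3 * (2 * γ) := by
    intro k hk
    set κ : Fin n := ⟨k, hk⟩ with hκdef
    have hκval : (κ : ℕ) = k := rfl
    set A : Ω → ℝ := fun ω => ∑ i ∈ Finset.univ.filter (fun i : Fin n => i < κ),
        Real.exp (t * SV k ω i) with hAdef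
    set Bf : Ω → ℝ := fun ω => ∑ i ∈ Finset.univ.filter (fun i : Fin n => κ ≤ i),
        Real.exp (t * (c * ∑ j ∈ (Finset.Iic i).erase κ, Z k j ω)) with hBdef
    set AB : Ω → ℝ × ℝ := fun ω => (A ω, Bf ω) with hABdef
    have hA0 : ∀ ω, 0 ≤ (AB ω).1 := by
      intro ω
      simp only [hABdef, hAdef]
      exact Finset.sum_nonneg fun i _ => (Real.exp_pos _).le
    have hB0 : ∀ ω, 0 < (AB ω).2 := by
      intro ω
      simp only [hABdef, hBdef]
      refine Finset.sum_pos (fun i _ => Real.exp_pos _) ⟨κ, ?_⟩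
      simp
    have hABm : Measurable AB := by
      rw [hABdef]
      apply Measurable.prodMk
      · simp only [hAdef]
        exact Finset.measurable_sum _ (fun i _ => ((hSVim k i).const_mul t).exp)
      · simp only [hBdef]
        refine Finset.measurable_sum _ (fun i _ => ?_)
        exact (((Finset.measurable_sum _ (fun j _ => hZm k j)).const_mul c).const_mul
          t).exp
    -- key sum identity
    have hkey : ∀ (m : ℕ) (ω : Ω) (r : ℝ), (∀ j : Fin n, j ≠ κ → Z m j ω = Z k j ω) →
        Z m κ ω = r →
        (∑ i, Real.exp (t * SV m ω i)) = A ω + Bf ω * Real.exp (t * (c * r)) := by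
      intro m ω r hoff hκr
      have hsplit := Finset.sum_filter_add_sum_filter_not (Finset.univ : Finset (Fin n))
        (fun i => i < κ) (fun i => Real.exp (t * SV m ω i))
      have e1 : ∑ i ∈ Finset.univ.filter (fun i : Fin n => i < κ),
          Real.exp (t * SV m ω i) = A ω := by
        rw [hAdef]
        refine Finset.sum_congr rfl fun i hi => ?_
        rw [Finset.mem_filter] at hi
        have : SV m ω i = SV k ω i := by
          rw [hSVdef]
          simp only
          refine congrArg (c * ·) (Finset.sum_congr rfl fun j hj => ?_)
          rw [Finset.mem_Iic] at hj
          exact hoff j (ne_of_lt (lt_of_le_of_lt hj hi.2))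
        rw [this]
      have e2 : ∑ i ∈ Finset.univ.filter (fun i : Fin n => ¬i < κ),
          Real.exp (t * SV m ω i) = Bf ω * Real.exp (t * (c * r)) := by
        have hfe : Finset.univ.filter (fun i : Fin n => ¬i < κ)
            = Finset.univ.filter (fun i : Fin n => κ ≤ i) := by
          apply Finset.filter_congr
          intro i _
          simp [not_lt]
        rw [hfe, hBdef]
        simp only
        rw [Finset.sum_mul]
        refine Finset.sum_congr rfl fun i hi => ?_
        rw [Finset.mem_filter] at hi
        have hκmem : κ ∈ Finset.Iic i := Finset.mem_Iic.2 hi.2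
        have hsum : ∑ j ∈ Finset.Iic i, Z m j ω
            = (∑ j ∈ (Finset.Iic i).erase κ, Z k j ω) + r := by
          rw [← Finset.sum_erase_add _ _ hκmem, hκr]
          congr 1
          refine Finset.sum_congr rfl fun j hj => ?_
          exact hoff j (Finset.mem_erase.1 hj).1
        rw [hSVdef]
        simp only
        rw [hsum, ← Real.exp_add]
        congr 1
        ring
      rw [← hsplit, e1, e2]
    have hZkκ : ∀ ω, Z k κ ω = X κ ω := by
      intro ω; rw [hZdef]; simp [hκval]
    have hZk1κ : ∀ ω, Z (k + 1) κ ω = Y κ ω := by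
      intro ω; rw [hZdef]; simp [hκval]
    have hZoff : ∀ (j : Fin n), j ≠ κ → ∀ ω, Z (k + 1) j ω = Z k j ω := by
      intro j hj ω
      have hne : (j : ℕ) ≠ k := fun hc => hj (Fin.ext hc)
      rw [hZdef]
      by_cases h : (j : ℕ) < k
      · simp [h, Nat.lt_succ_of_lt h]
      · have h' : ¬(j : ℕ) < k + 1 := by omega
        simp [h, h']
    have hfXκ : ∀ ω, f (SV k ω)
        = g (Real.log ((AB ω).1 + (AB ω).2 * Real.exp (t * (c * X κ ω))) / t) := by
      intro ω
      rw [hfdef]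
      simp only
      rw [hkey k ω (X κ ω) (fun j _ => rfl) (hZkκ ω)]
    have hfYκ : ∀ ω, f (SV (k + 1) ω)
        = g (Real.log ((AB ω).1 + (AB ω).2 * Real.exp (t * (c * Y κ ω))) / t) := by
      intro ω
      rw [hfdef]
      simp only
      rw [hkey (k + 1) ω (Y κ ω) (fun j hj => hZoff j hj ω) (hZk1κ ω)]
    -- independence
    have hWm : ∀ s, Measurable (Sum.elim X Y s) := by
      rintro (a | a)
      · exact hXmeas a
      · exact hYmeas a
    set T : Finset (Fin n ⊕ Fin n) :=
      Finset.univ \ {Sum.inl κ, Sum.inr κ} with hTdef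
    have hmemr : ∀ j : Fin n, (j : ℕ) < k → Sum.inr j ∈ T := by
      intro j hj
      rw [hTdef]
      simp only [Finset.mem_sdiff, Finset.mem_univ, true_and, Finset.mem_insert,
        Finset.mem_singleton]
      push_neg
      exact ⟨fun hc => by simp at hc, fun hc => by
        have : (j : ℕ) = k := by rw [Sum.inr.injEq] at hc; rw [hc]
        omega⟩
    have hmeml : ∀ j : Fin n, ¬(j : ℕ) < k → (j : ℕ) ≠ k → Sum.inl j ∈ T := by
      intro j h1 h2
      rw [hTdef]
      simp only [Finset.mem_sdiff, Finset.mem_univ, true_and, Finset.mem_insert,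
        Finset.mem_singleton]
      push_neg
      exact ⟨fun hc => by
        have : (j : ℕ) = k := by rw [Sum.inl.injEq] at hc; rw [hc]
        exact h2 this, fun hc => by simp at hc⟩
    set zf : ({x // x ∈ T} → ℝ) → Fin n → ℝ := fun v j =>
      if h1 : (j : ℕ) < k then v ⟨Sum.inr j, hmemr j h1⟩
      else if h2 : (j : ℕ) = k then 0
      else v ⟨Sum.inl j, hmeml j h1 h2⟩ with hzfdef
    set Φf : ({x // x ∈ T} → ℝ) → ℝ × ℝ := fun v =>
      (∑ i ∈ Finset.univ.filter (fun i : Fin n => i < κ),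
          Real.exp (t * (c * ∑ j ∈ Finset.Iic i, zf v j)),
        ∑ i ∈ Finset.univ.filter (fun i : Fin n => κ ≤ i),
          Real.exp (t * (c * ∑ j ∈ (Finset.Iic i).erase κ, zf v j))) with hΦfdef
    have hzfm : ∀ j, Measurable (fun v => zf v j) := by
      intro j
      rw [hzfdef]
      by_cases h1 : (j : ℕ) < k
      · simp only [dif_pos h1]
        exact measurable_pi_apply _
      · by_cases h2 : (j : ℕ) = k
        · simp only [dif_neg h1, dif_pos h2]
          exact measurable_const
        · simp only [dif_neg h1, dif_neg h2]
          exact measurable_pi_apply _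
    have hΦfm : Measurable Φf := by
      rw [hΦfdef]
      apply Measurable.prodMk <;>
        exact Finset.measurable_sum _ (fun i _ =>
          (((Finset.measurable_sum _ (fun j _ => hzfm j)).const_mul c).const_mul
            t).exp)
    have hzf_eq : ∀ (ω : Ω) (j : Fin n), j ≠ κ →
        zf (fun i : {x // x ∈ T} => Sum.elim X Y i.1 ω) j = Z k j ω := by
      intro ω j hj
      rw [hzfdef, hZdef]
      by_cases h1 : (j : ℕ) < k
      · simp [h1]
      · have h2 : (j : ℕ) ≠ k := fun hc => hj (Fin.ext hc)
        simp [h1, h2]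
    have hABeq : AB = fun ω => Φf (fun i : {x // x ∈ T} => Sum.elim X Y i.1 ω) := by
      funext ω
      rw [hΦfdef, hABdef]
      simp only
      refine Prod.ext ?_ ?_
      · rw [hAdef]
        simp only
        refine Finset.sum_congr rfl fun i hi => ?_
        rw [Finset.mem_filter] at hi
        congr 1
        rw [hSVdef]
        simp only
        refine congrArg (fun z => t * (c * z)) ?_
        refine (Finset.sum_congr rfl fun j hj => ?_).symm
        rw [Finset.mem_Iic] at hj
        exact hzf_eq ω j (ne_of_lt (lt_of_le_of_lt hj hi.2))
      · rw [hBdef]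
        simp only
        refine Finset.sum_congr rfl fun i hi => ?_
        congr 1
        refine congrArg (fun z => t * (c * z)) ?_
        refine (Finset.sum_congr rfl fun j hj => ?_).symm
        exact hzf_eq ω j (Finset.mem_erase.1 hj).1
    have hdisj1 : Disjoint T ({Sum.inl κ} : Finset (Fin n ⊕ Fin n)) := by
      refine Finset.disjoint_of_subset_right ?_ Finset.sdiff_disjoint
      intro x hx
      simp only [Finset.mem_singleton] at hx
      simp [hx]
    have hdisj2 : Disjoint T ({Sum.inr κ} : Finset (Fin n ⊕ Fin n)) := by
      refine Finset.disjoint_of_subset_right ?_ Finset.sdiff_disjoint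
      intro x hx
      simp only [Finset.mem_singleton] at hx
      simp [hx]
    have hiX : IndepFun AB (X κ) μ := by
      have hbase := hindep.indepFun_finset T {Sum.inl κ} hdisj1 hWm
      have hcomp := hbase.comp hΦfm
        (measurable_pi_apply (⟨Sum.inl κ, Finset.mem_singleton_self _⟩ :
          {x // x ∈ ({Sum.inl κ} : Finset (Fin n ⊕ Fin n))}))
      rw [hABeq]
      exact hcomp
    have hiY : IndepFun AB (Y κ) μ := by
      have hbase := hindep.indepFun_finset T {Sum.inr κ} hdisj2 hWm
      have hcomp := hbase.comp hΦfm
        (measurable_pi_apply (⟨Sum.inr κ, Finset.mem_singleton_self _⟩ :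
          {x // x ∈ ({Sum.inr κ} : Finset (Fin n ⊕ Fin n))}))
      rw [hABeq]
      exact hcomp
    -- apply the swap lemma
    have hss := swap_step_s7 hg0 hg1 hg2 hB1 hB2' hB3' ht hc.le
      (hXmeas κ) (hYmeas κ) hABm hA0 hB0 hiX hiY (hX3κ κ) (hY3κ κ)
      ((hXmeanκ κ).trans (hYmeanκ κ).symm) ((hXvarκ κ).trans (hYvarκ κ).symm)
      (hXcubeκ κ) (hYcubeκ κ)
    have hIX : Integrable (fun ω =>
        g (Real.log ((AB ω).1 + (AB ω).2 * Real.exp (t * (c * X κ ω))) / t)) μ :=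
      (hfint k).congr (Filter.Eventually.of_forall hfXκ)
    have hIY : Integrable (fun ω =>
        g (Real.log ((AB ω).1 + (AB ω).2 * Real.exp (t * (c * Y κ ω))) / t)) μ :=
      (hfint (k + 1)).congr (Filter.Eventually.of_forall hfYκ)
    have hΦk : Φ k = ∫ ω,
        g (Real.log ((AB ω).1 + (AB ω).2 * Real.exp (t * (c * X κ ω))) / t) ∂μ := by
      rw [hΦdef]
      exact integral_congr_ae (Filter.Eventually.of_forall hfXκ)
    have hΦk1 : Φ (k + 1) = ∫ ω,
        g (Real.log ((AB ω).1 + (AB ω).2 * Real.exp (t * (c * Y κ ω))) / t) ∂μ := by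
      rw [hΦdef]
      exact integral_congr_ae (Filter.Eventually.of_forall hfYκ)
    rw [hΦk, hΦk1, ← integral_sub hIX hIY]
    exact hss
  -- endpoints & telescope
  have hMnn : 0 ≤ M := by
    rw [hMdef]
    positivity
  obtain ⟨hIUX, hendX⟩ := hend 0 X hZ0
  obtain ⟨hIUY, hendY⟩ := hend n Y hZn
  have htel : |Φ 0 - Φ n| ≤ (n : ℝ) * (M * c ^ 3 * (2 * γ)) := by
    rw [← Finset.sum_range_sub' Φ n]
    refine (Finset.abs_sum_le_sum_abs _ _).trans ?_
    calc ∑ k ∈ Finset.range n, |Φ k - Φ (k + 1)|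
        ≤ ∑ _k ∈ Finset.range n, M * c ^ 3 * (2 * γ) :=
          Finset.sum_le_sum fun k hk => hswap k (Finset.mem_range.1 hk)
    _ = (n : ℝ) * (M * c ^ 3 * (2 * γ)) := by
        rw [Finset.sum_const, Finset.card_range, nsmul_eq_mul]
  have hre : ∀ (x : ℝ), 0 < x → ∀ p q : ℝ, x ^ p * x ^ q = x ^ (p + q) :=
    fun x hx p q => (Real.rpow_add hx p q).symm
  have hc3n : (n : ℝ) * c ^ 3 = (n : ℝ) ^ (-(1:ℝ)/2) := by
    have h1 : c = (n : ℝ) ^ (-((1:ℝ)/2)) := by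
      rw [hcdef, Real.sqrt_eq_rpow, Real.rpow_neg hnRpos.le]
    rw [h1, ← Real.rpow_natCast ((n : ℝ) ^ (-((1:ℝ)/2))) 3,
      ← Real.rpow_mul hnRpos.le]
    nth_rewrite 1 [← Real.rpow_one (n : ℝ)]
    rw [hre (n : ℝ) hnRpos]
    norm_num
  have htri : |(∫ ω, g (⨆ i : Fin n, c * ∑ j ∈ Finset.Iic i, X j ω) ∂μ)
      - ∫ ω, g (⨆ i : Fin n, c * ∑ j ∈ Finset.Iic i, Y j ω) ∂μ|
      ≤ B1 * (L / t) + (n : ℝ) * (M * c ^ 3 * (2 * γ)) + B1 * (L / t) := by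
    rw [show (∫ ω, g (⨆ i : Fin n, c * ∑ j ∈ Finset.Iic i, X j ω) ∂μ)
        - ∫ ω, g (⨆ i : Fin n, c * ∑ j ∈ Finset.Iic i, Y j ω) ∂μ
      = ((∫ ω, g (⨆ i : Fin n, c * ∑ j ∈ Finset.Iic i, X j ω) ∂μ) - Φ 0)
        + (Φ 0 - Φ n)
        + (Φ n - ∫ ω, g (⨆ i : Fin n, c * ∑ j ∈ Finset.Iic i, Y j ω) ∂μ) from by ring]
    refine ((abs_add_le _ _).trans (add_le_add_left (abs_add_le _ _) _)).trans ?_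
    refine add_le_add (add_le_add hendX htel) ?_
    rw [abs_sub_comm]
    exact hendY
  have harith := final_arith hγpos hnRpos hL hB1nn hB2nn hB3nn htdef
  calc |(∫ ω, g (⨆ i : Fin n, c * ∑ j ∈ Finset.Iic i, X j ω) ∂μ)
      - ∫ ω, g (⨆ i : Fin n, c * ∑ j ∈ Finset.Iic i, Y j ω) ∂μ|
      ≤ B1 * (L / t) + (n : ℝ) * (M * c ^ 3 * (2 * γ)) + B1 * (L / t) := htri
  _ = 2 * (B1 * (L / t)) + ((n : ℝ) * c ^ 3) * (M * (2 * γ)) := by ring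
  _ = 2 * (B1 * (L / t))
      + (n : ℝ) ^ (-(1:ℝ)/2) * ((B3 + 3 * t * B2 + t ^ 2 * B1) * (2 * γ)) := by
      rw [hc3n, hMdef]
  _ ≤ (19 / 3 * B1 + 13 * B2 + 13 / 3 * B3) *
      (γ ^ ((1:ℝ)/3) * (n : ℝ) ^ (-(1:ℝ)/6) * L ^ ((2:ℝ)/3)
        + γ * (n : ℝ) ^ (-(1:ℝ)/2)) := harith
end

section
/- Fix z = u + iv ∈ ℂ with v ≠ 0 and N ≥ 1, and let f : ℝⁿ → ℂ (n = N(N+1)/2) be the Stieltjes transform map f(x) := N⁻¹ tr((A(x) − zI)⁻¹), where A(x) is the N×N real symmetric matrix with (i,j) entry N^{-1/2} x_{ij} for i ≤ j. Then for all x and all 1 ≤ i ≤ j ≤ N: |∂f/∂x_{ij}(x)| ≤ 2 |v|⁻² N^{-3/2}, |∂²f/∂x_{ij}²(x)| ≤ 4 |v|⁻³ N⁻², and |∂³f/∂x_{ij}³(x)| ≤ 12 |v|⁻⁴ N^{-5/2}. -/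
open MeasureTheory ProbabilityTheory

/-- The Wigner matrix map: `A(x)` has `(a,b)` entry `N^{-1/2} x_{ab}` for `a ≤ b`
and `N^{-1/2} x_{ba}` for `a > b` (viewed as a complex matrix). -/
noncomputable def wignerMatrix (N : ℕ) (x : Fin N × Fin N → ℝ) :
    Matrix (Fin N) (Fin N) ℂ :=
  fun a b => ((Real.sqrt N)⁻¹ * (if a ≤ b then x (a, b) else x (b, a)) : ℝ)

/-- The resolventW `G(x) = (A(x) - zI)⁻¹`. -/
noncomputable def resolventW (N : ℕ) (z : ℂ) (x : Fin N × Fin N → ℝ) :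
    Matrix (Fin N) (Fin N) ℂ :=
  (wignerMatrix N x - z • (1 : Matrix (Fin N) (Fin N) ℂ))⁻¹

/-- The Stieltjes transform `f(x) = N⁻¹ tr((A(x) - zI)⁻¹)`. -/
noncomputable def stieltjes (N : ℕ) (z : ℂ) (x : Fin N × Fin N → ℝ) : ℂ :=
  (N : ℂ)⁻¹ * Matrix.trace (resolventW N z x)

/-- `∂A/∂x_{ij}`: the matrix with `N^{-1/2}` in positions `(i,j)` and `(j,i)`,
and `0` elsewhere. -/
noncomputable def dA (N : ℕ) (i j : Fin N) : Matrix (Fin N) (Fin N) ℂ :=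
  fun a b => if (a, b) = (i, j) ∨ (a, b) = (j, i) then ((Real.sqrt N)⁻¹ : ℝ) else 0

/-- The `p`-fold partial derivative in the coordinate `q` of a complex-valued
function of the variables `(x_{ij})`. -/
noncomputable def pderivC (N : ℕ) (f : (Fin N × Fin N → ℝ) → ℂ)
    (q : Fin N × Fin N) (p : ℕ) (x : Fin N × Fin N → ℝ) : ℂ :=
  iteratedDeriv p (fun t => f (Function.update x q t)) (x q)

namespace Stmt9Aux

attribute [local instance] Matrix.linftyOpNormedAddCommGroup Matrix.linftyOpNormedRing
  Matrix.linftyOpNormedAlgebra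

variable {N : ℕ} {z : ℂ}

/-- squared ℓ² norm of a complex vector -/
noncomputable def n2 (v : Fin N → ℂ) : ℝ := ∑ a, ‖v a‖ ^ 2

lemma n2_nonneg (v : Fin N → ℂ) : 0 ≤ n2 v :=
  Finset.sum_nonneg fun _ _ => sq_nonneg _

lemma n2_eq_zero {v : Fin N → ℂ} (h : n2 v = 0) : v = 0 := by
  funext a
  have := (Finset.sum_eq_zero_iff_of_nonneg (fun b _ => sq_nonneg (‖v b‖))).1 h a
    (Finset.mem_univ a)
  simpa [pow_eq_zero_iff] using this

/-- operator-norm-style bound predicate -/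
def OpB (M : Matrix (Fin N) (Fin N) ℂ) (C : ℝ) : Prop :=
  0 ≤ C ∧ ∀ v, n2 (M.mulVec v) ≤ C ^ 2 * n2 v

lemma OpB.mul {M M' : Matrix (Fin N) (Fin N) ℂ} {C C' : ℝ}
    (h : OpB M C) (h' : OpB M' C') : OpB (M * M') (C * C') := by
  refine ⟨mul_nonneg h.1 h'.1, fun v => ?_⟩
  rw [← Matrix.mulVec_mulVec]
  calc n2 (M.mulVec (M'.mulVec v)) ≤ C ^ 2 * n2 (M'.mulVec v) := h.2 _
    _ ≤ C ^ 2 * (C' ^ 2 * n2 v) := mul_le_mul_of_nonneg_left (h'.2 v) (sq_nonneg _)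
    _ = (C * C') ^ 2 * n2 v := by ring

lemma OpB.entry {M : Matrix (Fin N) (Fin N) ℂ} {C : ℝ} (h : OpB M C) (a b : Fin N) :
    ‖M a b‖ ≤ C := by
  have h1 := h.2 (Pi.single b 1)
  have hn : n2 (Pi.single b (1:ℂ)) = 1 := by
    simp [n2, Pi.single_apply, apply_ite]
  rw [hn, mul_one, Matrix.mulVec_single] at h1
  have h2 : ‖M a b‖ ^ 2 ≤ C ^ 2 := by
    refine le_trans ?_ h1
    have := Finset.single_le_sum (f := fun a' => ‖M a' b * 1‖ ^ 2)
      (fun a' _ => sq_nonneg _) (Finset.mem_univ a)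
    simpa [n2] using this
  have := Real.sqrt_le_sqrt h2
  rwa [Real.sqrt_sq (norm_nonneg _), Real.sqrt_sq h.1] at this

/-- Cauchy–Schwarz -/
lemma abs_inner_le (u w : Fin N → ℂ) :
    ‖∑ a, (starRingEnd ℂ) (u a) * w a‖ ≤
      Real.sqrt (n2 u) * Real.sqrt (n2 w) := by
  calc ‖∑ a, (starRingEnd ℂ) (u a) * w a‖
      ≤ ∑ a, ‖u a‖ * ‖w a‖ := by
        refine le_trans (norm_sum_le _ _) (le_of_eq ?_)
        simp [map_mul]
    _ ≤ Real.sqrt (n2 u) * Real.sqrt (n2 w) := by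
        have h := Finset.sum_mul_sq_le_sq_mul_sq Finset.univ
          (fun a => ‖u a‖) (fun a => ‖w a‖)
        have h0 : (0:ℝ) ≤ ∑ a, ‖u a‖ * ‖w a‖ :=
          Finset.sum_nonneg fun a _ => mul_nonneg (norm_nonneg _) (norm_nonneg _)
        have h1 := Real.sqrt_le_sqrt h
        rw [Real.sqrt_sq h0] at h1
        rw [show (∑ i : Fin N, ‖u i‖ ^ 2) = n2 u from rfl,
          show (∑ i : Fin N, ‖w i‖ ^ 2) = n2 w from rfl,
          Real.sqrt_mul (n2_nonneg u)] at h1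
        exact h1

lemma wigner_conj (y : Fin N × Fin N → ℝ) (a b : Fin N) :
    (starRingEnd ℂ) (wignerMatrix N y a b) = wignerMatrix N y a b :=
  Complex.conj_ofReal _

lemma wigner_symm (y : Fin N × Fin N → ℝ) (a b : Fin N) :
    wignerMatrix N y a b = wignerMatrix N y b a := by
  unfold wignerMatrix
  rcases le_or_gt a b with h | h
  · rcases eq_or_lt_of_le h with rfl | h'
    · rfl
    · simp [h, not_le.2 h']
  · simp [not_le.2 h, h.le]

lemma im_inner_A (y : Fin N × Fin N → ℝ) (u : Fin N → ℂ) :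
    (∑ a, (starRingEnd ℂ) (u a) * ((wignerMatrix N y).mulVec u) a).im = 0 := by
  have hs : (∑ a, (starRingEnd ℂ) (u a) * ((wignerMatrix N y).mulVec u) a) =
      ∑ a, ∑ b, (starRingEnd ℂ) (u a) * wignerMatrix N y a b * u b := by
    simp [Matrix.mulVec, dotProduct, Finset.mul_sum, mul_assoc]
  rw [hs, ← Complex.conj_eq_iff_im]
  calc (starRingEnd ℂ) (∑ a, ∑ b, (starRingEnd ℂ) (u a) * wignerMatrix N y a b * u b)
      = ∑ a, ∑ b, u a * wignerMatrix N y a b * (starRingEnd ℂ) (u b) := by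
        simp [map_sum, map_mul, Complex.conj_conj, wigner_conj]
    _ = ∑ b, ∑ a, u a * wignerMatrix N y a b * (starRingEnd ℂ) (u b) := by
        rw [Finset.sum_comm]
    _ = ∑ a, ∑ b, (starRingEnd ℂ) (u a) * wignerMatrix N y a b * u b := by
        refine Finset.sum_congr rfl fun a _ => Finset.sum_congr rfl fun b _ => ?_
        rw [wigner_symm]; ring

lemma im_inner (y : Fin N × Fin N → ℝ) (u : Fin N → ℂ) :
    (∑ a, (starRingEnd ℂ) (u a) *
      ((wignerMatrix N y - z • (1 : Matrix (Fin N) (Fin N) ℂ)).mulVec u) a).im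
      = -(z.im * n2 u) := by
  have h1 : (wignerMatrix N y - z • (1 : Matrix (Fin N) (Fin N) ℂ)).mulVec u =
      (wignerMatrix N y).mulVec u - z • u := by
    rw [Matrix.sub_mulVec, Matrix.smul_mulVec, Matrix.one_mulVec]
  have h2 : (∑ a, (starRingEnd ℂ) (u a) * (z • u) a) = z * ((n2 u : ℝ) : ℂ) := by
    have he : ∀ a, (starRingEnd ℂ) (u a) * (z • u) a
        = z * (((‖u a‖) ^ 2 : ℝ) : ℂ) := by
      intro a
      simp only [Pi.smul_apply, smul_eq_mul]
      rw [show (starRingEnd ℂ) (u a) * (z * u a) = z * ((starRingEnd ℂ) (u a) * u a) by ring]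
      congr 1
      rw [← Complex.normSq_eq_conj_mul_self, Complex.sq_norm]
    rw [Finset.sum_congr rfl fun a _ => he a, ← Finset.mul_sum]
    congr 1
    rw [n2]
    push_cast
    rfl
  rw [h1]
  simp only [Pi.sub_apply, mul_sub, Finset.sum_sub_distrib]
  rw [Complex.sub_im, im_inner_A, h2]
  simp [Complex.mul_im]

lemma key (y : Fin N × Fin N → ℝ) (u : Fin N → ℂ) :
    |z.im| * n2 u ≤ Real.sqrt (n2 u) *
      Real.sqrt (n2 ((wignerMatrix N y - z • (1 : Matrix (Fin N) (Fin N) ℂ)).mulVec u)) := by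
  have h := im_inner (z := z) y u
  have h1 : |z.im| * n2 u =
      |(∑ a, (starRingEnd ℂ) (u a) *
        ((wignerMatrix N y - z • (1 : Matrix (Fin N) (Fin N) ℂ)).mulVec u) a).im| := by
    rw [h, abs_neg, abs_mul, abs_of_nonneg (n2_nonneg u)]
  rw [h1]
  exact le_trans (Complex.abs_im_le_norm _) (abs_inner_le _ _)

lemma phi_isUnit (hz : z.im ≠ 0) (y : Fin N × Fin N → ℝ) :
    IsUnit (wignerMatrix N y - z • (1 : Matrix (Fin N) (Fin N) ℂ)) := by
  rw [Matrix.isUnit_iff_isUnit_det _, isUnit_iff_ne_zero]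
  intro hdet
  obtain ⟨u, hu0, hu⟩ := (Matrix.exists_mulVec_eq_zero_iff.2 hdet)
  have hk := key (N := N) (z := z) y u
  rw [hu] at hk
  have : n2 (0 : Fin N → ℂ) = 0 := by simp [n2]
  rw [this, Real.sqrt_zero, mul_zero] at hk
  have hn : 0 < n2 u := by
    rcases lt_or_eq_of_le (n2_nonneg u) with h | h
    · exact h
    · exact absurd (n2_eq_zero h.symm) hu0
  nlinarith [abs_pos.2 hz]

lemma opB_resolvent (hz : z.im ≠ 0) (y : Fin N × Fin N → ℝ) :
    OpB ((wignerMatrix N y - z • (1 : Matrix (Fin N) (Fin N) ℂ))⁻¹) (|z.im|⁻¹) := by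
  refine ⟨inv_nonneg.2 (abs_nonneg _), fun w => ?_⟩
  set Φ := wignerMatrix N y - z • (1 : Matrix (Fin N) (Fin N) ℂ) with hΦ
  set u := Φ⁻¹.mulVec w with hu
  have hdet : IsUnit Φ.det := (Matrix.isUnit_iff_isUnit_det _).1 (phi_isUnit hz y)
  have hw : Φ.mulVec u = w := by
    rw [hu, Matrix.mulVec_mulVec, Matrix.mul_nonsing_inv _ hdet, Matrix.one_mulVec]
  have hk := key (N := N) (z := z) y u
  rw [← hΦ, hw] at hk
  have hvpos : 0 < |z.im| := abs_pos.2 hz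
  rcases eq_or_lt_of_le (n2_nonneg u) with h0 | h0
  · rw [← h0]
    exact mul_nonneg (by positivity) (n2_nonneg w)
  · have h4 : |z.im| ^ 2 * n2 u ≤ n2 w := by
      nlinarith [hk, sq_nonneg (|z.im| * Real.sqrt (n2 u) - Real.sqrt (n2 w)),
        Real.sq_sqrt (n2_nonneg u), Real.sq_sqrt (n2_nonneg w),
        Real.sqrt_nonneg (n2 u), Real.sqrt_nonneg (n2 w),
        mul_le_mul_of_nonneg_left hk (abs_nonneg z.im)]
    rw [inv_pow, inv_mul_eq_div, le_div_iff₀ (by positivity)]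
    nlinarith [h4]

lemma dA_mulVec (i j : Fin N) (v : Fin N → ℂ) (a : Fin N) :
    (dA N i j).mulVec v a
      = (((Real.sqrt N)⁻¹ : ℝ) : ℂ) * (if a = i then v j else if a = j then v i else 0) := by
  rw [Matrix.mulVec, dotProduct]
  by_cases hai : a = i
  · subst hai
    by_cases haj : a = j
    · subst haj
      simp [dA, Prod.ext_iff, Finset.sum_ite_eq, ite_mul, zero_mul]
    · simp [dA, Prod.ext_iff, Ne.symm haj, Finset.sum_ite_eq, ite_mul, zero_mul, haj]
  · by_cases haj : a = j
    · subst haj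
      simp [dA, Prod.ext_iff, hai, Finset.sum_ite_eq, ite_mul, zero_mul, Ne.symm hai]
    · simp [dA, Prod.ext_iff, hai, haj, Finset.sum_ite_eq, ite_mul, zero_mul]

lemma trace_dA_mul (i j : Fin N) (X : Matrix (Fin N) (Fin N) ℂ) :
    Matrix.trace (dA N i j * X)
      = (((Real.sqrt N)⁻¹ : ℝ) : ℂ) * (if i = j then X i i else X j i + X i j) := by
  have h : Matrix.trace (dA N i j * X) = ∑ a, ∑ b, dA N i j a b * X b a := by
    simp [Matrix.trace, Matrix.mul_apply, Matrix.diag]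
  rw [h]
  by_cases hij : i = j
  · subst hij
    simp [dA, Prod.ext_iff, ite_and, Finset.sum_ite_eq, Finset.sum_ite_eq', ite_mul, zero_mul]
  · have hsplit : ∀ a b : Fin N, dA N i j a b
        = (if (a, b) = (i, j) then (((Real.sqrt N)⁻¹ : ℝ) : ℂ) else 0)
          + (if (a, b) = (j, i) then (((Real.sqrt N)⁻¹ : ℝ) : ℂ) else 0) := by
      intro a b
      by_cases h1 : (a, b) = (i, j)
      · have h2 : ¬ (a, b) = (j, i) := by
          intro hc
          rw [h1, Prod.mk.injEq] at hc
          exact hij hc.1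
        simp [dA, h1, h2, hij]
      · by_cases h2 : (a, b) = (j, i)
        · have h1' : ¬ (a, b) = (i, j) := h1
          simp [dA, h1', h2, hij]
        · simp [dA, h1, h2, hij]
    simp only [hsplit, add_mul, Finset.sum_add_distrib]
    rw [if_neg hij, mul_add]
    congr 1
    · simp [Prod.ext_iff, ite_and, Finset.sum_ite_eq, ite_mul, zero_mul]
    · simp [Prod.ext_iff, ite_and, Finset.sum_ite_eq, ite_mul, zero_mul]

lemma opB_dA (i j : Fin N) : OpB (dA N i j) ((Real.sqrt N)⁻¹) := by
  refine ⟨inv_nonneg.2 (Real.sqrt_nonneg _), fun v => ?_⟩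
  set w : Fin N → ℂ := fun a => if a = i then v j else if a = j then v i else 0 with hw
  have h1 : n2 ((dA N i j).mulVec v)
      = ((Real.sqrt N)⁻¹) ^ 2 * ∑ a, ‖w a‖ ^ 2 := by
    rw [n2, Finset.mul_sum]
    refine Finset.sum_congr rfl fun a _ => ?_
    rw [dA_mulVec i j v a, norm_mul, mul_pow, Complex.norm_real, Real.norm_eq_abs,
      abs_of_nonneg (inv_nonneg.2 (Real.sqrt_nonneg _))]
  rw [h1]
  refine mul_le_mul_of_nonneg_left ?_ (sq_nonneg _)
  have hsub : ∑ a, ‖w a‖ ^ 2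
      = ∑ a ∈ ({i, j} : Finset (Fin N)), ‖w a‖ ^ 2 := by
    symm
    apply Finset.sum_subset (Finset.subset_univ _)
    intro a _ ha
    have hai : a ≠ i := fun h => ha (by simp [h])
    have haj : a ≠ j := fun h => ha (by simp [h])
    simp [hw, hai, haj]
  rw [hsub]
  by_cases hij : i = j
  · subst hij
    rw [show ({i, i} : Finset (Fin N)) = {i} by simp, Finset.sum_singleton]
    have : w i = v i := by simp [hw]
    rw [this]
    exact Finset.single_le_sum (f := fun a => ‖v a‖ ^ 2)
      (fun a _ => sq_nonneg _) (Finset.mem_univ i)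
  · rw [Finset.sum_pair hij]
    have hwi : w i = v j := by simp [hw]
    have hwj : w j = v i := by simp [hw, hij, Ne.symm hij]
    rw [hwi, hwj]
    have hle : ∑ a ∈ ({i, j} : Finset (Fin N)), ‖v a‖ ^ 2 ≤ n2 v := by
      apply Finset.sum_le_sum_of_subset_of_nonneg (Finset.subset_univ _)
      intro a _ _
      exact sq_nonneg _
    rw [Finset.sum_pair hij] at hle
    linarith

lemma abs_trace_dA_mul {C : ℝ} (hC : 0 ≤ C) (i j : Fin N) {X : Matrix (Fin N) (Fin N) ℂ}
    (hX : ∀ a b, ‖X a b‖ ≤ C) :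
    ‖Matrix.trace (dA N i j * X)‖ ≤ (Real.sqrt N)⁻¹ * (2 * C) := by
  rw [trace_dA_mul, norm_mul, Complex.norm_real, Real.norm_eq_abs,
    abs_of_nonneg (inv_nonneg.2 (Real.sqrt_nonneg _))]
  refine mul_le_mul_of_nonneg_left ?_ (inv_nonneg.2 (Real.sqrt_nonneg _))
  by_cases hij : i = j
  · rw [if_pos hij]
    calc ‖X i i‖ ≤ C := hX i i
      _ ≤ 2 * C := by linarith
  · rw [if_neg hij]
    calc ‖X j i + X i j‖ ≤ ‖X j i‖ + ‖X i j‖ :=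
          norm_add_le _ _
      _ ≤ 2 * C := by
          have h1 := hX j i
          have h2 := hX i j
          linarith

lemma wigner_update {i j : Fin N} (hij : i ≤ j) (x : Fin N × Fin N → ℝ) (t : ℝ) (a b : Fin N) :
    wignerMatrix N (Function.update x (i, j) t) a b
      = wignerMatrix N (Function.update x (i, j) 0) a b + t • dA N i j a b := by
  unfold wignerMatrix dA
  by_cases hab : a ≤ b
  · by_cases h1 : (a, b) = (i, j)
    · have h2 : ((a, b) = (i, j) ∨ (a, b) = (j, i)) := Or.inl h1
      rw [if_pos hab, if_pos hab, if_pos h2, Function.update_apply, Function.update_apply,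
        if_pos h1, if_pos h1]
      rw [Complex.real_smul]
      push_cast
      ring
    · have h2 : ¬ ((a, b) = (i, j) ∨ (a, b) = (j, i)) := by
        rintro (h | h)
        · exact h1 h
        · rw [Prod.mk.injEq] at h
          obtain ⟨ha, hb⟩ := h
          have hji : j ≤ i := by rw [← ha, ← hb]; exact hab
          have hieq : i = j := le_antisymm hij hji
          apply h1
          rw [Prod.mk.injEq]
          exact ⟨ha.trans hieq.symm, hb.trans hieq⟩
      rw [if_pos hab, if_pos hab, if_neg h2, Function.update_apply, Function.update_apply,
        if_neg h1, if_neg h1]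
      simp
  · by_cases h1 : (a, b) = (j, i)
    · have hba : (b, a) = (i, j) := by
        obtain ⟨ha, hb⟩ := Prod.ext_iff.1 h1
        rw [Prod.ext_iff]
        exact ⟨hb, ha⟩
      have h2 : ((a, b) = (i, j) ∨ (a, b) = (j, i)) := Or.inr h1
      rw [if_neg hab, if_neg hab, if_pos h2, Function.update_apply, Function.update_apply,
        if_pos hba, if_pos hba]
      rw [Complex.real_smul]
      push_cast
      ring
    · have hba : ¬ (b, a) = (i, j) := by
        intro hc
        obtain ⟨hb, ha⟩ := Prod.ext_iff.1 hc
        apply h1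
        rw [Prod.ext_iff]
        exact ⟨ha, hb⟩
      have h2 : ¬ ((a, b) = (i, j) ∨ (a, b) = (j, i)) := by
        rintro (h | h)
        · rw [Prod.mk.injEq] at h
          exact hab (by rw [h.1, h.2]; exact hij)
        · exact h1 h
      rw [if_neg hab, if_neg hab, if_neg h2, Function.update_apply, Function.update_apply,
        if_neg hba, if_neg hba]
      simp

theorem main {N : ℕ} (hN : 1 ≤ N) {z : ℂ} (hz : z.im ≠ 0)
    (x : Fin N × Fin N → ℝ) (i j : Fin N) (hij : i ≤ j) :
    ‖pderivC N (stieltjes N z) (i, j) 1 x‖ ≤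
      2 * (|z.im| ^ 2)⁻¹ * ((N : ℝ) ^ ((3 : ℝ) / 2))⁻¹ ∧
    ‖pderivC N (stieltjes N z) (i, j) 2 x‖ ≤
      4 * (|z.im| ^ 3)⁻¹ * ((N : ℝ) ^ 2)⁻¹ ∧
    ‖pderivC N (stieltjes N z) (i, j) 3 x‖ ≤
      12 * (|z.im| ^ 4)⁻¹ * ((N : ℝ) ^ ((5 : ℝ) / 2))⁻¹ := by
  classical
  have hNpos : (0:ℝ) < (N:ℝ) := by
    have : (0:ℕ) < N := lt_of_lt_of_le Nat.zero_lt_one hN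
    exact_mod_cast this
  have hspos : 0 < Real.sqrt N := Real.sqrt_pos.2 hNpos
  have hvpos : 0 < |z.im| := abs_pos.2 hz
  have hv0 : |z.im| ≠ 0 := ne_of_gt hvpos
  have hs0 : Real.sqrt N ≠ 0 := ne_of_gt hspos
  have hss : Real.sqrt N * Real.sqrt N = (N:ℝ) := Real.mul_self_sqrt hNpos.le
  set D : Matrix (Fin N) (Fin N) ℂ := dA N i j with hDdef
  set Φ : ℝ → Matrix (Fin N) (Fin N) ℂ :=
    fun t => wignerMatrix N (Function.update x (i, j) t) - z • 1 with hΦdef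
  have hΦdecomp : ∀ t : ℝ, Φ t = Φ 0 + t • D := by
    intro t
    ext a b
    simp only [hΦdef, Matrix.sub_apply, Matrix.add_apply, Matrix.smul_apply]
    rw [wigner_update hij x t a b]
    ring
  have hunit : ∀ t : ℝ, IsUnit (Φ t) := fun t => phi_isUnit hz _
  set G : ℝ → Matrix (Fin N) (Fin N) ℂ := fun t => (Φ t)⁻¹ with hGdef
  have hGder : ∀ t : ℝ, HasDerivAt G (-(G t * D * G t)) t := by
    intro t
    have hΦd : HasDerivAt Φ D t := by
      have h0 : HasDerivAt (fun u : ℝ => Φ 0 + u • D) D t := by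
        have h1 := (hasDerivAt_const t (Φ 0)).add ((hasDerivAt_id t).smul_const D)
        simp only [zero_add, one_smul] at h1
        exact h1
      exact h0.congr_of_eventuallyEq (Filter.Eventually.of_forall fun u => hΦdecomp u)
    have h := (hasFDerivAt_ringInverse (𝕜 := ℝ) (hunit t).unit).comp_hasDerivAt t hΦd
    have hfun : (Ring.inverse ∘ Φ) = G := by
      funext u
      simp [hGdef, Function.comp, Matrix.nonsing_inv_eq_ringInverse]
    rw [hfun] at h
    refine h.congr_deriv ?_
    simp [hGdef, ContinuousLinearMap.mulLeftRight_apply, Ring.inverse_unit, IsUnit.unit_spec,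
      Matrix.nonsing_inv_eq_ringInverse]
  have htr : ∀ (F : ℝ → Matrix (Fin N) (Fin N) ℂ) (F' : Matrix (Fin N) (Fin N) ℂ) (t : ℝ),
      HasDerivAt F F' t → HasDerivAt (fun u => Matrix.trace (F u)) (Matrix.trace F') t := by
    intro F F' t hF
    have h := (LinearMap.toContinuousLinearMap
      ((Matrix.traceLinearMap (Fin N) ℂ ℂ).restrictScalars ℝ)).hasFDerivAt.comp_hasDerivAt t hF
    exact h
  have hT1 : ∀ t : ℝ, HasDerivAt (fun u => G u * D * G u)
      (-(G t * D * G t * D * G t) + -(G t * D * G t * D * G t)) t := by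
    intro t
    have h := ((hGder t).mul_const D).mul (hGder t)
    refine h.congr_deriv ?_
    simp only [neg_mul, mul_neg, mul_assoc]
  have hT2 : ∀ t : ℝ, HasDerivAt (fun u => G u * D * G u * D * G u)
      (-(G t * D * G t * D * G t * D * G t) + -(G t * D * G t * D * G t * D * G t)
        + -(G t * D * G t * D * G t * D * G t)) t := by
    intro t
    have h := ((hT1 t).mul_const D).mul (hGder t)
    refine h.congr_deriv ?_
    simp only [neg_mul, mul_neg, add_mul, mul_assoc]
  have hg : ∀ t : ℝ, HasDerivAt (fun u => stieltjes N z (Function.update x (i, j) u))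
      (-((N:ℂ)⁻¹ * Matrix.trace (G t * D * G t))) t := by
    intro t
    have h := (htr _ _ t (hGder t)).const_mul ((N:ℂ)⁻¹)
    have hfun : (fun u => (N:ℂ)⁻¹ * Matrix.trace (G u))
        = fun u => stieltjes N z (Function.update x (i, j) u) := rfl
    rw [hfun] at h
    refine h.congr_deriv ?_
    rw [Matrix.trace_neg, mul_neg]
  have hg1 : ∀ t : ℝ, HasDerivAt (fun u => -((N:ℂ)⁻¹ * Matrix.trace (G u * D * G u)))
      (2 * ((N:ℂ)⁻¹ * Matrix.trace (G t * D * G t * D * G t))) t := by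
    intro t
    have h := ((htr _ _ t (hT1 t)).const_mul ((N:ℂ)⁻¹)).neg
    refine h.congr_deriv ?_
    rw [Matrix.trace_add, Matrix.trace_neg]
    ring
  have hg2 : ∀ t : ℝ, HasDerivAt
      (fun u => 2 * ((N:ℂ)⁻¹ * Matrix.trace (G u * D * G u * D * G u)))
      (-(6 * ((N:ℂ)⁻¹ * Matrix.trace (G t * D * G t * D * G t * D * G t)))) t := by
    intro t
    have h := ((htr _ _ t (hT2 t)).const_mul ((N:ℂ)⁻¹)).const_mul (2:ℂ)
    refine h.congr_deriv ?_
    rw [Matrix.trace_add, Matrix.trace_add, Matrix.trace_neg]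
    ring
  have hdg : deriv (fun u => stieltjes N z (Function.update x (i, j) u))
      = fun t => -((N:ℂ)⁻¹ * Matrix.trace (G t * D * G t)) := funext fun t => (hg t).deriv
  have hdg1 : deriv (fun t => -((N:ℂ)⁻¹ * Matrix.trace (G t * D * G t)))
      = fun t => 2 * ((N:ℂ)⁻¹ * Matrix.trace (G t * D * G t * D * G t)) :=
    funext fun t => (hg1 t).deriv
  have hdg2 : deriv (fun t => 2 * ((N:ℂ)⁻¹ * Matrix.trace (G t * D * G t * D * G t)))
      = fun t => -(6 * ((N:ℂ)⁻¹ * Matrix.trace (G t * D * G t * D * G t * D * G t))) :=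
    funext fun t => (hg2 t).deriv
  have e1 : pderivC N (stieltjes N z) (i, j) 1 x
      = -((N:ℂ)⁻¹ * Matrix.trace (G (x (i, j)) * D * G (x (i, j)))) := by
    show iteratedDeriv 1 (fun t => stieltjes N z (Function.update x (i, j) t)) (x (i, j)) = _
    rw [iteratedDeriv_one, hdg]
  have e2 : pderivC N (stieltjes N z) (i, j) 2 x
      = 2 * ((N:ℂ)⁻¹ * Matrix.trace (G (x (i, j)) * D * G (x (i, j)) * D * G (x (i, j)))) := by
    show iteratedDeriv 2 (fun t => stieltjes N z (Function.update x (i, j) t)) (x (i, j)) = _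
    rw [iteratedDeriv_succ, iteratedDeriv_one, hdg, hdg1]
  have e3 : pderivC N (stieltjes N z) (i, j) 3 x
      = -(6 * ((N:ℂ)⁻¹ * Matrix.trace
          (G (x (i, j)) * D * G (x (i, j)) * D * G (x (i, j)) * D * G (x (i, j))))) := by
    show iteratedDeriv 3 (fun t => stieltjes N z (Function.update x (i, j) t)) (x (i, j)) = _
    rw [iteratedDeriv_succ, iteratedDeriv_succ, iteratedDeriv_one, hdg, hdg1, hdg2]
  set B : Matrix (Fin N) (Fin N) ℂ := G (x (i, j)) with hBdef
  have hB : OpB B (|z.im|⁻¹) := opB_resolvent hz _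
  have hDb : OpB D ((Real.sqrt N)⁻¹) := opB_dA i j
  have hcnn : (0:ℝ) ≤ |z.im|⁻¹ := inv_nonneg.2 (abs_nonneg _)
  have hsnn : (0:ℝ) ≤ (Real.sqrt N)⁻¹ := inv_nonneg.2 (Real.sqrt_nonneg _)
  have hNinn : (0:ℝ) ≤ ((N:ℝ))⁻¹ := inv_nonneg.2 hNpos.le
  have hNabs : ‖(N:ℂ)⁻¹‖ = ((N:ℝ))⁻¹ := by
    rw [norm_inv, Complex.norm_natCast]
  have htrace1 : Matrix.trace (B * D * B) = Matrix.trace (dA N i j * (B * B)) := by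
    calc Matrix.trace (B * D * B) = Matrix.trace (B * (B * D)) := Matrix.trace_mul_comm _ _
      _ = Matrix.trace (B * B * D) := by rw [Matrix.mul_assoc]
      _ = Matrix.trace (dA N i j * (B * B)) := Matrix.trace_mul_comm _ _
  have htrace2 : Matrix.trace (B * D * B * D * B)
      = Matrix.trace (dA N i j * (B * (B * D * B))) := by
    calc Matrix.trace (B * D * B * D * B)
        = Matrix.trace (B * (B * D * B * D)) := Matrix.trace_mul_comm _ _
      _ = Matrix.trace (B * (B * D * B) * D) := by simp only [Matrix.mul_assoc]
      _ = Matrix.trace (dA N i j * (B * (B * D * B))) := Matrix.trace_mul_comm _ _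
  have htrace3 : Matrix.trace (B * D * B * D * B * D * B)
      = Matrix.trace (dA N i j * (B * (B * D * B * D * B))) := by
    calc Matrix.trace (B * D * B * D * B * D * B)
        = Matrix.trace (B * (B * D * B * D * B * D)) := Matrix.trace_mul_comm _ _
      _ = Matrix.trace (B * (B * D * B * D * B) * D) := by simp only [Matrix.mul_assoc]
      _ = Matrix.trace (dA N i j * (B * (B * D * B * D * B))) := Matrix.trace_mul_comm _ _
  have hW1 : OpB (B * B) (|z.im|⁻¹ * |z.im|⁻¹) := hB.mul hB
  have hW2 : OpB (B * (B * D * B))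
      (|z.im|⁻¹ * (|z.im|⁻¹ * (Real.sqrt N)⁻¹ * |z.im|⁻¹)) :=
    hB.mul ((hB.mul hDb).mul hB)
  have hW3 : OpB (B * (B * D * B * D * B))
      (|z.im|⁻¹ * (|z.im|⁻¹ * (Real.sqrt N)⁻¹ * |z.im|⁻¹ * (Real.sqrt N)⁻¹ * |z.im|⁻¹)) :=
    hB.mul ((((hB.mul hDb).mul hB).mul hDb).mul hB)
  have hb1 : ‖Matrix.trace (B * D * B)‖
      ≤ (Real.sqrt N)⁻¹ * (2 * (|z.im|⁻¹ * |z.im|⁻¹)) := by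
    rw [htrace1]
    exact abs_trace_dA_mul (mul_nonneg hcnn hcnn) i j (fun a b => hW1.entry a b)
  have hb2 : ‖Matrix.trace (B * D * B * D * B)‖
      ≤ (Real.sqrt N)⁻¹ * (2 * (|z.im|⁻¹ * (|z.im|⁻¹ * (Real.sqrt N)⁻¹ * |z.im|⁻¹))) := by
    rw [htrace2]
    exact abs_trace_dA_mul (by positivity) i j (fun a b => hW2.entry a b)
  have hb3 : ‖Matrix.trace (B * D * B * D * B * D * B)‖
      ≤ (Real.sqrt N)⁻¹ *
        (2 * (|z.im|⁻¹ * (|z.im|⁻¹ * (Real.sqrt N)⁻¹ * |z.im|⁻¹ * (Real.sqrt N)⁻¹ * |z.im|⁻¹))) := by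
    rw [htrace3]
    exact abs_trace_dA_mul (by positivity) i j (fun a b => hW3.entry a b)
  have hrp32 : ((N:ℝ) ^ ((3:ℝ)/2)) = (N:ℝ) * Real.sqrt N := by
    rw [show (3:ℝ)/2 = 1 + 1/2 by norm_num, Real.rpow_add hNpos, Real.rpow_one,
      ← Real.sqrt_eq_rpow]
  have hrp52 : ((N:ℝ) ^ ((5:ℝ)/2)) = (N:ℝ) ^ 2 * Real.sqrt N := by
    have h2 : (N:ℝ) ^ ((2:ℝ)) = (N:ℝ) ^ 2 := by
      rw [show ((2:ℝ)) = ((2:ℕ):ℝ) by norm_num, Real.rpow_natCast]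
    rw [show (5:ℝ)/2 = 2 + 1/2 by norm_num, Real.rpow_add hNpos, ← Real.sqrt_eq_rpow, h2]
  refine ⟨?_, ?_, ?_⟩
  · rw [e1, norm_neg, norm_mul, hNabs]
    calc ((N:ℝ))⁻¹ * ‖Matrix.trace (B * D * B)‖
        ≤ ((N:ℝ))⁻¹ * ((Real.sqrt N)⁻¹ * (2 * (|z.im|⁻¹ * |z.im|⁻¹))) :=
          mul_le_mul_of_nonneg_left hb1 hNinn
      _ = 2 * (|z.im| ^ 2)⁻¹ * ((N : ℝ) ^ ((3 : ℝ) / 2))⁻¹ := by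
          rw [hrp32, ← hss]
          field_simp
  · rw [e2, norm_mul, norm_mul, Complex.norm_two, hNabs]
    calc 2 * (((N:ℝ))⁻¹ * ‖Matrix.trace (B * D * B * D * B)‖)
        ≤ 2 * (((N:ℝ))⁻¹ *
            ((Real.sqrt N)⁻¹ * (2 * (|z.im|⁻¹ * (|z.im|⁻¹ * (Real.sqrt N)⁻¹ * |z.im|⁻¹))))) := by
          refine mul_le_mul_of_nonneg_left (mul_le_mul_of_nonneg_left hb2 hNinn) (by norm_num)
      _ = 4 * (|z.im| ^ 3)⁻¹ * ((N : ℝ) ^ 2)⁻¹ := by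
          rw [← hss]
          field_simp
          rw [Real.sqrt_sq hspos.le]
          ring
  · rw [e3, norm_neg, norm_mul, norm_mul, hNabs,
      show ‖(6:ℂ)‖ = 6 by rw [show (6:ℂ) = ((6:ℕ):ℂ) by norm_num, Complex.norm_natCast]; norm_num]
    calc 6 * (((N:ℝ))⁻¹ * ‖Matrix.trace (B * D * B * D * B * D * B)‖)
        ≤ 6 * (((N:ℝ))⁻¹ * ((Real.sqrt N)⁻¹ *
            (2 * (|z.im|⁻¹ * (|z.im|⁻¹ * (Real.sqrt N)⁻¹ * |z.im|⁻¹ * (Real.sqrt N)⁻¹ * |z.im|⁻¹))))) := by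
          refine mul_le_mul_of_nonneg_left (mul_le_mul_of_nonneg_left hb3 hNinn) (by norm_num)
      _ = 12 * (|z.im| ^ 4)⁻¹ * ((N : ℝ) ^ ((5 : ℝ) / 2))⁻¹ := by
          rw [hrp52, ← hss]
          field_simp
          rw [Real.sqrt_sq hspos.le]
          ring

end Stmt9Aux

theorem stmt9
    {N : ℕ} (hN : 1 ≤ N) (z : ℂ) (hz : z.im ≠ 0)
    (x : Fin N × Fin N → ℝ) (i j : Fin N) (hij : i ≤ j) :
    ‖pderivC N (stieltjes N z) (i, j) 1 x‖ ≤
      2 * (|z.im| ^ 2)⁻¹ * ((N : ℝ) ^ ((3 : ℝ) / 2))⁻¹ ∧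
    ‖pderivC N (stieltjes N z) (i, j) 2 x‖ ≤
      4 * (|z.im| ^ 3)⁻¹ * ((N : ℝ) ^ 2)⁻¹ ∧
    ‖pderivC N (stieltjes N z) (i, j) 3 x‖ ≤
      12 * (|z.im| ^ 4)⁻¹ * ((N : ℝ) ^ ((5 : ℝ) / 2))⁻¹ :=
  Stmt9Aux.main hN hz x i j hij
end

section
/- Fix z = u + iv ∈ ℂ with v ≠ 0 and N ≥ 1, and let f : ℝⁿ → ℂ (n = N(N+1)/2) be defined by f(x) := N⁻¹ tr((A(x) − zI)⁻¹), where A(x) is the N×N real symmetric matrix with (i,j) entry N^{-1/2} x_{ij} for i ≤ j. Then λ₂(f) ≤ 4 max{|v|⁻⁴, |v|⁻³} N⁻² and λ₃(f) ≤ 12 max{|v|⁻⁶, |v|⁻⁴} N^{-5/2}. -/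
open MeasureTheory ProbabilityTheory

/-- The set whose supremum is `λ_r(f)` for a complex-valued function of the
variables `(x_{ij})_{i ≤ j}` (all of `ℝⁿ` as the domain). -/
def lamSetC (N : ℕ) (f : (Fin N × Fin N → ℝ) → ℂ) (r : ℕ) : Set ℝ :=
  { y | ∃ (q : Fin N × Fin N) (p : ℕ) (x : Fin N × Fin N → ℝ),
      q.1 ≤ q.2 ∧ 1 ≤ p ∧ p ≤ r ∧
      y = ‖pderivC N f q p x‖ ^ ((r : ℝ) / (p : ℝ)) }

noncomputable def lamC (N : ℕ) (f : (Fin N × Fin N → ℝ) → ℂ) (r : ℕ) : ℝ :=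
  sSup (lamSetC N f r)


open Matrix

namespace Stmt10Aux

variable {N : ℕ}

/-- `ℓ²`-operator bound for a matrix. -/
def Bnd (M : Matrix (Fin N) (Fin N) ℂ) (C : ℝ) : Prop :=
  ∀ w : EuclideanSpace ℂ (Fin N), ‖Matrix.toEuclideanLin M w‖ ≤ C * ‖w‖

lemma Bnd.mul {M M' : Matrix (Fin N) (Fin N) ℂ} {C C' : ℝ} (h : Bnd M C) (h' : Bnd M' C')
    (hC : 0 ≤ C) : Bnd (M * M') (C * C') := by
  intro w
  have key : Matrix.toEuclideanLin (M * M') w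
      = Matrix.toEuclideanLin M (Matrix.toEuclideanLin M' w) := by
    simp only [Matrix.toEuclideanLin_apply, Equiv.apply_symm_apply, ← Matrix.mulVec_mulVec]
  rw [key, mul_assoc]
  exact (h _).trans (by gcongr; exact h' w)

lemma Bnd.entry {M : Matrix (Fin N) (Fin N) ℂ} {C : ℝ} (h : Bnd M C) (a b : Fin N) :
    ‖M a b‖ ≤ C := by
  have h1 := h (EuclideanSpace.single b (1 : ℂ))
  rw [EuclideanSpace.norm_single, norm_one, mul_one] at h1
  refine le_trans ?_ h1
  have : Matrix.toEuclideanLin M (EuclideanSpace.single b (1 : ℂ))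
      = (WithLp.equiv 2 (Fin N → ℂ)).symm (M *ᵥ Pi.single b 1) := by
    rw [Matrix.toEuclideanLin_apply]
    congr 1
  rw [this]
  have habs : ‖M a b‖ = ‖(M *ᵥ Pi.single b 1) a‖ := by
    rw [Matrix.mulVec_single]
    simp
  rw [habs]
  rw [EuclideanSpace.norm_eq ((WithLp.equiv 2 (Fin N → ℂ)).symm (M *ᵥ Pi.single b 1))]
  have hco : ∀ i, (WithLp.equiv 2 (Fin N → ℂ)).symm (M *ᵥ Pi.single b 1) i
      = (M *ᵥ Pi.single b 1) i := fun i => rfl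
  simp_rw [hco]
  rw [Real.le_sqrt (norm_nonneg _)]
  exact Finset.single_le_sum (f := fun i => ‖(M *ᵥ Pi.single b 1) i‖ ^ 2)
    (fun i _ => sq_nonneg _) (Finset.mem_univ a)
  exact Finset.sum_nonneg fun i _ => sq_nonneg _


lemma toEuclideanLin_mul_apply (M M' : Matrix (Fin N) (Fin N) ℂ) (w : EuclideanSpace ℂ (Fin N)) :
    Matrix.toEuclideanLin (M * M') w = Matrix.toEuclideanLin M (Matrix.toEuclideanLin M' w) := by
  simp only [Matrix.toEuclideanLin_apply, Equiv.apply_symm_apply, ← Matrix.mulVec_mulVec]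

lemma toEuclideanLin_one_apply (w : EuclideanSpace ℂ (Fin N)) :
    Matrix.toEuclideanLin (1 : Matrix (Fin N) (Fin N) ℂ) w = w := by
  rw [Matrix.toEuclideanLin_apply, Matrix.one_mulVec, WithLp.toLp_ofLp]

lemma resolvent_key {H : Matrix (Fin N) (Fin N) ℂ} (hH : H.IsHermitian) (z : ℂ)
    (w : EuclideanSpace ℂ (Fin N)) :
    |z.im| * ‖w‖ ≤ ‖Matrix.toEuclideanLin (H - z • 1) w‖ := by
  classical
  set T := Matrix.toEuclideanLin H with hT
  have sym : T.IsSymmetric := Matrix.isHermitian_iff_isSymmetric.mp hH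
  have hreal : (inner ℂ w (T w) : ℂ).im = 0 := by
    have h1 : (starRingEnd ℂ) (inner ℂ w (T w) : ℂ) = (inner ℂ w (T w) : ℂ) := by
      rw [inner_conj_symm]
      rw [← sym w w]
    exact Complex.conj_eq_iff_im.mp h1
  have hTw : Matrix.toEuclideanLin (H - z • 1) w = T w - z • w := by
    rw [map_sub, _root_.map_smul]
    simp only [LinearMap.sub_apply, LinearMap.smul_apply]
    rw [toEuclideanLin_one_apply]
  have hinner : (inner ℂ w (T w - z • w) : ℂ) = inner ℂ w (T w) - z * ((‖w‖ : ℂ) ^ 2) := by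
    rw [inner_sub_right, inner_smul_right, inner_self_eq_norm_sq_to_K]
    rfl
  have him : (inner ℂ w (Matrix.toEuclideanLin (H - z • 1) w) : ℂ).im = -(z.im * ‖w‖ ^ 2) := by
    rw [hTw, hinner, ← Complex.ofReal_pow, Complex.sub_im, hreal, Complex.mul_im,
      Complex.ofReal_im, Complex.ofReal_re]
    ring
  have him2 : |(inner ℂ w (Matrix.toEuclideanLin (H - z • 1) w) : ℂ).im| = |z.im| * ‖w‖ ^ 2 := by
    rw [him, abs_neg, abs_mul, abs_of_nonneg (sq_nonneg ‖w‖)]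
  have hcs : |(inner ℂ w (Matrix.toEuclideanLin (H - z • 1) w) : ℂ).im|
      ≤ ‖w‖ * ‖Matrix.toEuclideanLin (H - z • 1) w‖ := by
    refine le_trans (Complex.abs_im_le_norm _) ?_
    exact norm_inner_le_norm _ _
  rw [him2] at hcs
  rcases eq_or_lt_of_le (norm_nonneg w) with h0 | h0
  · rw [← h0]
    simp
  · nlinarith [hcs, norm_nonneg (Matrix.toEuclideanLin (H - z • 1) w)]

lemma resolvent_isUnit {H : Matrix (Fin N) (Fin N) ℂ} (hH : H.IsHermitian) {z : ℂ}
    (hz : z.im ≠ 0) : IsUnit (H - z • 1).det := by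
  classical
  rw [isUnit_iff_ne_zero]
  intro hdet
  obtain ⟨v, hv0, hv⟩ := (Matrix.exists_mulVec_eq_zero_iff).mpr hdet
  have key := resolvent_key hH z ((WithLp.equiv 2 (Fin N → ℂ)).symm v)
  rw [show Matrix.toEuclideanLin (H - z • 1) ((WithLp.equiv 2 (Fin N → ℂ)).symm v)
      = (WithLp.equiv 2 (Fin N → ℂ)).symm ((H - z • 1) *ᵥ v) from rfl, hv] at key
  rw [show ((WithLp.equiv 2 (Fin N → ℂ)).symm (0 : Fin N → ℂ)) = 0 from rfl, norm_zero] at key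
  have h1 : ‖(WithLp.equiv 2 (Fin N → ℂ)).symm v‖ = 0 := by
    have := abs_pos.mpr hz
    nlinarith [norm_nonneg ((WithLp.equiv 2 (Fin N → ℂ)).symm v)]
  exact hv0 (by simpa using norm_eq_zero.mp h1)

lemma resolvent_bnd {H : Matrix (Fin N) (Fin N) ℂ} (hH : H.IsHermitian) {z : ℂ}
    (hz : z.im ≠ 0) : Bnd ((H - z • 1)⁻¹) (|z.im|⁻¹) := by
  intro w
  set u := Matrix.toEuclideanLin (H - z • 1)⁻¹ w with hu
  have hMu : Matrix.toEuclideanLin (H - z • 1) u = w := by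
    rw [hu, ← toEuclideanLin_mul_apply, Matrix.mul_nonsing_inv _ (resolvent_isUnit hH hz),
      toEuclideanLin_one_apply]
  have key := resolvent_key hH z u
  rw [hMu] at key
  have hv : (0:ℝ) < |z.im| := abs_pos.mpr hz
  rw [← mul_le_mul_iff_right₀ hv]
  calc |z.im| * ‖u‖ ≤ ‖w‖ := key
    _ = |z.im| * (|z.im|⁻¹ * ‖w‖) := by field_simp

lemma wigner_symm (N : ℕ) (x : Fin N × Fin N → ℝ) (a b : Fin N) :
    wignerMatrix N x b a = wignerMatrix N x a b := by
  unfold wignerMatrix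
  by_cases h1 : a ≤ b <;> by_cases h2 : b ≤ a
  · have : a = b := le_antisymm h1 h2
    subst this
    rfl
  · rw [if_neg h2, if_pos h1]
  · rw [if_pos h2, if_neg h1]
  · exact absurd (le_total a b) (by simp [h1, h2])

lemma wigner_isHermitian (N : ℕ) (x : Fin N × Fin N → ℝ) : (wignerMatrix N x).IsHermitian := by
  refine Matrix.ext fun a b => ?_
  rw [Matrix.conjTranspose_apply, wigner_symm]
  exact Complex.conj_ofReal _

lemma wigner_update (N : ℕ) (x : Fin N × Fin N → ℝ) (i j : Fin N) (hq : i ≤ j) (t : ℝ) :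
    wignerMatrix N (Function.update x (i, j) t)
      = wignerMatrix N x + ((t : ℂ) - (x (i, j) : ℂ)) • dA N i j := by
  refine Matrix.ext fun a b => ?_
  simp only [Matrix.add_apply, Matrix.smul_apply, wignerMatrix, dA, smul_eq_mul,
    Function.update_apply]
  split_ifs <;> push_cast <;> simp_all [Prod.mk.injEq] <;> try ring
  all_goals exfalso
  all_goals simp_all only [Fin.le_def, Fin.lt_def, Fin.ext_iff, Prod.mk.injEq]
  all_goals omega

lemma dA_mulVec {i j : Fin N} (hij : i ≠ j) (u : Fin N → ℂ) (a : Fin N) :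
    (dA N i j *ᵥ u) a = (if a = i then (((Real.sqrt N)⁻¹ : ℝ) : ℂ) * u j else 0)
      + (if a = j then (((Real.sqrt N)⁻¹ : ℝ) : ℂ) * u i else 0) := by
  have key : ∀ b, dA N i j a b * u b
      = (if a = i ∧ b = j then (((Real.sqrt N)⁻¹ : ℝ) : ℂ) * u b else 0)
      + (if a = j ∧ b = i then (((Real.sqrt N)⁻¹ : ℝ) : ℂ) * u b else 0) := by
    intro b
    simp only [dA, Prod.mk.injEq]
    by_cases ha : a = i <;> by_cases hb : b = j <;> by_cases ha2 : a = j <;>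
      by_cases hb2 : b = i <;> simp_all
  rw [Matrix.mulVec, dotProduct]
  simp_rw [key]
  rw [Finset.sum_add_distrib]
  congr 1
  · by_cases ha : a = i
    · subst ha
      simp
    · simp [ha]
  · by_cases ha : a = j
    · subst ha
      simp
    · simp [ha]

lemma dA_mulVec_diag (i : Fin N) (u : Fin N → ℂ) (a : Fin N) :
    (dA N i i *ᵥ u) a = (if a = i then (((Real.sqrt N)⁻¹ : ℝ) : ℂ) * u i else 0) := by
  have key : ∀ b, dA N i i a b * u b
      = (if a = i ∧ b = i then (((Real.sqrt N)⁻¹ : ℝ) : ℂ) * u b else 0) := by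
    intro b
    simp only [dA, Prod.mk.injEq]
    by_cases ha : a = i <;> by_cases hb : b = i <;> simp_all
  rw [Matrix.mulVec, dotProduct]
  simp_rw [key]
  by_cases ha : a = i
  · subst ha
    simp
  · simp [ha]

lemma dA_bnd (i j : Fin N) : Bnd (dA N i j) ((Real.sqrt N)⁻¹) := by
  intro w
  set s : ℝ := (Real.sqrt N)⁻¹ with hs
  have hs0 : 0 ≤ s := by positivity
  rw [Matrix.toEuclideanLin_apply, EuclideanSpace.norm_eq, EuclideanSpace.norm_eq]
  have hc : ∀ a, ‖(WithLp.toLp 2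
      (dA N i j *ᵥ WithLp.ofLp w)) a‖
      = ‖(dA N i j *ᵥ (fun b => w b)) a‖ := fun a => rfl
  simp_rw [hc]
  have hsum : ∑ a, ‖(dA N i j *ᵥ (fun b => w b)) a‖ ^ 2 ≤ s ^ 2 * ∑ a, ‖w a‖ ^ 2 := by
    by_cases hij : i = j
    · subst hij
      simp_rw [dA_mulVec_diag, ← hs]
      have : ∀ a, ‖if a = i then ((s : ℝ) : ℂ) * w i else 0‖ ^ 2
          = if a = i then s ^ 2 * ‖w i‖ ^ 2 else 0 := by
        intro a
        by_cases ha : a = i <;> simp [ha, mul_pow, abs_of_nonneg hs0]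
      simp_rw [this, Finset.sum_ite_eq' Finset.univ i, Finset.mem_univ, if_pos]
      have h1 : ‖w i‖ ^ 2 ≤ ∑ a, ‖w a‖ ^ 2 :=
        Finset.single_le_sum (f := fun a => ‖w a‖ ^ 2) (fun a _ => sq_nonneg _)
          (Finset.mem_univ i)
      nlinarith [sq_nonneg s]
    · simp_rw [dA_mulVec hij, ← hs]
      have hij2 : j ≠ i := Ne.symm hij
      have key : ∀ a, ‖(if a = i then ((s : ℝ) : ℂ) * w j else 0)
          + (if a = j then ((s : ℝ) : ℂ) * w i else 0)‖ ^ 2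
          = (if a = i then s ^ 2 * ‖w j‖ ^ 2 else 0) + (if a = j then s ^ 2 * ‖w i‖ ^ 2 else 0) := by
        intro a
        by_cases ha : a = i
        · have ha2 : a ≠ j := by rw [ha]; exact hij
          simp [ha, ha2, hij, mul_pow, abs_of_nonneg hs0]
        · by_cases ha2 : a = j <;> simp [ha, ha2, hij, hij2, mul_pow, abs_of_nonneg hs0]
      simp_rw [key, Finset.sum_add_distrib, Finset.sum_ite_eq' Finset.univ,
        Finset.mem_univ, if_pos]
      have h1 : ‖w i‖ ^ 2 + ‖w j‖ ^ 2 ≤ ∑ a, ‖w a‖ ^ 2 := by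
        rw [← Finset.sum_pair (f := fun a => ‖w a‖ ^ 2) hij]
        exact Finset.sum_le_sum_of_subset_of_nonneg (Finset.subset_univ _)
          (fun _ _ _ => sq_nonneg _)
      nlinarith [sq_nonneg s]
  calc Real.sqrt (∑ a, ‖(dA N i j *ᵥ (fun b => w b)) a‖ ^ 2)
      ≤ Real.sqrt (s ^ 2 * ∑ a, ‖w a‖ ^ 2) := Real.sqrt_le_sqrt hsum
    _ = s * Real.sqrt (∑ a, ‖w a‖ ^ 2) := by
        rw [Real.sqrt_mul (sq_nonneg s), Real.sqrt_sq hs0]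

lemma trace_dA_mul (i j : Fin N) (Q : Matrix (Fin N) (Fin N) ℂ) {C : ℝ} (hQ : Bnd Q C) :
    ‖Matrix.trace (dA N i j * Q)‖ ≤ 2 * (Real.sqrt N)⁻¹ * C := by
  have hC : 0 ≤ C := le_trans (norm_nonneg _) (hQ.entry i i)
  set s : ℝ := (Real.sqrt N)⁻¹ with hs
  have hs0 : 0 ≤ s := by positivity
  have hdiag : ∀ a, (dA N i j * Q) a a = (dA N i j *ᵥ (fun b => Q b a)) a := by
    intro a
    rw [Matrix.mul_apply]
    rfl
  unfold Matrix.trace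
  by_cases hij : i = j
  · subst hij
    have hsum : ∑ a, (dA N i i * Q).diag a = ((s : ℝ) : ℂ) * Q i i := by
      simp_rw [Matrix.diag, hdiag, dA_mulVec_diag, ← hs, Finset.sum_ite_eq' Finset.univ,
        Finset.mem_univ, if_pos]
    rw [hsum, norm_mul, Complex.norm_of_nonneg hs0]
    have := hQ.entry i i
    nlinarith
  · have hsum : ∑ a, (dA N i j * Q).diag a = ((s : ℝ) : ℂ) * Q j i + ((s : ℝ) : ℂ) * Q i j := by
      simp_rw [Matrix.diag, hdiag, dA_mulVec hij, ← hs, Finset.sum_add_distrib,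
        Finset.sum_ite_eq' Finset.univ, Finset.mem_univ, if_pos]
    rw [hsum]
    refine le_trans (norm_add_le _ _) ?_
    rw [norm_mul, norm_mul, Complex.norm_of_nonneg hs0]
    have h1 := hQ.entry j i
    have h2 := hQ.entry i j
    nlinarith

lemma deriv_traces (M₀ B : Matrix (Fin N) (Fin N) ℂ)
    (hU : ∀ t : ℝ, IsUnit ((M₀ + t • B).det)) (t : ℝ) :
    HasDerivAt (fun s : ℝ => Matrix.trace ((M₀ + s • B)⁻¹))
      (-Matrix.trace ((M₀ + t • B)⁻¹ * B * (M₀ + t • B)⁻¹)) t ∧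
    HasDerivAt (fun s : ℝ => Matrix.trace ((M₀ + s • B)⁻¹ * B * (M₀ + s • B)⁻¹))
      (-2 * Matrix.trace ((M₀ + t • B)⁻¹ * B * (M₀ + t • B)⁻¹ * B * (M₀ + t • B)⁻¹)) t ∧
    HasDerivAt (fun s : ℝ =>
        Matrix.trace ((M₀ + s • B)⁻¹ * B * (M₀ + s • B)⁻¹ * B * (M₀ + s • B)⁻¹))
      (-3 * Matrix.trace ((M₀ + t • B)⁻¹ * B * (M₀ + t • B)⁻¹ * B * (M₀ + t • B)⁻¹ * B
        * (M₀ + t • B)⁻¹)) t := by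
  classical
  letI : NormedRing (Matrix (Fin N) (Fin N) ℂ) := Matrix.linftyOpNormedRing
  letI : NormedAlgebra ℝ (Matrix (Fin N) (Fin N) ℂ) := Matrix.linftyOpNormedAlgebra
  letI : CompleteSpace (Matrix (Fin N) (Fin N) ℂ) := FiniteDimensional.complete ℝ _
  set L : Matrix (Fin N) (Fin N) ℂ →L[ℝ] ℂ :=
    LinearMap.toContinuousLinearMap ((Matrix.traceLinearMap (Fin N) ℂ ℂ).restrictScalars ℝ)
    with hL
  have hLapp : ∀ M : Matrix (Fin N) (Fin N) ℂ, L M = Matrix.trace M := fun _ => rfl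
  have htr : ∀ (F : ℝ → Matrix (Fin N) (Fin N) ℂ) (F' : Matrix (Fin N) (Fin N) ℂ) (u : ℝ),
      HasDerivAt F F' u → HasDerivAt (fun s => Matrix.trace (F s)) (Matrix.trace F') u := by
    intro F F' u hF
    have := L.hasFDerivAt.comp_hasDerivAt u hF
    exact this
  have hMder : ∀ u : ℝ, HasDerivAt (fun s : ℝ => M₀ + s • B) B u := by
    intro u
    have h := ((hasDerivAt_id u).smul_const B).const_add M₀
    rw [one_smul] at h
    exact h
  have hGder : ∀ u : ℝ, HasDerivAt (fun s : ℝ => (M₀ + s • B)⁻¹)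
      (-((M₀ + u • B)⁻¹ * B * (M₀ + u • B)⁻¹)) u := by
    intro u
    have hu := (Matrix.isUnit_iff_isUnit_det _).mpr (hU u)
    have h1 := hasFDerivAt_ringInverse (𝕜 := ℝ) hu.unit
    rw [hu.unit_spec] at h1
    have h2 := h1.comp_hasDerivAt u (hMder u)
    have h3 : (Ring.inverse ∘ fun s : ℝ => M₀ + s • B) = fun s : ℝ => (M₀ + s • B)⁻¹ := by
      funext s
      simp only [Function.comp_apply]
      rw [Matrix.nonsing_inv_eq_ringInverse]
    rw [h3] at h2
    refine h2.congr_deriv ?_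
    rw [ContinuousLinearMap.neg_apply, ContinuousLinearMap.mulLeftRight_apply]
    have h4 := Matrix.coe_units_inv hu.unit
    rw [hu.unit_spec] at h4
    rw [h4]
  set G : ℝ → Matrix (Fin N) (Fin N) ℂ := fun s => (M₀ + s • B)⁻¹ with hG
  have hK1der : ∀ u : ℝ, HasDerivAt (fun s => G s * B * G s)
      ((-(G u * B * G u) * B) * G u + (G u * B) * -(G u * B * G u)) u :=
    fun u => ((hGder u).mul_const B).mul (hGder u)
  have hK2der : ∀ u : ℝ, HasDerivAt (fun s => G s * B * G s * B * G s)
      ((((-(G u * B * G u) * B) * G u + (G u * B) * -(G u * B * G u)) * B) * G u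
        + (G u * B * G u * B) * -(G u * B * G u)) u :=
    fun u => ((hK1der u).mul_const B).mul (hGder u)
  refine ⟨?_, ?_, ?_⟩
  · have := htr _ _ t ((hGder t).neg.neg)
    simpa using htr _ _ t (hGder t)
  · have h := htr _ _ t (hK1der t)
    convert h using 1
    have e : (-(G t * B * G t) * B) * G t + (G t * B) * -(G t * B * G t)
        = -(G t * B * G t * B * G t + G t * B * G t * B * G t) := by
      noncomm_ring
    rw [e, Matrix.trace_neg, Matrix.trace_add]
    ring
  · have h := htr _ _ t (hK2der t)
    convert h using 1
    have e : (((-(G t * B * G t) * B) * G t + (G t * B) * -(G t * B * G t)) * B) * G t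
        + (G t * B * G t * B) * -(G t * B * G t)
        = -(G t * B * G t * B * G t * B * G t + G t * B * G t * B * G t * B * G t
            + G t * B * G t * B * G t * B * G t) := by
      noncomm_ring
    rw [e, Matrix.trace_neg, Matrix.trace_add, Matrix.trace_add]
    ring

lemma pderiv_bound {N : ℕ} (z : ℂ) (hz : z.im ≠ 0)
    (q : Fin N × Fin N) (hq : q.1 ≤ q.2) (x : Fin N × Fin N → ℝ) :
    ‖pderivC N (stieltjes N z) q 1 x‖
      ≤ 2 * (((N : ℝ) * Real.sqrt N)⁻¹) * ((|z.im| ^ 2)⁻¹) ∧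
    ‖pderivC N (stieltjes N z) q 2 x‖
      ≤ 4 * (((N : ℝ) ^ 2)⁻¹) * ((|z.im| ^ 3)⁻¹) ∧
    ‖pderivC N (stieltjes N z) q 3 x‖
      ≤ 12 * (((N : ℝ) ^ 2 * Real.sqrt N)⁻¹) * ((|z.im| ^ 4)⁻¹) := by
  classical
  obtain ⟨i, j⟩ := q
  simp only at hq
  set c : ℝ := x (i, j) with hc
  set B : Matrix (Fin N) (Fin N) ℂ := dA N i j with hB
  set M₀ : Matrix (Fin N) (Fin N) ℂ := wignerMatrix N x - (c : ℂ) • B - z • 1 with hM₀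
  have key : ∀ t : ℝ, wignerMatrix N (Function.update x (i, j) t) - z • 1 = M₀ + t • B := by
    intro t
    rw [wigner_update N x i j hq t, hM₀]
    refine Matrix.ext fun a b => ?_
    simp only [Matrix.sub_apply, Matrix.add_apply, Matrix.smul_apply, smul_eq_mul,
      Complex.real_smul]
    ring
  have hU : ∀ t : ℝ, IsUnit ((M₀ + t • B).det) := by
    intro t
    rw [← key t]
    exact resolvent_isUnit (wigner_isHermitian N _) hz
  set g : ℝ → ℂ := fun t => stieltjes N z (Function.update x (i, j) t) with hg
  have hgeq : g = fun t => (N : ℂ)⁻¹ * Matrix.trace ((M₀ + t • B)⁻¹) := by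
    funext t
    rw [hg]
    simp only [stieltjes, resolventW]
    rw [key t]
  -- resolvent bound at the point c
  have hGb : Bnd ((M₀ + c • B)⁻¹) (|z.im|⁻¹) := by
    rw [← key c]
    exact resolvent_bnd (wigner_isHermitian N _) hz
  have hBb : Bnd B ((Real.sqrt N)⁻¹) := dA_bnd i j
  have hv0 : (0 : ℝ) < |z.im| := abs_pos.mpr hz
  have hvi : (0 : ℝ) ≤ |z.im|⁻¹ := by positivity
  have hsi : (0 : ℝ) ≤ (Real.sqrt N)⁻¹ := by positivity
  set G : Matrix (Fin N) (Fin N) ℂ := (M₀ + c • B)⁻¹ with hGdef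
  -- trace bounds
  have htr1 : ‖Matrix.trace (G * B * G)‖
      ≤ 2 * (Real.sqrt N)⁻¹ * (|z.im|⁻¹ * |z.im|⁻¹) := by
    have e : Matrix.trace (G * B * G) = Matrix.trace (dA N i j * (G * G)) := by
      rw [mul_assoc, Matrix.trace_mul_comm, mul_assoc, hB]
    rw [e]
    exact trace_dA_mul i j _ (hGb.mul hGb hvi)
  have htr2 : ‖Matrix.trace (G * B * G * B * G)‖
      ≤ 2 * (Real.sqrt N)⁻¹ * (|z.im|⁻¹ * (|z.im|⁻¹ * (Real.sqrt N)⁻¹ * |z.im|⁻¹)) := by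
    have e : Matrix.trace (G * B * G * B * G) = Matrix.trace (dA N i j * (G * (G * B * G))) := by
      rw [Matrix.trace_mul_comm, ← mul_assoc, Matrix.trace_mul_comm, mul_assoc, hB]
    rw [e]
    exact trace_dA_mul i j _ (hGb.mul (((hGb.mul hBb hvi).mul hGb (by positivity))) hvi)
  have htr3 : ‖Matrix.trace (G * B * G * B * G * B * G)‖
      ≤ 2 * (Real.sqrt N)⁻¹
        * (|z.im|⁻¹ * (|z.im|⁻¹ * (Real.sqrt N)⁻¹ * |z.im|⁻¹ * (Real.sqrt N)⁻¹ * |z.im|⁻¹)) := by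
    have e : Matrix.trace (G * B * G * B * G * B * G)
        = Matrix.trace (dA N i j * (G * (G * B * G * B * G))) := by
      rw [Matrix.trace_mul_comm, ← mul_assoc, Matrix.trace_mul_comm, mul_assoc, hB]
    rw [e]
    refine trace_dA_mul i j _ (hGb.mul ?_ hvi)
    exact ((((hGb.mul hBb hvi).mul hGb (by positivity)).mul hBb (by positivity)).mul hGb
      (by positivity))
  -- derivatives
  have h1 := fun t => (deriv_traces M₀ B hU t).1
  have h2 := fun t => (deriv_traces M₀ B hU t).2.1
  have h3 := fun t => (deriv_traces M₀ B hU t).2.2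
  have dg : ∀ t, HasDerivAt g
      ((N : ℂ)⁻¹ * -Matrix.trace ((M₀ + t • B)⁻¹ * B * (M₀ + t • B)⁻¹)) t := by
    intro t
    rw [hgeq]
    exact (h1 t).const_mul _
  have hderiv_g : deriv g = fun t =>
      (N : ℂ)⁻¹ * -Matrix.trace ((M₀ + t • B)⁻¹ * B * (M₀ + t • B)⁻¹) := by
    funext t
    exact (dg t).deriv
  have dg2 : ∀ t, HasDerivAt (deriv g)
      ((N : ℂ)⁻¹ * -(-2 * Matrix.trace ((M₀ + t • B)⁻¹ * B * (M₀ + t • B)⁻¹ * B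
        * (M₀ + t • B)⁻¹))) t := by
    intro t
    rw [hderiv_g]
    exact ((h2 t).neg).const_mul _
  have hderiv2_g : deriv (deriv g) = fun t =>
      (N : ℂ)⁻¹ * -(-2 * Matrix.trace ((M₀ + t • B)⁻¹ * B * (M₀ + t • B)⁻¹ * B
        * (M₀ + t • B)⁻¹)) := by
    funext t
    exact (dg2 t).deriv
  have dg3 : ∀ t, HasDerivAt (deriv (deriv g))
      ((N : ℂ)⁻¹ * -(-2 * (-3 * Matrix.trace ((M₀ + t • B)⁻¹ * B * (M₀ + t • B)⁻¹ * B
        * (M₀ + t • B)⁻¹ * B * (M₀ + t • B)⁻¹)))) t := by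
    intro t
    rw [hderiv2_g]
    exact (((h3 t).const_mul (-2 : ℂ)).neg).const_mul _
  have hp1 : pderivC N (stieltjes N z) (i, j) 1 x
      = (N : ℂ)⁻¹ * -Matrix.trace (G * B * G) := by
    show iteratedDeriv 1 g c = _
    rw [iteratedDeriv_one]
    exact (dg c).deriv
  have hp2 : pderivC N (stieltjes N z) (i, j) 2 x
      = (N : ℂ)⁻¹ * -(-2 * Matrix.trace (G * B * G * B * G)) := by
    show iteratedDeriv 2 g c = _
    rw [iteratedDeriv_succ, iteratedDeriv_one]
    exact (dg2 c).deriv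
  have hp3 : pderivC N (stieltjes N z) (i, j) 3 x
      = (N : ℂ)⁻¹ * -(-2 * (-3 * Matrix.trace (G * B * G * B * G * B * G))) := by
    show iteratedDeriv 3 g c = _
    rw [iteratedDeriv_succ, iteratedDeriv_succ, iteratedDeriv_one]
    exact (dg3 c).deriv
  have hn0 : (0:ℝ) < (N:ℝ) := by exact_mod_cast i.pos
  have hsq0 : (0:ℝ) < Real.sqrt N := Real.sqrt_pos.mpr hn0
  have hss : Real.sqrt N * Real.sqrt N = (N:ℝ) := Real.mul_self_sqrt hn0.le
  refine ⟨?_, ?_, ?_⟩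
  · rw [hp1]
    have habs : ‖(N : ℂ)⁻¹ * -Matrix.trace (G * B * G)‖
        = (N:ℝ)⁻¹ * ‖Matrix.trace (G * B * G)‖ := by
      rw [norm_mul, norm_inv, Complex.norm_natCast, norm_neg]
    rw [habs]
    calc (N:ℝ)⁻¹ * ‖Matrix.trace (G * B * G)‖
        ≤ (N:ℝ)⁻¹ * (2 * (Real.sqrt N)⁻¹ * (|z.im|⁻¹ * |z.im|⁻¹)) :=
          mul_le_mul_of_nonneg_left htr1 (by positivity)
      _ = 2 * (((N : ℝ) * Real.sqrt N)⁻¹) * ((|z.im| ^ 2)⁻¹) := by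
          field_simp
  · rw [hp2]
    have hval : (N : ℂ)⁻¹ * -(-2 * Matrix.trace (G * B * G * B * G))
        = 2 * ((N : ℂ)⁻¹ * Matrix.trace (G * B * G * B * G)) := by ring
    rw [hval]
    have habs : ‖2 * ((N : ℂ)⁻¹ * Matrix.trace (G * B * G * B * G))‖
        = 2 * ((N:ℝ)⁻¹ * ‖Matrix.trace (G * B * G * B * G)‖) := by
      rw [norm_mul, norm_mul, norm_inv, Complex.norm_natCast, Complex.norm_two]
    rw [habs]
    calc 2 * ((N:ℝ)⁻¹ * ‖Matrix.trace (G * B * G * B * G)‖)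
        ≤ 2 * ((N:ℝ)⁻¹ * (2 * (Real.sqrt N)⁻¹
            * (|z.im|⁻¹ * (|z.im|⁻¹ * (Real.sqrt N)⁻¹ * |z.im|⁻¹)))) := by
          refine mul_le_mul_of_nonneg_left ?_ (by norm_num)
          exact mul_le_mul_of_nonneg_left htr2 (by positivity)
      _ = 4 * (((N : ℝ) ^ 2)⁻¹) * ((|z.im| ^ 3)⁻¹) := by
          have h2s : (Real.sqrt N)⁻¹ * (Real.sqrt N)⁻¹ = ((N:ℝ))⁻¹ := by
            rw [← mul_inv, hss]
          rw [show (((N:ℝ))^2)⁻¹ = (N:ℝ)⁻¹ * (N:ℝ)⁻¹ by rw [sq, mul_inv],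
            show (|z.im|^3)⁻¹ = |z.im|⁻¹ * |z.im|⁻¹ * |z.im|⁻¹ by
              rw [pow_succ, sq, mul_inv, mul_inv],
            ← h2s]
          ring
  · rw [hp3]
    have hval : (N : ℂ)⁻¹ * -(-2 * (-3 * Matrix.trace (G * B * G * B * G * B * G)))
        = -6 * ((N : ℂ)⁻¹ * Matrix.trace (G * B * G * B * G * B * G)) := by ring
    rw [hval]
    have habs : ‖-6 * ((N : ℂ)⁻¹ * Matrix.trace (G * B * G * B * G * B * G))‖
        = 6 * ((N:ℝ)⁻¹ * ‖Matrix.trace (G * B * G * B * G * B * G)‖) := by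
      rw [norm_mul, norm_mul, norm_inv, Complex.norm_natCast]
      norm_num
    rw [habs]
    calc 6 * ((N:ℝ)⁻¹ * ‖Matrix.trace (G * B * G * B * G * B * G)‖)
        ≤ 6 * ((N:ℝ)⁻¹ * (2 * (Real.sqrt N)⁻¹
            * (|z.im|⁻¹ * (|z.im|⁻¹ * (Real.sqrt N)⁻¹ * |z.im|⁻¹ * (Real.sqrt N)⁻¹
              * |z.im|⁻¹)))) := by
          refine mul_le_mul_of_nonneg_left ?_ (by norm_num)
          exact mul_le_mul_of_nonneg_left htr3 (by positivity)
      _ = 12 * (((N : ℝ) ^ 2 * Real.sqrt N)⁻¹) * ((|z.im| ^ 4)⁻¹) := by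
          have h2s : (Real.sqrt N)⁻¹ * (Real.sqrt N)⁻¹ = ((N:ℝ))⁻¹ := by
            rw [← mul_inv, hss]
          rw [show (((N:ℝ))^2 * Real.sqrt N)⁻¹
              = (N:ℝ)⁻¹ * (N:ℝ)⁻¹ * (Real.sqrt N)⁻¹ by rw [mul_inv, sq, mul_inv],
            show (|z.im|^4)⁻¹ = |z.im|⁻¹ * |z.im|⁻¹ * |z.im|⁻¹ * |z.im|⁻¹ by
              rw [pow_succ, pow_succ, sq, mul_inv, mul_inv, mul_inv],
            ← h2s]
          ring

end Stmt10Aux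

set_option maxHeartbeats 1000000 in
theorem stmt10
    {N : ℕ} (hN : 1 ≤ N) (z : ℂ) (hz : z.im ≠ 0) :
    lamC N (stieltjes N z) 2 ≤
      4 * max ((|z.im| ^ 4)⁻¹) ((|z.im| ^ 3)⁻¹) * ((N : ℝ) ^ 2)⁻¹ ∧
    lamC N (stieltjes N z) 3 ≤
      12 * max ((|z.im| ^ 6)⁻¹) ((|z.im| ^ 4)⁻¹) * ((N : ℝ) ^ ((5 : ℝ) / 2))⁻¹ := by
  have hn1 : (1:ℝ) ≤ (N:ℝ) := by exact_mod_cast hN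
  have hn0 : (0:ℝ) < (N:ℝ) := by linarith
  have hsq0 : (0:ℝ) < Real.sqrt N := Real.sqrt_pos.mpr hn0
  have hsq1 : (1:ℝ) ≤ Real.sqrt N := by
    rw [show (1:ℝ) = Real.sqrt 1 by simp]
    exact Real.sqrt_le_sqrt hn1
  have hss : Real.sqrt N * Real.sqrt N = (N:ℝ) := Real.mul_self_sqrt hn0.le
  set v : ℝ := |z.im| with hv
  have hv0 : (0:ℝ) < v := abs_pos.mpr hz
  have h52 : ((N:ℝ)) ^ ((5:ℝ)/2) = (N:ℝ)^2 * Real.sqrt N := by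
    rw [show ((5:ℝ)/2) = ((2:ℕ):ℝ) + (1/2 : ℝ) by norm_num, Real.rpow_add hn0,
      Real.rpow_natCast, ← Real.rpow_natCast (N:ℝ) 2]
    rw [Real.rpow_natCast]
    congr 1
    rw [← Real.sqrt_eq_rpow]
  have h52pos : (0:ℝ) < ((N:ℝ)) ^ ((5:ℝ)/2) := Real.rpow_pos_of_pos hn0 _
  have hmax2 : (0:ℝ) ≤ max ((v ^ 4)⁻¹) ((v ^ 3)⁻¹) :=
    le_trans (by positivity) (le_max_left _ _)
  have hmax3 : (0:ℝ) ≤ max ((v ^ 6)⁻¹) ((v ^ 4)⁻¹) :=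
    le_trans (by positivity) (le_max_left _ _)
  constructor
  · apply Real.sSup_le
    · rintro y ⟨q, p, x, hq, hple, hpge, rfl⟩
      have hd := Stmt10Aux.pderiv_bound z hz q hq x
      interval_cases p
      · -- p = 1, exponent 2
        have hA : ‖pderivC N (stieltjes N z) q 1 x‖
            ≤ 2 * (((N : ℝ) * Real.sqrt N)⁻¹) * ((v ^ 2)⁻¹) := hd.1
        have he : ((2:ℕ):ℝ) / ((1:ℕ):ℝ) = ((2:ℕ):ℝ) := by norm_num
        rw [he, Real.rpow_natCast]
        calc ‖pderivC N (stieltjes N z) q 1 x‖ ^ 2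
            ≤ (2 * (((N : ℝ) * Real.sqrt N)⁻¹) * ((v ^ 2)⁻¹)) ^ 2 := by
              exact pow_le_pow_left₀ (norm_nonneg _) hA 2
          _ = 4 * ((v^4)⁻¹) * (((N:ℝ)^3)⁻¹) := by
              have hNS : ((N:ℝ) * Real.sqrt N)^2 = (N:ℝ)^3 := by
                have e : ((N:ℝ) * Real.sqrt N)^2 = (N:ℝ)^2 * (Real.sqrt N * Real.sqrt N) := by
                  ring
                rw [e, hss]
                ring
              rw [mul_pow, mul_pow, inv_pow, inv_pow, hNS, ← pow_mul]
              norm_num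
              ring
          _ ≤ 4 * max ((v ^ 4)⁻¹) ((v ^ 3)⁻¹) * ((N : ℝ) ^ 2)⁻¹ := by
              have e1 : ((v^4)⁻¹) ≤ max ((v ^ 4)⁻¹) ((v ^ 3)⁻¹) := le_max_left _ _
              have e2 : (((N:ℝ)^3)⁻¹) ≤ ((N:ℝ)^2)⁻¹ := by
                apply inv_anti₀ (by positivity)
                nlinarith
              have h4 : (0:ℝ) ≤ 4 := by norm_num
              calc 4 * ((v^4)⁻¹) * (((N:ℝ)^3)⁻¹)
                  ≤ 4 * (max ((v ^ 4)⁻¹) ((v ^ 3)⁻¹)) * (((N:ℝ)^3)⁻¹) := by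
                    apply mul_le_mul_of_nonneg_right _ (by positivity)
                    exact mul_le_mul_of_nonneg_left e1 h4
                _ ≤ 4 * (max ((v ^ 4)⁻¹) ((v ^ 3)⁻¹)) * (((N:ℝ)^2)⁻¹) := by
                    exact mul_le_mul_of_nonneg_left e2 (by positivity)
      · -- p = 2, exponent 1
        have hA : ‖pderivC N (stieltjes N z) q 2 x‖
            ≤ 4 * (((N : ℝ) ^ 2)⁻¹) * ((v ^ 3)⁻¹) := hd.2.1
        have he : ((2:ℕ):ℝ) / ((2:ℕ):ℝ) = 1 := by norm_num
        rw [he, Real.rpow_one]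
        calc ‖pderivC N (stieltjes N z) q 2 x‖
            ≤ 4 * (((N : ℝ) ^ 2)⁻¹) * ((v ^ 3)⁻¹) := hA
          _ ≤ 4 * max ((v ^ 4)⁻¹) ((v ^ 3)⁻¹) * ((N : ℝ) ^ 2)⁻¹ := by
              have e1 : ((v^3)⁻¹) ≤ max ((v ^ 4)⁻¹) ((v ^ 3)⁻¹) := le_max_right _ _
              calc 4 * (((N : ℝ) ^ 2)⁻¹) * ((v ^ 3)⁻¹)
                  = 4 * ((v ^ 3)⁻¹) * (((N : ℝ) ^ 2)⁻¹) := by ring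
                _ ≤ 4 * max ((v ^ 4)⁻¹) ((v ^ 3)⁻¹) * ((N : ℝ) ^ 2)⁻¹ := by
                    apply mul_le_mul_of_nonneg_right _ (by positivity)
                    exact mul_le_mul_of_nonneg_left e1 (by norm_num)
    · positivity
  · apply Real.sSup_le
    · rintro y ⟨q, p, x, hq, hple, hpge, rfl⟩
      have hd := Stmt10Aux.pderiv_bound z hz q hq x
      have hvmax : ((v ^ ((9:ℝ)/2))⁻¹) ≤ max ((v ^ 6)⁻¹) ((v ^ 4)⁻¹) := by
        rcases le_total v 1 with hv1 | hv1
        · refine le_trans ?_ (le_max_left _ _)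
          have : v ^ ((6:ℕ):ℝ) ≤ v ^ ((9:ℝ)/2) :=
            Real.rpow_le_rpow_of_exponent_ge hv0 hv1 (by norm_num)
          rw [Real.rpow_natCast] at this
          exact inv_anti₀ (by positivity) this
        · refine le_trans ?_ (le_max_right _ _)
          have : v ^ ((4:ℕ):ℝ) ≤ v ^ ((9:ℝ)/2) :=
            Real.rpow_le_rpow_of_exponent_le hv1 (by norm_num)
          rw [Real.rpow_natCast] at this
          exact inv_anti₀ (by positivity) this
      interval_cases p
      · -- p = 1, exponent 3
        have hA : ‖pderivC N (stieltjes N z) q 1 x‖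
            ≤ 2 * (((N : ℝ) * Real.sqrt N)⁻¹) * ((v ^ 2)⁻¹) := hd.1
        have he : ((3:ℕ):ℝ) / ((1:ℕ):ℝ) = ((3:ℕ):ℝ) := by norm_num
        rw [he, Real.rpow_natCast]
        calc ‖pderivC N (stieltjes N z) q 1 x‖ ^ 3
            ≤ (2 * (((N : ℝ) * Real.sqrt N)⁻¹) * ((v ^ 2)⁻¹)) ^ 3 := by
              exact pow_le_pow_left₀ (norm_nonneg _) hA 3
          _ = 8 * ((v^6)⁻¹) * ((((N:ℝ) * Real.sqrt N)^3)⁻¹) := by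
              rw [mul_pow, mul_pow, inv_pow, inv_pow, ← pow_mul]
              norm_num
              ring
          _ ≤ 12 * max ((v ^ 6)⁻¹) ((v ^ 4)⁻¹) * ((N : ℝ) ^ ((5 : ℝ) / 2))⁻¹ := by
              have e1 : ((v^6)⁻¹) ≤ max ((v ^ 6)⁻¹) ((v ^ 4)⁻¹) := le_max_left _ _
              have e2 : ((((N:ℝ) * Real.sqrt N)^3)⁻¹) ≤ ((N : ℝ) ^ ((5 : ℝ) / 2))⁻¹ := by
                apply inv_anti₀ h52pos
                rw [h52]
                have hcube : ((N:ℝ) * Real.sqrt N)^3 = (N:ℝ)^4 * Real.sqrt N := by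
                  have e : ((N:ℝ) * Real.sqrt N)^3
                      = (N:ℝ)^3 * (Real.sqrt N * Real.sqrt N) * Real.sqrt N := by ring
                  rw [e, hss]
                  ring
                rw [hcube]
                have h24 : (N:ℝ)^2 ≤ (N:ℝ)^4 := pow_le_pow_right₀ hn1 (by norm_num)
                exact mul_le_mul_of_nonneg_right h24 hsq0.le
              calc 8 * ((v^6)⁻¹) * ((((N:ℝ) * Real.sqrt N)^3)⁻¹)
                  ≤ 12 * (max ((v ^ 6)⁻¹) ((v ^ 4)⁻¹)) * ((((N:ℝ) * Real.sqrt N)^3)⁻¹) := by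
                    apply mul_le_mul_of_nonneg_right _ (by positivity)
                    have : ((v^6)⁻¹) ≤ max ((v ^ 6)⁻¹) ((v ^ 4)⁻¹) := e1
                    nlinarith [hmax3, this, inv_nonneg.mpr (by positivity : (0:ℝ) ≤ v^6)]
                _ ≤ 12 * (max ((v ^ 6)⁻¹) ((v ^ 4)⁻¹)) * ((N : ℝ) ^ ((5 : ℝ) / 2))⁻¹ := by
                    exact mul_le_mul_of_nonneg_left e2 (by positivity)
      · -- p = 2, exponent 3/2
        have hA : ‖pderivC N (stieltjes N z) q 2 x‖
            ≤ 4 * (((N : ℝ) ^ 2)⁻¹) * ((v ^ 3)⁻¹) := hd.2.1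
        have hexp : ((3:ℕ):ℝ) / ((2:ℕ):ℝ) = (3:ℝ)/2 := by norm_num
        rw [hexp]
        have step1 : ‖pderivC N (stieltjes N z) q 2 x‖ ^ ((3:ℝ)/2)
            ≤ (4 * (((N : ℝ) ^ 2)⁻¹) * ((v ^ 3)⁻¹)) ^ ((3:ℝ)/2) :=
          Real.rpow_le_rpow (norm_nonneg _) hA (by norm_num)
        have step2 : (4 * (((N : ℝ) ^ 2)⁻¹) * ((v ^ 3)⁻¹)) ^ ((3:ℝ)/2)
            = 8 * (((N:ℝ)^3)⁻¹) * ((v ^ ((9:ℝ)/2))⁻¹) := by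
          rw [Real.mul_rpow (by positivity) (by positivity),
            Real.mul_rpow (by positivity) (by positivity),
            Real.inv_rpow (by positivity), Real.inv_rpow (by positivity)]
          congr 1
          · congr 1
            · rw [show (4:ℝ) = (2:ℝ)^((2:ℕ):ℝ) by
                  rw [Real.rpow_natCast]; norm_num,
                ← Real.rpow_mul (by norm_num : (0:ℝ) ≤ 2)]
              rw [show ((2:ℕ):ℝ) * ((3:ℝ)/2) = ((3:ℕ):ℝ) by norm_num, Real.rpow_natCast]
              norm_num
            · congr 1
              rw [← Real.rpow_natCast ((N:ℝ)) 2, ← Real.rpow_mul hn0.le]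
              rw [show ((2:ℕ):ℝ) * ((3:ℝ)/2) = ((3:ℕ):ℝ) by norm_num, Real.rpow_natCast]
          · congr 1
            rw [← Real.rpow_natCast v 3, ← Real.rpow_mul hv0.le]
            rw [show ((3:ℕ):ℝ) * ((3:ℝ)/2) = (9:ℝ)/2 by norm_num]
        rw [step2] at step1
        refine le_trans step1 ?_
        have e2 : (((N:ℝ)^3)⁻¹) ≤ ((N : ℝ) ^ ((5 : ℝ) / 2))⁻¹ := by
          apply inv_anti₀ h52pos
          rw [h52]
          have hsn : Real.sqrt N ≤ (N:ℝ) := by nlinarith [hss, hsq1]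
          calc (N:ℝ)^2 * Real.sqrt N ≤ (N:ℝ)^2 * (N:ℝ) :=
                mul_le_mul_of_nonneg_left hsn (by positivity)
            _ = (N:ℝ)^3 := by ring
        calc 8 * (((N:ℝ)^3)⁻¹) * ((v ^ ((9:ℝ)/2))⁻¹)
            = 8 * ((v ^ ((9:ℝ)/2))⁻¹) * (((N:ℝ)^3)⁻¹) := by ring
          _ ≤ 12 * (max ((v ^ 6)⁻¹) ((v ^ 4)⁻¹)) * (((N:ℝ)^3)⁻¹) := by
              apply mul_le_mul_of_nonneg_right _ (by positivity)
              nlinarith [hvmax, hmax3,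
                inv_nonneg.mpr (Real.rpow_nonneg hv0.le ((9:ℝ)/2))]
          _ ≤ 12 * (max ((v ^ 6)⁻¹) ((v ^ 4)⁻¹)) * ((N : ℝ) ^ ((5 : ℝ) / 2))⁻¹ := by
              exact mul_le_mul_of_nonneg_left e2 (by positivity)
      · -- p = 3, exponent 1
        have hA : ‖pderivC N (stieltjes N z) q 3 x‖
            ≤ 12 * (((N : ℝ) ^ 2 * Real.sqrt N)⁻¹) * ((v ^ 4)⁻¹) := hd.2.2
        have he : ((3:ℕ):ℝ) / ((3:ℕ):ℝ) = 1 := by norm_num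
        rw [he, Real.rpow_one]
        refine le_trans hA ?_
        have e1 : ((v^4)⁻¹) ≤ max ((v ^ 6)⁻¹) ((v ^ 4)⁻¹) := le_max_right _ _
        have e2 : (((N : ℝ) ^ 2 * Real.sqrt N)⁻¹) = ((N : ℝ) ^ ((5 : ℝ) / 2))⁻¹ := by
          rw [h52]
        rw [e2]
        calc 12 * ((N : ℝ) ^ ((5 : ℝ) / 2))⁻¹ * ((v ^ 4)⁻¹)
            = 12 * ((v ^ 4)⁻¹) * ((N : ℝ) ^ ((5 : ℝ) / 2))⁻¹ := by ring
          _ ≤ 12 * max ((v ^ 6)⁻¹) ((v ^ 4)⁻¹) * ((N : ℝ) ^ ((5 : ℝ) / 2))⁻¹ := by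
              apply mul_le_mul_of_nonneg_right _ (by positivity)
              exact mul_le_mul_of_nonneg_left e1 (by norm_num)
    · positivity
end
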